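/- arXiv:2012.00960 — 9 statements merged into one kernel-verified Lean document; each statement's English description precedes it below -/
import Mathlib

section
/- Let f and g be nonnegative Lebesgue integrable functions on (0,∞) such that ∫₀^∞ f(x) e^{-sx} dx = ∫₀^∞ g(x) e^{-sx} dx for all s > 0. Then f = g almost everywhere on (0,∞). -/
open MeasureTheory Real Set

set_option maxHeartbeats 1000000


theorem laplace_aux_lform (F : ℝ → ℝ) (hF : IntegrableOn F (Ioi (0:ℝ)))
    (hF0 : ∀ x ∈ Ioi (0:ℝ), 0 ≤ F x)
    (hB : BoundedContinuousFunction ℝ NNReal)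
    (hInt : IntegrableOn (fun x => F x * ((hB (Real.exp (-x)) : NNReal) : ℝ)) (Ioi (0:ℝ))) :
    (∫⁻ t, (hB t : ENNReal) ∂(Measure.map (fun x => Real.exp (-x))
        ((volume.restrict (Ioi (0:ℝ))).withDensity (fun x => ENNReal.ofReal (F x)))))
      = ENNReal.ofReal (∫ x in Ioi (0:ℝ), F x * ((hB (Real.exp (-x)) : NNReal) : ℝ)) := by
  have hφcont : Continuous fun x : ℝ => Real.exp (-x) := Real.continuous_exp.comp continuous_neg
  have hBm : Measurable fun t : ℝ => ((hB t : NNReal) : ENNReal) :=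
    hB.continuous.measurable.coe_nnreal_ennreal
  rw [lintegral_map hBm hφcont.measurable]
  have hBφm : Measurable fun a : ℝ => ((hB (Real.exp (-a)) : NNReal) : ENNReal) :=
    (hB.continuous.comp hφcont).measurable.coe_nnreal_ennreal
  rw [lintegral_withDensity_eq_lintegral_mul₀ (hF.1.aemeasurable.ennreal_ofReal)
    hBφm.aemeasurable]
  have hnn : 0 ≤ᵐ[volume.restrict (Ioi (0:ℝ))]
      fun x => F x * ((hB (Real.exp (-x)) : NNReal) : ℝ) := by
    refine (ae_restrict_iff' measurableSet_Ioi).2 (ae_of_all _ fun x hx => ?_)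
    exact mul_nonneg (hF0 x hx) ((hB (Real.exp (-x))).coe_nonneg)
  rw [ofReal_integral_eq_lintegral_ofReal hInt hnn]
  refine lintegral_congr_ae ?_
  refine (ae_restrict_iff' measurableSet_Ioi).2 (ae_of_all _ fun x hx => ?_)
  simp only [Pi.mul_apply]
  rw [ENNReal.ofReal_mul (hF0 x hx), ENNReal.ofReal_coe_nnreal]

theorem laplace_eq_of_nonneg_integrable
    (f g : ℝ → ℝ)
    (hf : IntegrableOn f (Ioi (0:ℝ))) (hg : IntegrableOn g (Ioi (0:ℝ)))
    (hf0 : ∀ x ∈ Ioi (0:ℝ), 0 ≤ f x) (hg0 : ∀ x ∈ Ioi (0:ℝ), 0 ≤ g x)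
    (h : ∀ s : ℝ, 0 < s →
      ∫ x in Ioi (0:ℝ), f x * Real.exp (-s * x)
        = ∫ x in Ioi (0:ℝ), g x * Real.exp (-s * x)) :
    f =ᵐ[volume.restrict (Ioi (0:ℝ))] g := by
  classical
  set φ : ℝ → ℝ := fun x => Real.exp (-x) with hφdef
  have hφcont : Continuous φ := Real.continuous_exp.comp continuous_neg
  have hφmem : ∀ x ∈ Ioi (0:ℝ), φ x ∈ Icc (0:ℝ) 1 := by
    intro x hx
    have hx' : (0:ℝ) < x := hx
    refine ⟨(Real.exp_pos _).le, ?_⟩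
    have h1 : Real.exp (-x) ≤ Real.exp 0 := Real.exp_le_exp.2 (by linarith)
    rw [Real.exp_zero] at h1
    exact h1
  -- integrability of f x * H (φ x)
  have hint : ∀ (F : ℝ → ℝ), IntegrableOn F (Ioi (0:ℝ)) → ∀ (H : ℝ → ℝ), Continuous H →
      IntegrableOn (fun x => F x * H (φ x)) (Ioi (0:ℝ)) := by
    intro F hF H hH
    obtain ⟨C, hC⟩ := isCompact_Icc.exists_bound_of_continuousOn
      (s := Icc (0:ℝ) 1) hH.continuousOn
    refine Integrable.mono (hF.norm.const_mul C)
      (hF.1.mul ((hH.comp hφcont).aestronglyMeasurable)) ?_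
    refine (ae_restrict_iff' measurableSet_Ioi).2 (ae_of_all _ fun x hx => ?_)
    have hCx := hC (φ x) (hφmem x hx)
    have hC0 : 0 ≤ C := le_trans (norm_nonneg _) hCx
    have : ‖F x * H (φ x)‖ = ‖F x‖ * ‖H (φ x)‖ := norm_mul _ _
    rw [this]
    calc ‖F x‖ * ‖H (φ x)‖ ≤ ‖F x‖ * C := by
          exact mul_le_mul_of_nonneg_left hCx (norm_nonneg _)
      _ ≤ ‖C * ‖F x‖‖ := by
          rw [mul_comm]
          exact le_abs_self _
  -- mass equality (s → 0 limit)
  have mass : ∫ x in Ioi (0:ℝ), f x = ∫ x in Ioi (0:ℝ), g x := by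
    have hmeas : ∀ (F : ℝ → ℝ), IntegrableOn F (Ioi (0:ℝ)) → ∀ n : ℕ,
        AEStronglyMeasurable (fun x => F x * Real.exp (-(1/((n:ℝ)+1)) * x))
          (volume.restrict (Ioi (0:ℝ))) := by
      intro F hF n
      exact hF.1.mul (Continuous.aestronglyMeasurable (by continuity))
    have hbound : ∀ (F : ℝ → ℝ), ∀ n : ℕ,
        ∀ᵐ x ∂(volume.restrict (Ioi (0:ℝ))),
          ‖F x * Real.exp (-(1/((n:ℝ)+1)) * x)‖ ≤ ‖F x‖ := by
      intro F n
      refine (ae_restrict_iff' measurableSet_Ioi).2 (ae_of_all _ fun x hx => ?_)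
      have hx' : (0:ℝ) < x := hx
      have h1 : Real.exp (-(1/((n:ℝ)+1)) * x) ≤ 1 := by
        have : (-(1/((n:ℝ)+1)) * x) ≤ 0 := by
          have : (0:ℝ) < 1/((n:ℝ)+1) := by positivity
          nlinarith
        calc Real.exp (-(1/((n:ℝ)+1)) * x) ≤ Real.exp 0 := Real.exp_le_exp.2 this
          _ = 1 := Real.exp_zero
      rw [norm_mul]
      have h2 : ‖Real.exp (-(1/((n:ℝ)+1)) * x)‖ ≤ 1 := by
        rw [Real.norm_eq_abs, abs_of_pos (Real.exp_pos _)]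
        exact h1
      calc ‖F x‖ * ‖Real.exp (-(1/((n:ℝ)+1)) * x)‖ ≤ ‖F x‖ * 1 :=
            mul_le_mul_of_nonneg_left h2 (norm_nonneg _)
        _ = ‖F x‖ := mul_one _
    have hlim : ∀ (F : ℝ → ℝ),
        ∀ᵐ x ∂(volume.restrict (Ioi (0:ℝ))),
          Filter.Tendsto (fun n : ℕ => F x * Real.exp (-(1/((n:ℝ)+1)) * x))
            Filter.atTop (nhds (F x)) := by
      intro F
      refine ae_of_all _ fun x => ?_
      have h1 : Filter.Tendsto (fun n : ℕ => -(1/((n:ℝ)+1)) * x) Filter.atTop (nhds 0) := by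
        have h0 : Filter.Tendsto (fun n : ℕ => 1 / ((n:ℝ) + 1)) Filter.atTop (nhds 0) :=
          tendsto_one_div_add_atTop_nhds_zero_nat
        have := (h0.neg).mul_const x
        simpa using this
      have h2 : Filter.Tendsto (fun n : ℕ => Real.exp (-(1/((n:ℝ)+1)) * x))
          Filter.atTop (nhds 1) := by
        have := (Real.continuous_exp.tendsto 0).comp h1
        simpa [Function.comp_def] using this
      have := (tendsto_const_nhds (x := F x)).mul h2
      simpa using this
    have t1 := tendsto_integral_of_dominated_convergence (μ := volume.restrict (Ioi (0:ℝ)))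
      (F := fun n x => f x * Real.exp (-(1/((n:ℝ)+1)) * x)) (f := f) (fun x => ‖f x‖)
      (hmeas f hf) hf.norm (hbound f) (hlim f)
    have t2 := tendsto_integral_of_dominated_convergence (μ := volume.restrict (Ioi (0:ℝ)))
      (F := fun n x => g x * Real.exp (-(1/((n:ℝ)+1)) * x)) (f := g) (fun x => ‖g x‖)
      (hmeas g hg) hg.norm (hbound g) (hlim g)
    have heqn : ∀ n : ℕ,
        ∫ x in Ioi (0:ℝ), f x * Real.exp (-(1/((n:ℝ)+1)) * x)
          = ∫ x in Ioi (0:ℝ), g x * Real.exp (-(1/((n:ℝ)+1)) * x) := by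
      intro n
      exact h (1/((n:ℝ)+1)) (by positivity)
    have t1' : Filter.Tendsto (fun n : ℕ => ∫ x in Ioi (0:ℝ),
        g x * Real.exp (-(1/((n:ℝ)+1)) * x)) Filter.atTop
        (nhds (∫ x in Ioi (0:ℝ), f x)) := by
      refine t1.congr fun n => heqn n
    exact tendsto_nhds_unique t1' t2
  -- moments
  have moment : ∀ n : ℕ, ∫ x in Ioi (0:ℝ), f x * (φ x)^n
      = ∫ x in Ioi (0:ℝ), g x * (φ x)^n := by
    intro n
    cases n with
    | zero => simpa using mass
    | succ n =>
      have hrw : ∀ x : ℝ, (φ x)^(n+1) = Real.exp (-((n:ℝ)+1) * x) := by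
        intro x
        rw [hφdef]
        rw [← Real.exp_nat_mul]
        congr 1
        push_cast
        ring
      simp_rw [hrw]
      exact h ((n:ℝ)+1) (by positivity)
  -- polynomials
  have hpoly : ∀ p : Polynomial ℝ,
      ∫ x in Ioi (0:ℝ), f x * p.eval (φ x) = ∫ x in Ioi (0:ℝ), g x * p.eval (φ x) := by
    intro p
    induction p using Polynomial.induction_on' with
    | add p q hp hq =>
      simp_rw [Polynomial.eval_add, mul_add]
      rw [integral_add (hint f hf _ p.continuous) (hint f hf _ q.continuous),
          integral_add (hint g hg _ p.continuous) (hint g hg _ q.continuous), hp, hq]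
    | monomial n a =>
      simp_rw [Polynomial.eval_monomial]
      have hrw : ∀ (F : ℝ → ℝ) (x : ℝ), F x * (a * φ x ^ n) = a * (F x * φ x ^ n) := by
        intro F x; ring
      simp_rw [hrw]
      rw [integral_const_mul, integral_const_mul, moment n]
  -- key: all continuous H
  have key : ∀ H : ℝ → ℝ, Continuous H →
      ∫ x in Ioi (0:ℝ), f x * H (φ x) = ∫ x in Ioi (0:ℝ), g x * H (φ x) := by
    intro H hH
    apply eq_of_forall_dist_le
    intro ε hε
    set Cf := ∫ x in Ioi (0:ℝ), ‖f x‖ with hCfdef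
    set Cg := ∫ x in Ioi (0:ℝ), ‖g x‖ with hCgdef
    have hCf : 0 ≤ Cf := integral_nonneg fun x => norm_nonneg _
    have hCg : 0 ≤ Cg := integral_nonneg fun x => norm_nonneg _
    have hden : (0:ℝ) < Cf + Cg + 1 := by linarith
    set ε' := ε / (Cf + Cg + 1) with hε'def
    have hε' : 0 < ε' := by positivity
    obtain ⟨p, hp⟩ := exists_polynomial_near_of_continuousOn 0 1 H hH.continuousOn ε' hε'
    have est : ∀ (F : ℝ → ℝ), IntegrableOn F (Ioi (0:ℝ)) →
        ‖(∫ x in Ioi (0:ℝ), F x * H (φ x)) - ∫ x in Ioi (0:ℝ), F x * p.eval (φ x)‖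
          ≤ ε' * ∫ x in Ioi (0:ℝ), ‖F x‖ := by
      intro F hF
      rw [← integral_sub (hint F hF H hH) (hint F hF _ p.continuous)]
      have hfe : (fun x => F x * H (φ x) - F x * p.eval (φ x))
          = fun x => F x * (H (φ x) - p.eval (φ x)) := by
        funext x; ring
      rw [hfe]
      have hb : ∀ᵐ x ∂(volume.restrict (Ioi (0:ℝ))),
          ‖F x * (H (φ x) - p.eval (φ x))‖ ≤ ε' * ‖F x‖ := by
        refine (ae_restrict_iff' measurableSet_Ioi).2 (ae_of_all _ fun x hx => ?_)
        have h1 := hp (φ x) (hφmem x hx)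
        have h2 : ‖H (φ x) - p.eval (φ x)‖ ≤ ε' := by
          rw [Real.norm_eq_abs, abs_sub_comm]
          exact h1.le
        rw [norm_mul]
        calc ‖F x‖ * ‖H (φ x) - p.eval (φ x)‖ ≤ ‖F x‖ * ε' :=
              mul_le_mul_of_nonneg_left h2 (norm_nonneg _)
          _ = ε' * ‖F x‖ := mul_comm _ _
      calc ‖∫ x in Ioi (0:ℝ), F x * (H (φ x) - p.eval (φ x))‖
          ≤ ∫ x in Ioi (0:ℝ), ε' * ‖F x‖ :=
            norm_integral_le_of_norm_le (hF.norm.const_mul ε') hb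
        _ = ε' * ∫ x in Ioi (0:ℝ), ‖F x‖ := integral_const_mul _ _
    have hmid := hpoly p
    have hdiff : (∫ x in Ioi (0:ℝ), f x * H (φ x)) - (∫ x in Ioi (0:ℝ), g x * H (φ x))
        = ((∫ x in Ioi (0:ℝ), f x * H (φ x)) - (∫ x in Ioi (0:ℝ), f x * p.eval (φ x)))
          - ((∫ x in Ioi (0:ℝ), g x * H (φ x)) - (∫ x in Ioi (0:ℝ), g x * p.eval (φ x))) := by
      rw [hmid]; ring
    rw [dist_eq_norm, hdiff]
    calc ‖_ - _‖ ≤ ‖(∫ x in Ioi (0:ℝ), f x * H (φ x)) - (∫ x in Ioi (0:ℝ), f x * p.eval (φ x))‖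
          + ‖(∫ x in Ioi (0:ℝ), g x * H (φ x)) - (∫ x in Ioi (0:ℝ), g x * p.eval (φ x))‖ :=
            norm_sub_le _ _
      _ ≤ ε' * Cf + ε' * Cg := add_le_add (est f hf) (est g hg)
      _ = ε' * (Cf + Cg) := by ring
      _ ≤ ε' * (Cf + Cg + 1) := by nlinarith
      _ = ε := by
          rw [hε'def]
          field_simp
  have key' : ∀ H : ℝ → ℝ, Continuous H →
      ∫ x in Ioi (0:ℝ), f x * H (Real.exp (-x)) = ∫ x in Ioi (0:ℝ), g x * H (Real.exp (-x)) := by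
    simpa only [hφdef] using key
  have hint' : ∀ (F : ℝ → ℝ), IntegrableOn F (Ioi (0:ℝ)) → ∀ (H : ℝ → ℝ), Continuous H →
      IntegrableOn (fun x => F x * H (Real.exp (-x))) (Ioi (0:ℝ)) := by
    simpa only [hφdef] using hint
  clear key hint hφmem moment hpoly mass h
  clear_value φ
  clear hφdef φ hφcont
  -- measures
  have hmf : AEMeasurable (fun x => ENNReal.ofReal (f x)) (volume.restrict (Ioi (0:ℝ))) :=
    hf.1.aemeasurable.ennreal_ofReal
  have hmg : AEMeasurable (fun x => ENNReal.ofReal (g x)) (volume.restrict (Ioi (0:ℝ))) :=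
    hg.1.aemeasurable.ennreal_ofReal
  haveI hfinf : IsFiniteMeasure ((volume.restrict (Ioi (0:ℝ))).withDensity
      (fun x => ENNReal.ofReal (f x))) := isFiniteMeasure_withDensity_ofReal hf.2
  haveI hfing : IsFiniteMeasure ((volume.restrict (Ioi (0:ℝ))).withDensity
      (fun x => ENNReal.ofReal (g x))) := isFiniteMeasure_withDensity_ofReal hg.2
  have meq : Measure.map (fun x => Real.exp (-x))
        ((volume.restrict (Ioi (0:ℝ))).withDensity (fun x => ENNReal.ofReal (f x)))
      = Measure.map (fun x => Real.exp (-x))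
        ((volume.restrict (Ioi (0:ℝ))).withDensity (fun x => ENNReal.ofReal (g x))) := by
    apply ext_of_forall_lintegral_eq_of_IsFiniteMeasure
    intro hB
    have hBc : Continuous fun t : ℝ => ((hB t : NNReal) : ℝ) :=
      NNReal.continuous_coe.comp hB.continuous
    have hIf : IntegrableOn (fun x => f x * ((hB (Real.exp (-x)) : NNReal) : ℝ)) (Ioi (0:ℝ)) :=
      hint' f hf (fun t => ((hB t : NNReal) : ℝ)) hBc
    have hIg : IntegrableOn (fun x => g x * ((hB (Real.exp (-x)) : NNReal) : ℝ)) (Ioi (0:ℝ)) :=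
      hint' g hg (fun t => ((hB t : NNReal) : ℝ)) hBc
    rw [laplace_aux_lform f hf hf0 hB hIf, laplace_aux_lform g hg hg0 hB hIg]
    congr 1
    exact key' (fun t => ((hB t : NNReal) : ℝ)) hBc
  have hemb : MeasurableEmbedding fun x : ℝ => Real.exp (-x) :=
    (Real.continuous_exp.comp continuous_neg).measurableEmbedding
      fun a b hab => neg_injective (Real.exp_injective hab)
  have wdeq : ((volume.restrict (Ioi (0:ℝ))).withDensity (fun x => ENNReal.ofReal (f x)))
      = ((volume.restrict (Ioi (0:ℝ))).withDensity (fun x => ENNReal.ofReal (g x))) := by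
    ext s hs
    have h1 := hemb.map_apply
      ((volume.restrict (Ioi (0:ℝ))).withDensity (fun x => ENNReal.ofReal (f x)))
      ((fun x : ℝ => Real.exp (-x)) '' s)
    have h2 := hemb.map_apply
      ((volume.restrict (Ioi (0:ℝ))).withDensity (fun x => ENNReal.ofReal (g x)))
      ((fun x : ℝ => Real.exp (-x)) '' s)
    rw [meq] at h1
    rw [hemb.injective.preimage_image] at h1 h2
    rw [← h1, ← h2]
  have dens := (withDensity_eq_iff_of_sigmaFinite hmf hmg).1 wdeq
  have haef : ∀ᵐ x ∂(volume.restrict (Ioi (0:ℝ))), 0 ≤ f x :=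
    (ae_restrict_iff' measurableSet_Ioi).2 (ae_of_all _ hf0)
  have haeg : ∀ᵐ x ∂(volume.restrict (Ioi (0:ℝ))), 0 ≤ g x :=
    (ae_restrict_iff' measurableSet_Ioi).2 (ae_of_all _ hg0)
  filter_upwards [dens, haef, haeg] with x h1 h2 h3
  calc f x = (ENNReal.ofReal (f x)).toReal := (ENNReal.toReal_ofReal h2).symm
    _ = (ENNReal.ofReal (g x)).toReal := by rw [h1]
    _ = g x := ENNReal.toReal_ofReal h3
end

section
/- Let f be a Lebesgue integrable function on (0,∞) such that ∫₀^∞ f(x) e^{-sx} dx = 0 for all s > 0. Then f = 0 almost everywhere on (0,∞). -/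
open MeasureTheory Real Set

/-- A bounded (on `Ioi 0`) continuous multiplier preserves integrability on `Ioi 0`. -/
lemma integrable_aux {f : ℝ → ℝ} (hf : IntegrableOn f (Ioi (0:ℝ)))
    {φ : ℝ → ℝ} (hφ : Continuous φ) {C : ℝ} (hC : ∀ x ∈ Ioi (0:ℝ), |φ x| ≤ C) :
    IntegrableOn (fun x => φ x * f x) (Ioi (0:ℝ)) := by
  refine hf.bdd_mul (c := C) hφ.aestronglyMeasurable ?_
  rw [ae_restrict_iff' measurableSet_Ioi]
  exact Filter.Eventually.of_forall fun x hx => by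
    simpa [Real.norm_eq_abs] using hC x hx

lemma exp_poly_bdd (r : Polynomial ℝ) : ∃ C : ℝ, ∀ x ∈ Ioi (0:ℝ),
    |Real.exp (-x) * r.eval (Real.exp (-x))| ≤ C := by
  obtain ⟨C, hC⟩ := (isCompact_Icc (a := (0:ℝ)) (b := 1)).exists_bound_of_continuousOn
    (continuousOn_id.mul r.continuousOn)
  refine ⟨C, fun x hx => ?_⟩
  have hmem : Real.exp (-x) ∈ Icc (0:ℝ) 1 :=
    ⟨(Real.exp_pos _).le, Real.exp_le_one_iff.mpr (by simpa using le_of_lt hx)⟩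
  rw [abs_mul, abs_of_pos (Real.exp_pos _)]
  simpa [Real.norm_eq_abs] using hC (Real.exp (-x)) hmem

lemma exp_poly_cont (r : Polynomial ℝ) :
    Continuous (fun x : ℝ => Real.exp (-x) * r.eval (Real.exp (-x))) :=
  (Real.continuous_exp.comp continuous_neg).mul
    (r.continuous.comp (Real.continuous_exp.comp continuous_neg))

lemma exp_poly_integrable {f : ℝ → ℝ} (hf : IntegrableOn f (Ioi (0:ℝ)))
    (r : Polynomial ℝ) :
    IntegrableOn (fun x => f x * (Real.exp (-x) * r.eval (Real.exp (-x)))) (Ioi (0:ℝ)) := by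
  obtain ⟨C, hC⟩ := exp_poly_bdd r
  have := integrable_aux hf (exp_poly_cont r) hC
  exact this.congr_fun (fun x _ => by ring) measurableSet_Ioi

lemma key_poly {f : ℝ → ℝ} (hf : IntegrableOn f (Ioi (0:ℝ)))
    (h : ∀ s : ℝ, 0 < s → ∫ x in Ioi (0:ℝ), f x * Real.exp (-s * x) = 0)
    (p : Polynomial ℝ) :
    ∫ x in Ioi (0:ℝ), f x * (Real.exp (-x) * p.eval (Real.exp (-x))) = 0 := by
  induction p using Polynomial.induction_on' with
  | monomial n a =>
    have key : ∀ x : ℝ, f x * (Real.exp (-x) * (Polynomial.monomial n a).eval (Real.exp (-x)))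
        = a * (f x * Real.exp (-((n:ℝ)+1) * x)) := by
      intro x
      have hx : -x + (n:ℝ) * -x = -((n:ℝ)+1) * x := by ring
      calc f x * (Real.exp (-x) * (Polynomial.monomial n a).eval (Real.exp (-x)))
          = a * (f x * (Real.exp (-x) * Real.exp ((n:ℝ) * -x))) := by
            rw [Polynomial.eval_monomial, ← Real.exp_nat_mul]; ring
        _ = a * (f x * Real.exp (-((n:ℝ)+1) * x)) := by rw [← Real.exp_add, hx]
    simp only [key]
    rw [integral_const_mul, h ((n:ℝ)+1) (by positivity), mul_zero]
  | add p q hp hq =>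
    have key : ∀ x : ℝ, f x * (Real.exp (-x) * (p + q).eval (Real.exp (-x)))
        = f x * (Real.exp (-x) * p.eval (Real.exp (-x)))
          + f x * (Real.exp (-x) * q.eval (Real.exp (-x))) := by
      intro x; simp only [Polynomial.eval_add]; ring
    simp only [key]
    rw [integral_add (exp_poly_integrable hf p) (exp_poly_integrable hf q), hp, hq, add_zero]

theorem laplace_zero_of_integrable
    (f : ℝ → ℝ) (hf : IntegrableOn f (Ioi (0:ℝ)))
    (h : ∀ s : ℝ, 0 < s → ∫ x in Ioi (0:ℝ), f x * Real.exp (-s * x) = 0) :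
    f =ᵐ[volume.restrict (Ioi (0:ℝ))] 0 := by
  have main : ∀ᵐ x ∂(volume : Measure ℝ), x ∈ Ioi (0:ℝ) → f x = 0 := by
    apply isOpen_Ioi.ae_eq_zero_of_integral_contDiff_smul_eq_zero
      hf.locallyIntegrableOn
    intro g hgsm hgcs hgsupp
    have hzero : ∀ x ∈ (Ioi (0:ℝ))ᶜ, g x • f x = 0 := by
      intro x hx
      have : g x = 0 := by
        by_contra hne
        exact hx (hgsupp (subset_tsupport g hne))
      simp [this]
    rw [← setIntegral_eq_integral_of_forall_compl_eq_zero hzero]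
    simp only [smul_eq_mul]
    -- g vanishes for large x and at 0
    obtain ⟨M, hM⟩ := hgcs.bddAbove
    have hg0 : ∀ x : ℝ, M < x → g x = 0 := fun x hx =>
      image_eq_zero_of_notMem_tsupport (fun hmem => absurd (hM hmem) (not_le.mpr hx))
    have hg0' : g 0 = 0 :=
      image_eq_zero_of_notMem_tsupport (fun hmem => lt_irrefl 0 (mem_Ioi.mp (hgsupp hmem)))
    set G : ℝ → ℝ := fun t => g (-Real.log t) with hG
    have hGcont : ContinuousOn G (Icc (0:ℝ) 1) := by
      intro t ht
      rcases eq_or_lt_of_le ht.1 with rfl | htpos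
      · have hG0 : G 0 = 0 := by simp [hG, hg0']
        set δ : ℝ := Real.exp (-(max M 0 + 1)) with hδ
        have hδpos : 0 < δ := Real.exp_pos _
        have hev : ∀ᶠ s in nhdsWithin 0 (Icc (0:ℝ) 1), G s = 0 := by
          have h1 : ∀ᶠ s in nhdsWithin 0 (Icc (0:ℝ) 1), s < δ :=
            eventually_nhdsWithin_of_eventually_nhds
              (Filter.Tendsto.eventually_lt_const hδpos Filter.tendsto_id)
          filter_upwards [h1, self_mem_nhdsWithin] with s hs hsI
          rcases eq_or_lt_of_le hsI.1 with rfl | hspos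
          · exact hG0
          · have hlog : Real.log s < -(max M 0 + 1) := by
              have := Real.log_lt_log hspos hs
              rwa [hδ, Real.log_exp] at this
            have hlt : M < -Real.log s := by
              have h2 : M ≤ max M 0 := le_max_left _ _
              nlinarith [hlog]
            exact hg0 _ hlt
        have htend : Filter.Tendsto G (nhdsWithin 0 (Icc (0:ℝ) 1)) (nhds 0) := by
          refine Filter.Tendsto.congr' ?_ tendsto_const_nhds
          filter_upwards [hev] with s hs using hs.symm
        unfold ContinuousWithinAt
        rw [hG0]
        exact htend
      · exact ((hgsm.continuous.continuousAt.comp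
          ((Real.continuousAt_log (ne_of_gt htpos)).neg)).continuousWithinAt)
    set C : ℝ := ∫ x in Ioi (0:ℝ), |f x| with hCdef
    have hCnn : 0 ≤ C := setIntegral_nonneg measurableSet_Ioi (fun x _ => abs_nonneg _)
    obtain ⟨Cg, hCg⟩ := hgcs.exists_bound_of_continuous hgsm.continuous
    have hgint : IntegrableOn (fun x => g x * f x) (Ioi (0:ℝ)) :=
      integrable_aux hf hgsm.continuous (C := Cg)
        (fun x _ => by simpa [Real.norm_eq_abs] using hCg x)
    have hbound : ∀ ε : ℝ, 0 < ε → |∫ x in Ioi (0:ℝ), g x * f x| ≤ 2 * ε * C := by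
      intro ε hε
      obtain ⟨p, hp⟩ := exists_polynomial_near_of_continuousOn 0 1 G hGcont ε hε
      have hp0 : |p.eval 0| < ε := by
        have := hp 0 ⟨le_refl _, zero_le_one⟩
        simpa [hG, hg0'] using this
      set r := p.divX with hr
      have hpr : ∀ t : ℝ, p.eval t = t * r.eval t + p.eval 0 := by
        intro t
        conv_lhs => rw [← Polynomial.divX_mul_X_add p]
        simp only [hr, Polynomial.eval_add, Polynomial.eval_mul, Polynomial.eval_X,
          Polynomial.eval_C, Polynomial.coeff_zero_eq_eval_zero]
        ring
      set q : ℝ → ℝ := fun x => Real.exp (-x) * r.eval (Real.exp (-x)) with hqdef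
      have hdiff : ∀ x ∈ Ioi (0:ℝ), |g x - q x| ≤ 2 * ε := by
        intro x hx
        have hmem : Real.exp (-x) ∈ Icc (0:ℝ) 1 :=
          ⟨(Real.exp_pos _).le, Real.exp_le_one_iff.mpr (by simpa using le_of_lt hx)⟩
        have hGg : G (Real.exp (-x)) = g x := by simp [hG, Real.log_exp]
        have h1 : |p.eval (Real.exp (-x)) - G (Real.exp (-x))| < ε := hp _ hmem
        have h2 : q x = p.eval (Real.exp (-x)) - p.eval 0 := by
          simp only [hqdef]
          rw [hpr (Real.exp (-x))]; ring
        calc |g x - q x| = |(G (Real.exp (-x)) - p.eval (Real.exp (-x))) + p.eval 0| := by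
              rw [h2, hGg]; ring_nf
          _ ≤ |G (Real.exp (-x)) - p.eval (Real.exp (-x))| + |p.eval 0| := abs_add_le _ _
          _ ≤ ε + ε := by
              rw [abs_sub_comm]
              exact add_le_add h1.le hp0.le
          _ = 2 * ε := by ring
      obtain ⟨Cq, hCq⟩ := exp_poly_bdd r
      have hqint : IntegrableOn (fun x => q x * f x) (Ioi (0:ℝ)) :=
        integrable_aux hf (exp_poly_cont r) hCq
      have hqzero : ∫ x in Ioi (0:ℝ), q x * f x = 0 := by
        have h1 : ∫ x in Ioi (0:ℝ), q x * f x
            = ∫ x in Ioi (0:ℝ), f x * (Real.exp (-x) * r.eval (Real.exp (-x))) :=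
          setIntegral_congr_fun measurableSet_Ioi (fun x _ => by simp only [hqdef]; ring)
        rw [h1]
        exact key_poly hf h r
      have hsubint : IntegrableOn (fun x => (g x - q x) * f x) (Ioi (0:ℝ)) := by
        have h1 : IntegrableOn (fun x => g x * f x - q x * f x) (Ioi (0:ℝ)) :=
          hgint.sub hqint
        exact h1.congr_fun (fun x _ => by ring) measurableSet_Ioi
      have hsplit : ∫ x in Ioi (0:ℝ), g x * f x
          = ∫ x in Ioi (0:ℝ), (g x - q x) * f x := by
        have : ∀ x : ℝ, g x * f x = (g x - q x) * f x + q x * f x := fun x => by ring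
        simp only [this]
        rw [integral_add hsubint hqint, hqzero, add_zero]
      rw [hsplit]
      calc |∫ x in Ioi (0:ℝ), (g x - q x) * f x|
          ≤ ∫ x in Ioi (0:ℝ), |(g x - q x) * f x| := by
            have := norm_integral_le_integral_norm (μ := volume.restrict (Ioi (0:ℝ)))
              (fun x => (g x - q x) * f x)
            simp only [Real.norm_eq_abs] at this
            exact this
        _ ≤ ∫ x in Ioi (0:ℝ), 2 * ε * |f x| := by
            refine setIntegral_mono_on hsubint.abs ((hf.abs).const_mul (2 * ε))
              measurableSet_Ioi (fun x hx => ?_)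
            rw [abs_mul]
            exact mul_le_mul_of_nonneg_right (hdiff x hx) (abs_nonneg _)
        _ = 2 * ε * C := by rw [integral_const_mul]
    -- conclude the integral is 0
    set I : ℝ := ∫ x in Ioi (0:ℝ), g x * f x with hI
    by_contra hne
    have hIpos : 0 < |I| := abs_pos.mpr hne
    have := hbound (|I| / (4 * (C + 1))) (by positivity)
    have hfrac : 2 * (|I| / (4 * (C + 1))) * C < |I| := by
      have heq : 2 * (|I| / (4 * (C + 1))) * C = |I| * C / (2 * (C + 1)) := by
        field_simp
        ring
      rw [heq, div_lt_iff₀ (by linarith : (0:ℝ) < 2 * (C + 1))]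
      calc |I| * C < |I| * (2 * (C + 1)) :=
            mul_lt_mul_of_pos_left (by linarith) hIpos
        _ = |I| * (2 * (C + 1)) := rfl
    linarith
  rw [Filter.EventuallyEq, ae_restrict_iff' measurableSet_Ioi]
  filter_upwards [main] with x hx hmem
  simpa using hx hmem
end

section
/- Let f be a measurable function on (0,∞) and a ≥ 0 such that f(x)e^{-ax} is integrable and ∫₀^∞ f(x) e^{-sx} dx = 0 for all s > a. Then f = 0 almost everywhere on (0,∞). -/
open MeasureTheory Real Set

theorem laplace_zero_of_measurable
    (f : ℝ → ℝ) (hf : Measurable f) (a : ℝ) (ha : 0 ≤ a)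
    (hint : IntegrableOn (fun x => f x * Real.exp (-a * x)) (Ioi (0:ℝ)))
    (h : ∀ s : ℝ, a < s → ∫ x in Ioi (0:ℝ), f x * Real.exp (-s * x) = 0) :
    f =ᵐ[volume.restrict (Ioi (0:ℝ))] 0 := by
  set h₀ : ℝ → ℝ := fun x => f x * Real.exp (-a * x) with hh₀
  have h₀meas : Measurable h₀ := hf.mul ((measurable_id.const_mul (-a)).exp)
  -- each extra exponential keeps integrability
  have hint_pow : ∀ n : ℕ, IntegrableOn (fun x => h₀ x * (Real.exp (-x)) ^ n) (Ioi (0:ℝ)) := by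
    intro n
    refine Integrable.mono' hint.norm
      ((h₀meas.mul (((measurable_id.neg).exp).pow_const n)).aestronglyMeasurable) ?_
    rw [ae_restrict_iff' measurableSet_Ioi]
    filter_upwards with x hx
    have hx0 : (0:ℝ) < x := hx
    have he : Real.exp (-x) ≤ 1 := Real.exp_le_one_iff.mpr (by linarith)
    have hpow : (Real.exp (-x)) ^ n ≤ 1 :=
      pow_le_one₀ (Real.exp_nonneg _) he
    have : ‖h₀ x * (Real.exp (-x)) ^ n‖ = ‖h₀ x‖ * (Real.exp (-x)) ^ n := by
      rw [norm_mul, Real.norm_eq_abs ((Real.exp (-x)) ^ n),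
        abs_of_nonneg (pow_nonneg (Real.exp_nonneg _) n)]
    rw [this]
    calc ‖h₀ x‖ * (Real.exp (-x)) ^ n ≤ ‖h₀ x‖ * 1 := by
          exact mul_le_mul_of_nonneg_left hpow (norm_nonneg _)
      _ = ‖h₀ x‖ := mul_one _
  -- the basic vanishing of moments
  have hvan : ∀ n : ℕ, 1 ≤ n → ∫ x in Ioi (0:ℝ), h₀ x * (Real.exp (-x)) ^ n = 0 := by
    intro n hn
    have heq : ∀ x : ℝ, h₀ x * (Real.exp (-x)) ^ n = f x * Real.exp (-(a + n) * x) := by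
      intro x
      have : (Real.exp (-x)) ^ n = Real.exp (-(n:ℝ) * x) := by
        rw [← Real.exp_nat_mul]; ring_nf
      rw [this, hh₀]
      simp only [mul_assoc, ← Real.exp_add]
      ring_nf
    simp only [heq]
    exact h (a + n) (by
      have : (0:ℝ) < n := by exact_mod_cast hn
      linarith)
  -- key claim: integral against continuous compactly supported functions in Ioi 0 vanishes
  have key : ∀ g : ℝ → ℝ, Continuous g → HasCompactSupport g → tsupport g ⊆ Ioi 0 →
      ∫ x in Ioi (0:ℝ), g x * h₀ x = 0 := by
    intro g hg hgc hgs
    -- bound on g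
    obtain ⟨B, hB⟩ := hgc.exists_bound_of_continuous hg
    have hBnn : 0 ≤ B := le_trans (norm_nonneg _) (hB 0)
    -- g * h₀ is integrable on Ioi 0
    have hg_int : IntegrableOn (fun x => g x * h₀ x) (Ioi (0:ℝ)) := by
      refine Integrable.mono' (hint.norm.const_mul B)
        ((hg.measurable.mul h₀meas).aestronglyMeasurable) ?_
      filter_upwards with x
      rw [norm_mul]
      exact mul_le_mul_of_nonneg_right (hB x) (norm_nonneg _)
    -- bound on the support of g: g vanishes for large x
    obtain ⟨R, hR⟩ := hgc.isBounded.subset_closedBall 0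
    have hg_large : ∀ x : ℝ, R < x → g x = 0 := by
      intro x hx
      apply image_eq_zero_of_notMem_tsupport
      intro hmem
      have := hR hmem
      rw [Metric.mem_closedBall, Real.dist_eq, sub_zero] at this
      have : x ≤ R := le_trans (le_abs_self x) this
      linarith
    have hg0 : g 0 = 0 := by
      apply image_eq_zero_of_notMem_tsupport
      intro hmem
      exact lt_irrefl (0:ℝ) (hgs hmem)
    -- the transported function G on [0,1]
    set G : ℝ → ℝ := fun t => g (-Real.log t) with hG
    have hGexp : ∀ x : ℝ, G (Real.exp (-x)) = g x := by
      intro x; simp [hG, Real.log_exp]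
    have hG0 : G 0 = 0 := by simp [hG, Real.log_zero, hg0]
    -- continuity of G on [0,1]
    have hGcont : ContinuousOn G (Icc 0 1) := by
      intro t ht
      rcases eq_or_lt_of_le ht.1 with h0 | h0
      · -- t = 0 : G is eventually 0 near 0
        subst h0
        have hev : ∀ᶠ s in nhdsWithin 0 (Icc (0:ℝ) 1), G s = 0 := by
          have hmem : Ico (0:ℝ) (Real.exp (-(R+1))) ∈ nhdsWithin 0 (Icc (0:ℝ) 1) := by
            apply Filter.mem_of_superset
              (nhdsWithin_mono (0:ℝ) (Icc_subset_Ici_self)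
                (Ico_mem_nhdsGE_of_mem ⟨le_refl 0, Real.exp_pos _⟩))
            exact subset_rfl
          filter_upwards [hmem] with s hs
          rcases eq_or_lt_of_le hs.1 with h1 | h1
          · rw [← h1]; exact hG0
          · have hlog : Real.log s < -(R+1) :=
              ((Real.log_lt_iff_lt_exp h1)).mpr (by
                calc s < Real.exp (-(R+1)) := hs.2
                  _ = Real.exp (-(R+1)) := rfl)
            apply hg_large
            linarith
        exact (continuousWithinAt_const (b := (0:ℝ))).congr_of_eventuallyEq hev hG0
      · -- t > 0
        apply ContinuousAt.continuousWithinAt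
        exact hg.continuousAt.comp ((Real.continuousAt_log (ne_of_gt h0)).neg)
    -- total mass
    set C : ℝ := ∫ x in Ioi (0:ℝ), ‖h₀ x‖ with hC
    have hCnn : 0 ≤ C := integral_nonneg fun x => norm_nonneg _
    -- the main estimate
    have hmain : ∀ ε : ℝ, 0 < ε → |∫ x in Ioi (0:ℝ), g x * h₀ x| ≤ ε := by
      intro ε hε
      set ε' : ℝ := ε / (2 * (C + 1)) with hε'
      have hε'pos : 0 < ε' := by positivity
      obtain ⟨p, hp⟩ := exists_polynomial_near_of_continuousOn 0 1 G hGcont ε' hε'pos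
      set q : Polynomial ℝ := p - Polynomial.C (p.eval 0) with hq
      have hq0 : q.eval 0 = 0 := by simp [hq]
      have hqnear : ∀ t ∈ Icc (0:ℝ) 1, |q.eval t - G t| < 2 * ε' := by
        intro t htt
        have h1 := hp t htt
        have h2 := hp 0 (by constructor <;> norm_num)
        rw [hG0] at h2
        have : q.eval t - G t = (p.eval t - G t) - (p.eval 0 - 0) := by
          simp [hq]; ring
        rw [this]
        calc |(p.eval t - G t) - (p.eval 0 - 0)| ≤ |p.eval t - G t| + |p.eval 0 - 0| :=
              abs_sub _ _
          _ < ε' + ε' := by exact add_lt_add h1 h2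
          _ = 2 * ε' := by ring
      -- polynomial part integrates to zero
      have hq_int : IntegrableOn (fun x => h₀ x * q.eval (Real.exp (-x))) (Ioi (0:ℝ)) := by
        have : (fun x => h₀ x * q.eval (Real.exp (-x)))
            = fun x => ∑ i ∈ Finset.range (q.natDegree + 1),
              (q.coeff i) * (h₀ x * (Real.exp (-x)) ^ i) := by
          funext x
          rw [Polynomial.eval_eq_sum_range, Finset.mul_sum]
          congr 1; funext i; ring
        rw [this]
        exact integrable_finset_sum _ fun i _ => (hint_pow i).const_mul _
      have hq_zero : ∫ x in Ioi (0:ℝ), h₀ x * q.eval (Real.exp (-x)) = 0 := by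
        have heq : (fun x => h₀ x * q.eval (Real.exp (-x)))
            = fun x => ∑ i ∈ Finset.range (q.natDegree + 1),
              (q.coeff i) * (h₀ x * (Real.exp (-x)) ^ i) := by
          funext x
          rw [Polynomial.eval_eq_sum_range, Finset.mul_sum]
          congr 1; funext i; ring
        rw [heq, integral_finset_sum _ fun i _ => (hint_pow i).const_mul _]
        apply Finset.sum_eq_zero
        intro i _
        rcases Nat.eq_zero_or_pos i with hi | hi
        · subst hi
          rw [Polynomial.coeff_zero_eq_eval_zero, hq0]
          simp
        · rw [integral_const_mul, hvan i hi, mul_zero]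
      -- combine
      have hdiff : ∫ x in Ioi (0:ℝ), g x * h₀ x
          = ∫ x in Ioi (0:ℝ), (g x * h₀ x - h₀ x * q.eval (Real.exp (-x))) := by
        rw [integral_sub hg_int hq_int, hq_zero, sub_zero]
      rw [hdiff]
      have hbound : |∫ x in Ioi (0:ℝ), (g x * h₀ x - h₀ x * q.eval (Real.exp (-x)))|
          ≤ ∫ x in Ioi (0:ℝ), 2 * ε' * ‖h₀ x‖ := by
        rw [← Real.norm_eq_abs]
        apply norm_integral_le_of_norm_le ((hint.norm.const_mul (2 * ε')))
        rw [ae_restrict_iff' measurableSet_Ioi]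
        filter_upwards with x hx
        have hx0 : (0:ℝ) < x := hx
        have hmem : Real.exp (-x) ∈ Icc (0:ℝ) 1 :=
          ⟨Real.exp_nonneg _, Real.exp_le_one_iff.mpr (by linarith)⟩
        have : g x * h₀ x - h₀ x * q.eval (Real.exp (-x))
            = h₀ x * (G (Real.exp (-x)) - q.eval (Real.exp (-x))) := by
          rw [hGexp]; ring
        rw [this, norm_mul]
        rw [mul_comm (2 * ε') ‖h₀ x‖]
        apply mul_le_mul_of_nonneg_left _ (norm_nonneg _)
        rw [Real.norm_eq_abs, abs_sub_comm]
        exact le_of_lt (hqnear _ hmem)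
      calc |∫ x in Ioi (0:ℝ), (g x * h₀ x - h₀ x * q.eval (Real.exp (-x)))|
          ≤ ∫ x in Ioi (0:ℝ), 2 * ε' * ‖h₀ x‖ := hbound
        _ = 2 * ε' * C := by rw [integral_const_mul]
        _ ≤ ε := by
            have h1 : ε' * (2 * (C + 1)) = ε := by
              rw [hε']; field_simp
            nlinarith [hε'pos, hCnn]
    -- conclude the integral is zero
    by_contra hne
    have habs : 0 < |∫ x in Ioi (0:ℝ), g x * h₀ x| := abs_pos.mpr hne
    have := hmain (|∫ x in Ioi (0:ℝ), g x * h₀ x| / 2) (by positivity)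
    linarith
  -- apply the distribution-theoretic lemma
  have main : ∀ᵐ x ∂(volume : Measure ℝ), x ∈ Ioi (0:ℝ) → h₀ x = 0 := by
    apply (isOpen_Ioi (a := (0:ℝ))).ae_eq_zero_of_integral_contDiff_smul_eq_zero
      hint.locallyIntegrableOn
    intro g hgsmooth hgsupp hgsub
    have : ∫ x, g x • h₀ x = ∫ x in Ioi (0:ℝ), g x • h₀ x := by
      rw [setIntegral_eq_integral_of_forall_compl_eq_zero]
      intro x hx
      rw [image_eq_zero_of_notMem_tsupport (fun hmem => hx (hgsub hmem)), zero_smul]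
    rw [this]
    simpa [smul_eq_mul] using key g hgsmooth.continuous hgsupp hgsub
  rw [Filter.EventuallyEq, ae_restrict_iff' measurableSet_Ioi]
  filter_upwards [main] with x hx hx0
  have := hx hx0
  rw [hh₀] at this
  have hexp : Real.exp (-a * x) ≠ 0 := Real.exp_ne_zero _
  simp only [Pi.zero_apply]
  exact (mul_eq_zero.mp this).resolve_right hexp
end

section
/- Let (λ_k) be a sequence of strictly increasing positive real numbers tending to infinity with ∑ 1/λ_k = ∞, and let q > 0 with q ∉ {λ_k}. Then for every ε > 0 there is a finite linear combination P of the monomials x^{λ_1}, ..., x^{λ_n} such that sup_{x ∈ [0,1]} |x^q - P(x)| ≤ ∏_{k=1}^n |1 - q/λ_k| < ε. -/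
open MeasureTheory Real Set Filter

lemma muntz_prod_small
    (l : ℕ → ℝ) (hpos : ∀ k, 0 < l k)
    (htop : Tendsto l atTop atTop)
    (hdiv : ¬ Summable (fun k => 1 / l k))
    (q : ℝ) (hq : 0 < q) :
    ∀ ε : ℝ, 0 < ε → ∃ n, ∏ k ∈ Finset.range n, |1 - q / l k| < ε := by
  intro ε hε
  obtain ⟨N, hN⟩ := (htop.eventually_ge_atTop q).exists_forall_of_atTop
  -- partial sums of 1/l k tend to atTop
  have hsum : Tendsto (fun n => ∑ k ∈ Finset.range n, 1 / l k) atTop atTop := by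
    refine (not_summable_iff_tendsto_nat_atTop_of_nonneg ?_).1 hdiv
    intro k; exact div_nonneg zero_le_one (hpos k).le
  set T : ℕ → ℝ := fun n => ∑ k ∈ Finset.range n, 1 / l k with hT
  have hbound : ∀ n, N ≤ n → ∏ k ∈ Finset.range n, |1 - q / l k| ≤
      (∏ k ∈ Finset.range N, |1 - q / l k|) * Real.exp (-(q * (T n - T N))) := by
    intro n hn
    have hsplit : ∏ k ∈ Finset.range n, |1 - q / l k| =
        (∏ k ∈ Finset.range N, |1 - q / l k|) * ∏ k ∈ Finset.Ico N n, |1 - q / l k| := by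
      simp only [Finset.range_eq_Ico]
      exact (Finset.prod_Ico_consecutive _ (Nat.zero_le N) hn).symm
    rw [hsplit]
    refine mul_le_mul_of_nonneg_left ?_ (Finset.prod_nonneg fun k _ => abs_nonneg _)
    have : Real.exp (-(q * (T n - T N))) = ∏ k ∈ Finset.Ico N n, Real.exp (-(q / l k)) := by
      rw [← Real.exp_sum]
      congr 1
      rw [hT]
      rw [← Finset.sum_Ico_eq_sub _ hn]
      rw [Finset.sum_neg_distrib, Finset.mul_sum, neg_inj]
      exact Finset.sum_congr rfl fun k _ => mul_one_div q (l k)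
    rw [this]
    refine Finset.prod_le_prod (fun k _ => abs_nonneg _) fun k hk => ?_
    have hk' : q ≤ l k := hN k (Finset.mem_Ico.1 hk).1
    have h1 : q / l k ≤ 1 := (div_le_one (hpos k)).2 hk'
    rw [abs_of_nonneg (by linarith)]
    have := Real.add_one_le_exp (-(q / l k))
    linarith
  -- RHS tends to 0
  have h0 : Tendsto (fun n => (∏ k ∈ Finset.range N, |1 - q / l k|) *
      Real.exp (-(q * (T n - T N)))) atTop (nhds 0) := by
    rw [show (0:ℝ) = (∏ k ∈ Finset.range N, |1 - q / l k|) * 0 by ring]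
    refine Tendsto.const_mul _ ?_
    refine Real.tendsto_exp_atBot.comp ?_
    have h1 : Tendsto (fun n => T n - T N) atTop atTop := by
      simpa [sub_eq_add_neg] using tendsto_atTop_add_const_right atTop (-(T N)) hsum
    have h2 := h1.const_mul_atTop hq
    exact tendsto_neg_atBot_iff.2 h2
  have hP : Tendsto (fun n => ∏ k ∈ Finset.range n, |1 - q / l k|) atTop (nhds 0) := by
    refine squeeze_zero' (Eventually.of_forall fun n => Finset.prod_nonneg fun k _ => abs_nonneg _)
      (eventually_atTop.2 ⟨N, hbound⟩) h0
  exact ((tendsto_order.1 hP).2 ε hε).exists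

lemma muntz_aux (l : ℕ → ℝ) (hpos : ∀ k, 0 < l k) (hmono : StrictMono l)
    (q : ℝ) (hq : 0 < q) (hqn : ∀ k, q ≠ l k) (n : ℕ) :
    ∃ a : ℕ → ℝ, ∀ x ∈ Icc (0:ℝ) 1,
      |x ^ q - ∑ k ∈ Finset.range n, a k * x ^ (l k)| ≤
        ∏ k ∈ Finset.range n, |1 - q / l k| := by
  induction n with
  | zero =>
    refine ⟨0, fun x hx => ?_⟩
    simp only [Finset.range_zero, Finset.sum_empty, Finset.prod_empty, sub_zero]
    rw [abs_of_nonneg (Real.rpow_nonneg hx.1 q)]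
    exact Real.rpow_le_one hx.1 hx.2 hq.le
  | succ n ih =>
    obtain ⟨a, ha⟩ := ih
    have hlam : 0 < l n := hpos n
    have hql : q ≠ l n := hqn n
    have hqln : q - l n ≠ 0 := sub_ne_zero.2 hql
    set C := ∏ k ∈ Finset.range n, |1 - q / l k| with hC
    have hC0 : 0 ≤ C := Finset.prod_nonneg fun k _ => abs_nonneg _
    set d : ℕ → ℝ := fun k => (q - l n) / (l k - l n) with hd
    refine ⟨fun k => if k = n then 1 - ∑ j ∈ Finset.range n, a j * d j else a k * d k,
      fun x hx => ?_⟩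
    have hsum : ∑ k ∈ Finset.range (n+1),
        (if k = n then 1 - ∑ j ∈ Finset.range n, a j * d j else a k * d k) * x ^ (l k)
        = (1 - ∑ j ∈ Finset.range n, a j * d j) * x ^ (l n)
          + ∑ k ∈ Finset.range n, (a k * d k) * x ^ (l k) := by
      rw [Finset.sum_range_succ, if_pos rfl, add_comm]
      congr 1
      exact Finset.sum_congr rfl fun k hk => by rw [if_neg (Finset.mem_range.1 hk).ne]
    rw [hsum, Finset.prod_range_succ, ← hC]
    rcases eq_or_lt_of_le hx.1 with h0 | hx0
    · -- x = 0
      rw [← h0]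
      have hz : ∀ k : ℕ, (0:ℝ) ^ (l k) = 0 := fun k => Real.zero_rpow (hpos k).ne'
      simp only [Real.zero_rpow hq.ne', hz, mul_zero, Finset.sum_const_zero, add_zero,
        zero_sub, abs_neg, abs_zero]
      exact mul_nonneg hC0 (abs_nonneg _)
    · have hx1 : x ≤ 1 := hx.2
      have hne : ∀ k, k < n → l k ≠ l n := fun k hk => (hmono hk).ne
      have hmem : ∀ t ∈ Set.uIcc x 1, 0 < t := by
        intro t ht
        rw [Set.uIcc_of_le hx1] at ht
        exact lt_of_lt_of_le hx0 ht.1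
      -- closed form of basic integrals
      have hI : ∀ μ : ℝ, μ ≠ l n →
          ∫ t in x..1, t ^ (μ - l n - 1) = (1 - x ^ (μ - l n)) / (μ - l n) := by
        intro μ hμ
        have h1 : μ - l n - 1 ≠ -1 := by intro h; exact hμ (by linarith)
        have h2 : (0:ℝ) ∉ Set.uIcc x 1 := fun h => lt_irrefl 0 (hmem 0 h)
        rw [integral_rpow (Or.inr ⟨h1, h2⟩)]
        have h3 : μ - l n - 1 + 1 = μ - l n := by ring
        rw [h3, Real.one_rpow]
      have hcont : ∀ r : ℝ, ContinuousOn (fun t : ℝ => t ^ r) (Set.uIcc x 1) := by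
        intro r t ht
        exact (Real.continuousAt_rpow_const t r (Or.inl (hmem t ht).ne')).continuousWithinAt
      have hint : ∀ r : ℝ, IntervalIntegrable (fun t : ℝ => t ^ r) volume x 1 :=
        fun r => (hcont r).intervalIntegrable
      -- value of the main integral
      have hE : ∫ t in x..1,
            (t ^ q - ∑ k ∈ Finset.range n, a k * t ^ (l k)) * t ^ (-(l n) - 1)
          = (1 - x ^ (q - l n)) / (q - l n)
            - ∑ k ∈ Finset.range n, a k * ((1 - x ^ (l k - l n)) / (l k - l n)) := by
        have step1 : ∫ t in x..1,
              (t ^ q - ∑ k ∈ Finset.range n, a k * t ^ (l k)) * t ^ (-(l n) - 1)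
            = ∫ t in x..1,
              (t ^ (q - l n - 1) - ∑ k ∈ Finset.range n, a k * t ^ (l k - l n - 1)) := by
          apply intervalIntegral.integral_congr
          intro t ht
          have ht0 : 0 < t := hmem t ht
          dsimp only
          rw [sub_mul, Finset.sum_mul]
          congr 1
          · rw [← Real.rpow_add ht0]; congr 1; ring
          · exact Finset.sum_congr rfl fun k _ => by
              rw [mul_assoc, ← Real.rpow_add ht0]; congr 2; ring
        have hint2 : IntervalIntegrable
            (fun t : ℝ => ∑ k ∈ Finset.range n, a k * t ^ (l k - l n - 1)) volume x 1 := by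
          apply ContinuousOn.intervalIntegrable
          exact continuousOn_finset_sum _ fun k _ => (hcont _).const_smul (a k)
        rw [step1, intervalIntegral.integral_sub (hint _) hint2,
          intervalIntegral.integral_finset_sum
            (fun k _ => (hint (l k - l n - 1)).const_mul (a k))]
        rw [hI q hql]
        congr 1
        exact Finset.sum_congr rfl fun k hk => by
          rw [intervalIntegral.integral_const_mul, hI _ (hne k (Finset.mem_range.1 hk))]
      -- key identity
      have hxmul : ∀ μ : ℝ, x ^ (l n) * x ^ (μ - l n) = x ^ μ := fun μ => by
        rw [← Real.rpow_add hx0]; congr 1; ring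
      have key : x ^ q - ((1 - ∑ j ∈ Finset.range n, a j * d j) * x ^ (l n)
            + ∑ k ∈ Finset.range n, (a k * d k) * x ^ (l k))
          = -((q - l n) * x ^ (l n) * ∫ t in x..1,
              (t ^ q - ∑ k ∈ Finset.range n, a k * t ^ (l k)) * t ^ (-(l n) - 1)) := by
        rw [hE]
        have e1 : (q - l n) * x ^ (l n) * ((1 - x ^ (q - l n)) / (q - l n))
            = x ^ (l n) - x ^ q := by
          field_simp
          linear_combination (-1) * hxmul q
        have e2 : ∀ k, k < n → (q - l n) * x ^ (l n)
              * (a k * ((1 - x ^ (l k - l n)) / (l k - l n)))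
            = (a k * d k) * (x ^ (l n) - x ^ (l k)) := by
          intro k hk
          have hkn : l k - l n ≠ 0 := sub_ne_zero.2 (hne k hk)
          simp only [hd]
          field_simp
          linear_combination (-a k) * hxmul (l k)
        have e3 : (q - l n) * x ^ (l n)
              * (∑ k ∈ Finset.range n, a k * ((1 - x ^ (l k - l n)) / (l k - l n)))
            = (∑ j ∈ Finset.range n, a j * d j) * x ^ (l n)
              - ∑ k ∈ Finset.range n, (a k * d k) * x ^ (l k) := by
          rw [Finset.mul_sum,
            Finset.sum_congr rfl fun k hk => e2 k (Finset.mem_range.1 hk),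
            Finset.sum_mul, ← Finset.sum_sub_distrib]
          exact Finset.sum_congr rfl fun k _ => by ring
        rw [mul_sub, e1, e3]
        ring
      -- the bound
      rw [key, abs_neg, abs_mul, abs_mul, abs_of_nonneg (Real.rpow_nonneg hx0.le (l n))]
      have hfint : IntervalIntegrable
          (fun t : ℝ => (t ^ q - ∑ k ∈ Finset.range n, a k * t ^ (l k)) * t ^ (-(l n) - 1))
          volume x 1 := by
        apply ContinuousOn.intervalIntegrable
        exact (((hcont q).sub
          (continuousOn_finset_sum _ fun k _ => (hcont (l k)).const_smul (a k))).mul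
          (hcont (-(l n) - 1)))
      have habs : |∫ t in x..1,
            (t ^ q - ∑ k ∈ Finset.range n, a k * t ^ (l k)) * t ^ (-(l n) - 1)|
          ≤ ∫ t in x..1,
            |(t ^ q - ∑ k ∈ Finset.range n, a k * t ^ (l k)) * t ^ (-(l n) - 1)| :=
        intervalIntegral.abs_integral_le_integral_abs hx1
      have hmono2 : (∫ t in x..1,
            |(t ^ q - ∑ k ∈ Finset.range n, a k * t ^ (l k)) * t ^ (-(l n) - 1)|)
          ≤ ∫ t in x..1, C * t ^ (-(l n) - 1) := by
        apply intervalIntegral.integral_mono_on hx1 hfint.abs ((hint _).const_mul C)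
        intro t ht
        have ht0 : 0 < t := lt_of_lt_of_le hx0 ht.1
        rw [abs_mul, abs_of_nonneg (Real.rpow_nonneg ht0.le _)]
        exact mul_le_mul_of_nonneg_right (ha t ⟨ht0.le, ht.2⟩)
          (Real.rpow_nonneg ht0.le _)
      have hval : ∫ t in x..1, C * t ^ (-(l n) - 1)
          = C * ((1 - x ^ (-(l n))) / (-(l n))) := by
        rw [intervalIntegral.integral_const_mul]
        have h7 := hI 0 hlam.ne
        rw [zero_sub] at h7
        rw [h7]
      have hIle : |∫ t in x..1,
            (t ^ q - ∑ k ∈ Finset.range n, a k * t ^ (l k)) * t ^ (-(l n) - 1)|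
          ≤ C * ((1 - x ^ (-(l n))) / (-(l n))) := habs.trans (hmono2.trans_eq hval)
      have hAB : x ^ (l n) * x ^ (-(l n)) = (1:ℝ) := by
        rw [← Real.rpow_add hx0]; simp
      have hxln0 : (0:ℝ) < x ^ (l n) := Real.rpow_pos_of_pos hx0 _
      calc |q - l n| * x ^ (l n) * |∫ t in x..1,
              (t ^ q - ∑ k ∈ Finset.range n, a k * t ^ (l k)) * t ^ (-(l n) - 1)|
          ≤ |q - l n| * x ^ (l n) * (C * ((1 - x ^ (-(l n))) / (-(l n)))) := by
            apply mul_le_mul_of_nonneg_left hIle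
            positivity
        _ = |q - l n| * C * (1 - x ^ (l n)) / l n := by
            have h9 : (1 - x ^ (-(l n))) / (-(l n)) = (x ^ (-(l n)) - 1) / l n := by
              rw [div_neg, ← neg_div, neg_sub]
            have h10 : x ^ (l n) * (x ^ (-(l n)) - 1) = 1 - x ^ (l n) := by
              rw [mul_sub, hAB, mul_one]
            rw [h9, ← h10]
            ring
        _ ≤ C * |1 - q / l n| := by
            have h6 : |1 - q / l n| = |q - l n| / l n := by
              have h8 : 1 - q / l n = (l n - q) / l n := by field_simp
              rw [h8, abs_div, abs_of_pos hlam, abs_sub_comm]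
            rw [h6, ← mul_div_assoc, div_le_div_iff₀ hlam hlam]
            nlinarith [mul_nonneg (mul_nonneg (mul_nonneg (abs_nonneg (q - l n)) hC0)
              hxln0.le) hlam.le]

theorem muntz_approx_monomial
    (l : ℕ → ℝ) (hpos : ∀ k, 0 < l k) (hmono : StrictMono l)
    (htop : Tendsto l atTop atTop)
    (hdiv : ¬ Summable (fun k => 1 / l k))
    (q : ℝ) (hq : 0 < q) (hqn : ∀ k, q ≠ l k) :
    ∀ ε : ℝ, 0 < ε →
      ∃ (n : ℕ) (a : ℕ → ℝ),
        (∀ x ∈ Icc (0:ℝ) 1,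
          |x ^ q - ∑ k ∈ Finset.range n, a k * x ^ (l k)| ≤
            ∏ k ∈ Finset.range n, |1 - q / l k|) ∧
        ∏ k ∈ Finset.range n, |1 - q / l k| < ε := by
  intro ε hε
  obtain ⟨n, hn⟩ := muntz_prod_small l hpos htop hdiv q hq ε hε
  obtain ⟨a, ha⟩ := muntz_aux l hpos hmono q hq hqn n
  exact ⟨n, a, ha, hn⟩
end

section
/- Let (λ_k) be a sequence of positive real numbers with lim λ_k = ∞ and ∑ 1/λ_k = ∞, and let q > 0. Then the product ∏_{k=1}^n |1 - q/λ_k| tends to 0 as n → ∞. -/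
open Filter

theorem prod_abs_one_sub_div_tendsto_zero
    (l : ℕ → ℝ) (hpos : ∀ k, 0 < l k)
    (htop : Tendsto l atTop atTop)
    (hdiv : ¬ Summable (fun k => 1 / l k))
    (q : ℝ) (hq : 0 < q) :
    Tendsto (fun n => ∏ k ∈ Finset.range n, |1 - q / l k|) atTop (nhds 0) := by
  -- choose N with l k ≥ q for k ≥ N
  obtain ⟨N, hN⟩ := (htop.eventually_ge_atTop q).exists_forall_of_atTop
  -- partial sums of 1/l diverge
  have hS : Tendsto (fun n => ∑ k ∈ Finset.range n, 1 / l k) atTop atTop := by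
    exact (not_summable_iff_tendsto_nat_atTop_of_nonneg
      (f := fun k => 1 / l k) (fun k => (one_div_pos.2 (hpos k)).le)).1 hdiv
  set C : ℝ := (∏ k ∈ Finset.range N, |1 - q / l k|) *
      Real.exp (q * ∑ k ∈ Finset.range N, 1 / l k) with hC
  have hC0 : 0 ≤ C := mul_nonneg (Finset.prod_nonneg fun _ _ => abs_nonneg _)
    (Real.exp_pos _).le
  have key : ∀ n, N ≤ n → ∏ k ∈ Finset.range n, |1 - q / l k| ≤
      C * Real.exp (-(q * ∑ k ∈ Finset.range n, 1 / l k)) := by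
    intro n hn
    rw [← Finset.prod_range_mul_prod_Ico _ hn]
    have h2 : ∏ k ∈ Finset.Ico N n, |1 - q / l k| ≤
        ∏ k ∈ Finset.Ico N n, Real.exp (-(q / l k)) := by
      apply Finset.prod_le_prod (fun k _ => abs_nonneg _)
      intro k hk
      have hk' := hN k (Finset.mem_Ico.1 hk).1
      have h1 : |1 - q / l k| = 1 - q / l k := by
        rw [abs_of_nonneg]
        have : q / l k ≤ 1 := (div_le_one (hpos k)).2 hk'
        linarith
      rw [h1]
      have := Real.add_one_le_exp (-(q / l k))
      linarith
    calc (∏ k ∈ Finset.range N, |1 - q / l k|) * ∏ k ∈ Finset.Ico N n, |1 - q / l k|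
        ≤ (∏ k ∈ Finset.range N, |1 - q / l k|) * ∏ k ∈ Finset.Ico N n, Real.exp (-(q / l k)) := by
          apply mul_le_mul_of_nonneg_left h2 (Finset.prod_nonneg fun _ _ => abs_nonneg _)
      _ = C * Real.exp (-(q * ∑ k ∈ Finset.range n, 1 / l k)) := by
          rw [← Real.exp_sum, hC]
          rw [mul_assoc, ← Real.exp_add]
          congr 1
          have h3 : ∑ x ∈ Finset.Ico N n, -(q / l x) =
              -(q * ∑ k ∈ Finset.Ico N n, 1 / l k) := by
            rw [Finset.mul_sum, ← Finset.sum_neg_distrib]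
            exact Finset.sum_congr rfl fun k _ => by ring
          rw [h3, ← Finset.sum_range_add_sum_Ico (fun k => 1 / l k) hn]
          simp only [one_div]
          ring
  have hbound : Tendsto (fun n => C * Real.exp (-(q * ∑ k ∈ Finset.range n, 1 / l k)))
      atTop (nhds 0) := by
    rw [show (0:ℝ) = C * 0 by ring]
    apply Tendsto.const_mul
    apply Real.tendsto_exp_atBot.comp
    exact tendsto_neg_atBot_iff.2 (hS.const_mul_atTop hq)
  refine squeeze_zero' ?_ ?_ hbound
  · exact Eventually.of_forall fun n => Finset.prod_nonneg fun _ _ => abs_nonneg _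
  · filter_upwards [eventually_ge_atTop N] with n hn using key n hn
end

section
/- Let f and g be measurable functions on (0,∞) and (n_j) a strictly increasing sequence of positive reals with ∑ 1/n_j = ∞. If for all j the integrals ∫₀^∞ f(x)e^{-n_j x}dx and ∫₀^∞ g(x)e^{-n_j x}dx are finite and equal, then f = g almost everywhere on (0,∞). -/
open MeasureTheory Real Set

section LaplaceAux

open Filter Complex

noncomputable def Lap (h : ℝ → ℝ) (s : ℂ) : ℂ := ∫ x in Ioi (0:ℝ), (h x : ℂ) * Complex.exp (-s * x)

lemma lap_integrable_real {h : ℝ → ℝ} (hm : Measurable h) {c : ℝ}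
    (hc : IntegrableOn (fun x => h x * Real.exp (-c * x)) (Ioi 0)) {s : ℝ} (hs : c ≤ s) :
    IntegrableOn (fun x => h x * Real.exp (-s * x)) (Ioi 0) := by
  refine Integrable.mono' hc.norm ?_ ?_
  · exact ((hm.mul ((Real.measurable_exp.comp (measurable_id.const_mul (-s)))) ).aestronglyMeasurable)
  · refine (ae_restrict_iff' measurableSet_Ioi).2 (Eventually.of_forall fun x hx => ?_)
    have hx0 : (0:ℝ) < x := hx
    simp only [Real.norm_eq_abs, abs_mul, Real.abs_exp]
    gcongr
    all_goals nlinarith [hx0.le, hs]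

lemma lap_aesm {h : ℝ → ℝ} (hm : Measurable h) (s : ℂ) :
    AEStronglyMeasurable (fun x : ℝ => (h x : ℂ) * Complex.exp (-s * x))
      (volume.restrict (Ioi 0)) := by
  refine Measurable.aestronglyMeasurable ?_
  exact (Complex.measurable_ofReal.comp hm).mul
    (Complex.measurable_exp.comp ((Complex.measurable_ofReal.comp measurable_id).const_mul (-s)))

lemma lap_norm_integrand {h : ℝ → ℝ} (s : ℂ) (x : ℝ) :
    ‖(h x : ℂ) * Complex.exp (-s * x)‖ = |h x| * Real.exp (-s.re * x) := by
  rw [norm_mul, Complex.norm_real, Real.norm_eq_abs, Complex.norm_exp]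
  congr 2
  simp

lemma lap_integrable {h : ℝ → ℝ} (hm : Measurable h) {c : ℝ}
    (hc : IntegrableOn (fun x => h x * Real.exp (-c * x)) (Ioi 0)) {s : ℂ} (hs : c ≤ s.re) :
    IntegrableOn (fun x => (h x : ℂ) * Complex.exp (-s * x)) (Ioi 0) := by
  refine Integrable.mono' hc.norm (lap_aesm hm s) ?_
  refine (ae_restrict_iff' measurableSet_Ioi).2 (Eventually.of_forall fun x hx => ?_)
  have hx0 : (0:ℝ) < x := hx
  rw [lap_norm_integrand]
  simp only [Real.norm_eq_abs, abs_mul, Real.abs_exp]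
  gcongr
  all_goals nlinarith [hx0.le, hs]

lemma lap_eq_real {h : ℝ → ℝ} (s : ℝ) :
    Lap h s = ((∫ x in Ioi (0:ℝ), h x * Real.exp (-s * x) : ℝ) : ℂ) := by
  have : Lap h s = ∫ x in Ioi (0:ℝ), ((h x * Real.exp (-s * x) : ℝ) : ℂ) := by
    rw [Lap]
    congr 1 with x
    rw [Complex.ofReal_mul, Complex.ofReal_exp]
    push_cast
    ring
  rw [this]
  exact integral_ofReal

lemma lap_bound {h : ℝ → ℝ} (hm : Measurable h) {c : ℝ}
    (hc : IntegrableOn (fun x => h x * Real.exp (-c * x)) (Ioi 0)) {s : ℂ} (hs : c ≤ s.re) :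
    ‖Lap h s‖ ≤ ∫ x in Ioi (0:ℝ), |h x| * Real.exp (-c * x) := by
  refine (norm_integral_le_integral_norm _).trans ?_
  refine setIntegral_mono_on ((lap_integrable hm hc hs).norm) ?_ measurableSet_Ioi ?_
  · have := hc.norm
    refine this.congr (Eventually.of_forall fun x => ?_)
    simp [abs_mul, Real.abs_exp]
  · intro x hx
    have hx0 : (0:ℝ) < x := hx
    rw [lap_norm_integrand]
    gcongr
    all_goals nlinarith [hx0.le, hs]

lemma lap_continuousOn {h : ℝ → ℝ} (hm : Measurable h) {c : ℝ}
    (hc : IntegrableOn (fun x => h x * Real.exp (-c * x)) (Ioi 0)) :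
    ContinuousOn (Lap h) {z : ℂ | c ≤ z.re} := by
  refine continuousOn_of_dominated (fun s _ => lap_aesm hm s)
    (fun s hs => (ae_restrict_iff' measurableSet_Ioi).2 (Eventually.of_forall fun x hx => ?_))
    hc.norm ?_
  · have hx0 : (0:ℝ) < x := hx
    have hcs : c ≤ s.re := hs
    rw [lap_norm_integrand]
    simp only [Real.norm_eq_abs, abs_mul, Real.abs_exp]
    gcongr
    all_goals nlinarith [hx0.le, hcs]
  · refine Eventually.of_forall fun x => Continuous.continuousOn ?_
    fun_prop

lemma lap_differentiableOn {h : ℝ → ℝ} (hm : Measurable h) {c : ℝ}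
    (hc : IntegrableOn (fun x => h x * Real.exp (-c * x)) (Ioi 0)) :
    DifferentiableOn ℂ (Lap h) {z : ℂ | c < z.re} := by
  intro z₀ hz₀
  have hz₀' : c < z₀.re := hz₀
  set δ : ℝ := (z₀.re - c) / 2 with hδ
  have hδpos : 0 < δ := by simp only [hδ]; linarith
  have key := hasDerivAt_integral_of_dominated_loc_of_deriv_le (μ := volume.restrict (Ioi 0))
    (F := fun (s : ℂ) (x : ℝ) => (h x : ℂ) * Complex.exp (-s * x))
    (F' := fun (s : ℂ) (x : ℝ) => (h x : ℂ) * (Complex.exp (-s * x) * (-x)))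
    (bound := fun x : ℝ => |h x| * Real.exp (-c * x) * δ⁻¹)
    (x₀ := z₀) (Metric.ball_mem_nhds z₀ hδpos)
    (Eventually.of_forall fun s => lap_aesm hm s) (lap_integrable hm hc (by linarith))
    ?_ ?_ ?_ ?_
  · exact (key.2.differentiableAt).differentiableWithinAt
  · refine Measurable.aestronglyMeasurable ?_
    apply Measurable.mul
    · exact Complex.measurable_ofReal.comp hm
    · apply Measurable.mul
      · exact Complex.measurable_exp.comp
          ((Complex.measurable_ofReal.comp measurable_id).const_mul (-z₀))
      · exact (Complex.measurable_ofReal.comp measurable_id).neg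
  · refine (ae_restrict_iff' measurableSet_Ioi).2 (Eventually.of_forall fun x hx s hs => ?_)
    have hx0 : (0:ℝ) < x := hx
    have hsre : c + δ ≤ s.re := by
      have h1 : |(s - z₀).re| ≤ dist s z₀ := by
        rw [Complex.dist_eq]; exact Complex.abs_re_le_norm _
      have h2 : dist s z₀ < δ := Metric.mem_ball.1 hs
      rw [Complex.sub_re] at h1
      have := abs_le.1 h1
      simp only [hδ] at *
      linarith [this.1]
    have hnorm : ‖(h x : ℂ) * (Complex.exp (-s * x) * (-x : ℂ))‖
        = |h x| * (Real.exp (-s.re * x) * x) := by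
      rw [norm_mul, norm_mul]
      rw [Complex.norm_real, Real.norm_eq_abs]
      rw [Complex.norm_exp]
      have hre : (-s * (x:ℂ)).re = -s.re * x := by simp
      rw [hre]
      congr 1
      rw [norm_neg, Complex.norm_real, Real.norm_eq_abs, abs_of_pos hx0]
    rw [hnorm]
    have hxe : x * Real.exp (-(δ * x)) ≤ δ⁻¹ := by
      rw [Real.exp_neg, mul_inv_le_iff₀ (Real.exp_pos _)]
      calc x = δ⁻¹ * (δ * x) := by field_simp
        _ ≤ δ⁻¹ * Real.exp (δ * x) := by
            have h3 : δ * x ≤ Real.exp (δ * x) := by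
              nlinarith [Real.add_one_le_exp (δ * x)]
            gcongr
    have hmain : Real.exp (-s.re * x) * x ≤ Real.exp (-c * x) * δ⁻¹ := by
      calc Real.exp (-s.re * x) * x ≤ Real.exp (-(c + δ) * x) * x := by
            gcongr
            all_goals nlinarith [hx0.le, hsre]
        _ = Real.exp (-c * x) * (x * Real.exp (-(δ * x))) := by
            rw [show -(c + δ) * x = -c * x + -(δ * x) by ring, Real.exp_add]; ring
        _ ≤ Real.exp (-c * x) * δ⁻¹ := by
            gcongr
    calc |h x| * (Real.exp (-s.re * x) * x) ≤ |h x| * (Real.exp (-c * x) * δ⁻¹) := by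
          gcongr
      _ = |h x| * Real.exp (-c * x) * δ⁻¹ := by ring
  · refine ((hc.abs.mul_const δ⁻¹).congr (Eventually.of_forall fun x => ?_))
    simp [abs_mul, Real.abs_exp]
  · refine (ae_restrict_iff' measurableSet_Ioi).2 (Eventually.of_forall fun x hx s hs => ?_)
    have d1 : HasDerivAt (fun s : ℂ => -s * (x:ℂ)) (-(x:ℂ)) s := by
      simpa using ((hasDerivAt_id s).neg.mul_const (x:ℂ))
    exact (d1.cexp.const_mul ((h x : ℂ)))

noncomputable def dslopeIter (G : ℂ → ℂ) (a : ℕ → ℝ) : ℕ → ℂ → ℂ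
  | 0 => G
  | (k+1) => dslope (dslopeIter G a k) ((a k : ℂ))

lemma dslopeIter_spec {G : ℂ → ℂ} {a : ℕ → ℝ} (hapos : ∀ j, 0 < a j)
    (hamono : StrictMono a) (hGd : DiffContOnCl ℂ G {z : ℂ | 0 < z.re})
    (hGz : ∀ j, G ((a j : ℂ)) = 0) (k : ℕ) :
    DiffContOnCl ℂ (dslopeIter G a k) {z : ℂ | 0 < z.re} ∧
      ∀ w : ℂ, G w = dslopeIter G a k w * ∏ j ∈ Finset.range k, (w - (a j : ℂ)) := by
  have hopen : IsOpen {z : ℂ | 0 < z.re} := isOpen_lt continuous_const continuous_re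
  induction k with
  | zero => exact ⟨hGd, fun w => by simp [dslopeIter]⟩
  | succ k ih =>
    obtain ⟨ihd, ihe⟩ := ih
    have hmem : {z : ℂ | 0 < z.re} ∈ nhds ((a k : ℂ)) :=
      hopen.mem_nhds (by simp [hapos k])
    have hGk_ak : dslopeIter G a k ((a k : ℂ)) = 0 := by
      have := ihe ((a k : ℂ))
      rw [hGz k] at this
      have hprod : (∏ j ∈ Finset.range k, (((a k : ℂ)) - (a j : ℂ))) ≠ 0 := by
        refine Finset.prod_ne_zero_iff.2 fun j hj => ?_
        have : a j < a k := hamono (Finset.mem_range.1 hj)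
        rw [← Complex.ofReal_sub]
        exact_mod_cast sub_ne_zero.2 (ne_of_gt this)
      exact (mul_eq_zero.1 this.symm).resolve_right hprod
    have hdiffAt : DifferentiableAt ℂ (dslopeIter G a k) ((a k : ℂ)) :=
      ihd.differentiableOn.differentiableAt hmem
    constructor
    · constructor
      · exact (Complex.differentiableOn_dslope hmem).2 ihd.differentiableOn
      · rw [closure_setOf_lt_re]
        have hmem' : {z : ℂ | 0 ≤ z.re} ∈ nhds ((a k : ℂ)) := by
          refine Filter.mem_of_superset hmem fun z hz => by
            simp only [mem_setOf_eq] at hz ⊢; exact le_of_lt hz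
        refine (continuousOn_dslope hmem').2 ⟨?_, hdiffAt⟩
        have := ihd.continuousOn
        rwa [closure_setOf_lt_re] at this
    · intro w
      rw [Finset.prod_range_succ, dslopeIter]
      have hs := sub_smul_dslope (dslopeIter G a k) ((a k : ℂ)) w
      rw [smul_eq_mul, hGk_ak, sub_zero] at hs
      calc G w = dslopeIter G a k w * ∏ j ∈ Finset.range k, (w - (a j : ℂ)) := ihe w
        _ = (w - (a k : ℂ)) * dslope (dslopeIter G a k) ((a k : ℂ)) w *
              ∏ j ∈ Finset.range k, (w - (a j : ℂ)) := by rw [hs]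
        _ = dslope (dslopeIter G a k) ((a k : ℂ)) w *
              ((∏ j ∈ Finset.range k, (w - (a j : ℂ))) * (w - (a k : ℂ))) := by ring

lemma blaschke_bound {G : ℂ → ℂ} {C : ℝ}
    (hGd : DiffContOnCl ℂ G {z : ℂ | 0 < z.re})
    (hGb : ∀ w : ℂ, 0 ≤ w.re → ‖G w‖ ≤ C)
    {a : ℕ → ℝ} (hapos : ∀ j, 0 < a j) (hamono : StrictMono a)
    (hGz : ∀ j, G ((a j : ℂ)) = 0) (N : ℕ) {u : ℝ} (hu : 0 < u) :
    ‖G (u : ℂ)‖ ≤ C * ∏ j ∈ Finset.range N, (|u - a j| / (u + a j)) := by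
  obtain ⟨hd, he⟩ := dslopeIter_spec hapos hamono hGd hGz N
  set P : ℂ → ℂ := fun w => ∏ j ∈ Finset.range N, (w + (a j : ℂ)) with hP
  set Q : ℂ → ℂ := fun w => ∏ j ∈ Finset.range N, (w - (a j : ℂ)) with hQ
  set H : ℂ → ℂ := fun w => dslopeIter G a N w * P w with hH
  have hkey : ∀ w : ℂ, H w * Q w = G w * P w := by
    intro w
    rw [hH, he w]; ring
  have hPdiff : Differentiable ℂ P :=
    Differentiable.fun_finsetProd (fun j _ => differentiable_id.add_const _)
  have hHd : DiffContOnCl ℂ H {z : ℂ | 0 < z.re} :=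
    ⟨hd.differentiableOn.mul hPdiff.differentiableOn,
      hd.continuousOn.mul hPdiff.continuous.continuousOn⟩
  have hC : 0 ≤ C := le_trans (norm_nonneg _) (hGb 1 (by norm_num))
  -- key norm identity
  have hnormid : ∀ w : ℂ, ‖H w‖ * ∏ j ∈ Finset.range N, ‖w - (a j : ℂ)‖
      = ‖G w‖ * ∏ j ∈ Finset.range N, ‖w + (a j : ℂ)‖ := by
    intro w
    have h0 : ‖H w‖ * ‖Q w‖ = ‖G w‖ * ‖P w‖ := by rw [← norm_mul, ← norm_mul, hkey w]
    have hq : ‖Q w‖ = ∏ j ∈ Finset.range N, ‖w - (a j : ℂ)‖ := norm_prod _ _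
    have hp : ‖P w‖ = ∏ j ∈ Finset.range N, ‖w + (a j : ℂ)‖ := norm_prod _ _
    rw [← hq, ← hp]
    exact h0
  -- bound on imaginary axis
  have him : ∀ y : ℝ, ‖H ((y : ℂ) * Complex.I)‖ ≤ C := by
    intro y
    have habs : ∀ j ∈ Finset.range N, ‖(y : ℂ) * Complex.I - (a j : ℂ)‖
        = ‖(y : ℂ) * Complex.I + (a j : ℂ)‖ := by
      intro j _
      have h1 : Complex.normSq ((y : ℂ) * Complex.I - (a j : ℂ))
          = Complex.normSq ((y : ℂ) * Complex.I + (a j : ℂ)) := by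
        simp [Complex.normSq_apply]
      rw [Complex.norm_def, Complex.norm_def, h1]
    have hne : (∏ j ∈ Finset.range N, ‖(y : ℂ) * Complex.I + (a j : ℂ)‖) ≠ 0 := by
      refine Finset.prod_ne_zero_iff.2 fun j _ => ?_
      rw [norm_ne_zero_iff]
      intro hzero
      have := congrArg Complex.re hzero
      simp at this
      exact (hapos j).ne' this
    have h2 := hnormid ((y : ℂ) * Complex.I)
    rw [Finset.prod_congr rfl habs] at h2
    have h3 : ‖H ((y : ℂ) * Complex.I)‖ = ‖G ((y : ℂ) * Complex.I)‖ :=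
      mul_right_cancel₀ hne h2
    rw [h3]
    exact hGb _ (by simp)
  -- bound for large |z|
  set R : ℝ := 2 * a N + 1 with hR
  have hbig : ∀ z : ℂ, 0 ≤ z.re → R ≤ ‖z‖ → ‖H z‖ ≤ C * 3 ^ N := by
    intro z hzre hzabs
    have haN : 0 < a N := hapos N
    have hfac : ∀ j ∈ Finset.range N, ‖z + (a j : ℂ)‖ ≤ 3 * ‖z - (a j : ℂ)‖ := by
      intro j hj
      have haj : a j ≤ a N := hamono.monotone (Nat.le_of_lt_succ (Nat.lt_succ_of_lt (Finset.mem_range.1 hj)))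
      have h1 : ‖z + (a j : ℂ)‖ ≤ ‖z‖ + a j := by
        refine (norm_add_le _ _).trans ?_
        simp [Complex.norm_real, abs_of_pos (hapos j)]
      have h2 : ‖z‖ - a j ≤ ‖z - (a j : ℂ)‖ := by
        have := norm_sub_norm_le z ((a j : ℂ))
        simp only [Complex.norm_real, Real.norm_eq_abs, abs_of_pos (hapos j)] at this ⊢
        linarith [this]
      have hz2 : 2 * a j ≤ ‖z‖ := by
        rw [hR] at hzabs; linarith
      linarith
    have hfacpos : ∀ j ∈ Finset.range N, 0 < ‖z - (a j : ℂ)‖ := by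
      intro j hj
      have haj : a j ≤ a N := hamono.monotone (Nat.le_of_lt_succ (Nat.lt_succ_of_lt (Finset.mem_range.1 hj)))
      have h2 : ‖z‖ - a j ≤ ‖z - (a j : ℂ)‖ := by
        have := norm_sub_norm_le z ((a j : ℂ))
        simp only [Complex.norm_real, Real.norm_eq_abs, abs_of_pos (hapos j)] at this ⊢
        linarith [this]
      rw [hR] at hzabs
      linarith
    have hQpos : 0 < ∏ j ∈ Finset.range N, ‖z - (a j : ℂ)‖ := Finset.prod_pos hfacpos
    have h4 : ‖H z‖ * ∏ j ∈ Finset.range N, ‖z - (a j : ℂ)‖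
        ≤ (C * 3 ^ N) * ∏ j ∈ Finset.range N, ‖z - (a j : ℂ)‖ := by
      rw [hnormid z]
      calc ‖G z‖ * ∏ j ∈ Finset.range N, ‖z + (a j : ℂ)‖
          ≤ C * ∏ j ∈ Finset.range N, (3 * ‖z - (a j : ℂ)‖) := by
            refine mul_le_mul (hGb z hzre) (Finset.prod_le_prod (fun j _ => norm_nonneg _) hfac)
              (Finset.prod_nonneg fun j _ => norm_nonneg _) hC
        _ = (C * 3 ^ N) * ∏ j ∈ Finset.range N, ‖z - (a j : ℂ)‖ := by
            rw [Finset.prod_mul_distrib, Finset.prod_const, Finset.card_range]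
            ring
    exact le_of_mul_le_mul_right h4 hQpos
  -- Phragmen-Lindelof
  have hPL : ∀ z : ℂ, 0 ≤ z.re → ‖H z‖ ≤ C := by
    intro z hz
    refine PhragmenLindelof.right_half_plane_of_bounded_on_real hHd ?_ ?_ him hz
    · refine ⟨1, by norm_num, 0, ?_⟩
      refine Asymptotics.IsBigO.of_bound (C * 3 ^ N) ?_
      have h1 : ∀ᶠ z : ℂ in Bornology.cobounded ℂ, R ≤ ‖z‖ :=
        eventually_cobounded_le_norm R
      rw [Filter.eventually_inf_principal]
      refine h1.mono fun z hz1 hz2 => ?_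
      have : ‖H z‖ ≤ C * 3 ^ N := hbig z (le_of_lt hz2) (by exact hz1)
      simpa using this
    · refine Filter.isBoundedUnder_of_eventually_le (a := C * 3 ^ N) ?_
      refine Filter.eventually_atTop.2 ⟨R, fun x hx => ?_⟩
      have hR0 : 0 < R := by rw [hR]; linarith [hapos N]
      refine hbig x (by simp [le_of_lt (lt_of_lt_of_le hR0 hx)]) ?_
      rw [Complex.norm_real, Real.norm_eq_abs, abs_of_pos (lt_of_lt_of_le hR0 hx)]
      exact hx
  -- conclude at z = u
  have hid := hnormid ((u : ℂ))
  have hnorm1 : ∀ j ∈ Finset.range N, ‖(u : ℂ) - (a j : ℂ)‖ = |u - a j| := by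
    intro j _
    rw [← Complex.ofReal_sub, Complex.norm_real, Real.norm_eq_abs]
  have hnorm2 : ∀ j ∈ Finset.range N, ‖(u : ℂ) + (a j : ℂ)‖ = u + a j := by
    intro j _
    rw [← Complex.ofReal_add, Complex.norm_real, Real.norm_eq_abs]
    exact abs_of_pos (by linarith [hapos j])
  rw [Finset.prod_congr rfl hnorm1, Finset.prod_congr rfl hnorm2] at hid
  have hPpos : 0 < ∏ j ∈ Finset.range N, (u + a j) :=
    Finset.prod_pos fun j _ => by linarith [hapos j]
  have hfin : ‖G (u : ℂ)‖ * ∏ j ∈ Finset.range N, (u + a j)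
      ≤ C * ∏ j ∈ Finset.range N, |u - a j| := by
    rw [← hid]
    have := hPL ((u : ℂ)) (by simp [hu.le])
    exact mul_le_mul_of_nonneg_right this (Finset.prod_nonneg fun j _ => abs_nonneg _)
  rw [Finset.prod_div_distrib, ← mul_div_assoc, le_div_iff₀ hPpos]
  exact hfin

lemma lap_real_zero {h : ℝ → ℝ} (hm : Measurable h) (n : ℕ → ℝ) (hpos : ∀ j, 0 < n j)
    (hmono : StrictMono n) (hdiv : ¬ Summable (fun j => 1 / n j))
    (hint0 : IntegrableOn (fun x => h x * Real.exp (-(n 0) * x)) (Ioi 0))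
    (hzero : ∀ j, ∫ x in Ioi (0:ℝ), h x * Real.exp (-(n j) * x) = 0)
    {s : ℝ} (hs : n 0 < s) : ∫ x in Ioi (0:ℝ), h x * Real.exp (-s * x) = 0 := by
  set c : ℝ := n 0 with hc
  set C : ℝ := ∫ x in Ioi (0:ℝ), |h x| * Real.exp (-c * x) with hCdef
  set u : ℝ := s - c with hudef
  have hu : 0 < u := by simp [hudef]; linarith
  set G : ℂ → ℂ := fun w => Lap h (w + (c : ℂ)) with hGdef
  have hGd : DiffContOnCl ℂ G {z : ℂ | 0 < z.re} := by
    constructor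
    · have hmaps : MapsTo (fun w : ℂ => w + (c : ℂ)) {z : ℂ | 0 < z.re} {z : ℂ | c < z.re} := by
        intro w hw
        simp only [mem_setOf_eq, Complex.add_re, Complex.ofReal_re] at hw ⊢
        linarith
      have hcomp : DifferentiableOn ℂ (Lap h ∘ fun w : ℂ => w + (c : ℂ)) {z : ℂ | 0 < z.re} :=
        DifferentiableOn.comp (lap_differentiableOn hm hint0)
          ((differentiable_id.add_const ((c:ℂ))).differentiableOn) hmaps
      exact hcomp
    · rw [closure_setOf_lt_re]
      have hmaps : MapsTo (fun w : ℂ => w + (c : ℂ)) {z : ℂ | 0 ≤ z.re} {z : ℂ | c ≤ z.re} := by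
        intro w hw
        simp only [mem_setOf_eq, Complex.add_re, Complex.ofReal_re] at hw ⊢
        linarith
      have hcomp : ContinuousOn (Lap h ∘ fun w : ℂ => w + (c : ℂ)) {z : ℂ | 0 ≤ z.re} :=
        ContinuousOn.comp (lap_continuousOn hm hint0)
          ((continuous_id.add continuous_const).continuousOn) hmaps
      exact hcomp
  have hGb : ∀ w : ℂ, 0 ≤ w.re → ‖G w‖ ≤ C := by
    intro w hw
    refine lap_bound hm hint0 ?_
    simp only [Complex.add_re, Complex.ofReal_re]
    linarith
  set a : ℕ → ℝ := fun j => n (j + 1) - c with hadef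
  have hapos : ∀ j, 0 < a j := fun j => by
    simp only [hadef, hc, sub_pos]; exact hmono (Nat.succ_pos j)
  have hamono : StrictMono a := fun i j hij => by
    simp only [hadef]
    exact sub_lt_sub_right (hmono (Nat.succ_lt_succ hij)) c
  have hGz : ∀ j, G ((a j : ℂ)) = 0 := by
    intro j
    have harg : ((a j : ℝ) : ℂ) + (c : ℂ) = ((n (j + 1) : ℝ) : ℂ) := by
      push_cast [hadef]; ring
    rw [hGdef]
    simp only []
    rw [harg, lap_eq_real, hzero (j + 1), Complex.ofReal_zero]
  have hbound := fun N => blaschke_bound hGd hGb hapos hamono hGz N hu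
  -- the product tends to zero
  set μ : ℝ := min u (a 0) with hμdef
  have hμ : 0 < μ := lt_min hu (hapos 0)
  set d : ℕ → ℝ := fun j => 2 * μ / (u + n (j + 1)) with hddef
  have hd0 : ∀ j, 0 < d j := fun j => by
    refine div_pos (by linarith) (by linarith [hpos (j + 1)])
  have hq_le : ∀ j, |u - a j| / (u + a j) ≤ Real.exp (-d j) := by
    intro j
    have haj : 0 < a j := hapos j
    have hden : 0 < u + a j := by linarith
    have h1 : u + a j - |u - a j| ≥ 2 * μ := by
      rcases le_total u (a j) with hle | hle
      · rw [_root_.abs_of_nonpos (by linarith)]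
        have h5 : μ ≤ u := min_le_left u (a 0)
        linarith
      · rw [_root_.abs_of_nonneg (by linarith)]
        have ha0 : a 0 ≤ a j := hamono.monotone (Nat.zero_le j)
        linarith [min_le_right u (a 0)]
    have h2 : u + a j ≤ u + n (j + 1) := by
      simp only [hadef]
      have : 0 < c := hpos 0
      linarith
    have h3 : |u - a j| / (u + a j) ≤ 1 - d j := by
      have e1 : d j ≤ (u + a j - |u - a j|) / (u + a j) := by
        simp only [hddef]
        gcongr
        all_goals first
          | linarith [abs_nonneg (u - a j)]
          | exact h1
      have e2 : (1:ℝ) - (u + a j - |u - a j|) / (u + a j) = |u - a j| / (u + a j) := by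
        field_simp
        ring
      linarith
    refine h3.trans ?_
    linarith [Real.add_one_le_exp (-d j)]
  have hq0 : ∀ j, 0 ≤ |u - a j| / (u + a j) := fun j =>
    div_nonneg (abs_nonneg _) (by linarith [hapos j])
  have hprod_le : ∀ N, (∏ j ∈ Finset.range N, (|u - a j| / (u + a j)))
      ≤ Real.exp (-(∑ j ∈ Finset.range N, d j)) := by
    intro N
    calc (∏ j ∈ Finset.range N, (|u - a j| / (u + a j)))
        ≤ ∏ j ∈ Finset.range N, Real.exp (-d j) :=
          Finset.prod_le_prod (fun j _ => hq0 j) (fun j _ => hq_le j)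
      _ = Real.exp (∑ j ∈ Finset.range N, (-d j)) := (Real.exp_sum _ _).symm
      _ = Real.exp (-(∑ j ∈ Finset.range N, d j)) := by rw [Finset.sum_neg_distrib]
  -- d is not summable
  have hdns : ¬ Summable d := by
    intro hsum
    apply hdiv
    rw [← summable_nat_add_iff 1]
    set K : ℝ := (u / n 1 + 1) / (2 * μ) with hKdef
    have hn1 : 0 < n 1 := hpos 1
    have hK : 0 < K := by
      refine div_pos (add_pos (div_pos hu hn1) one_pos) (by linarith)
    refine Summable.of_nonneg_of_le (fun j => le_of_lt (one_div_pos.2 (hpos (j+1)))) (fun j => ?_) (hsum.mul_left K)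
    have hnj : n 1 ≤ n (j + 1) := hmono.monotone (Nat.succ_le_succ (Nat.zero_le j))
    have hnjpos : 0 < n (j + 1) := hpos (j + 1)
    simp only [hKdef, hddef]
    have hμne : μ ≠ 0 := hμ.ne'
    have hn1ne : n 1 ≠ 0 := hn1.ne'
    have hdenne : u + n (j + 1) ≠ 0 := by intro h0; have := hpos (j+1); linarith
    have : K * (2 * μ / (u + n (j + 1))) = (u / n 1 + 1) / (u + n (j + 1)) := by
      rw [hKdef]
      field_simp
    rw [← hKdef, this]
    rw [div_le_div_iff₀ hnjpos (by linarith)]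
    have hx1 : u ≤ u * n (j + 1) / n 1 := by
      rw [le_div_iff₀ hn1]
      exact mul_le_mul_of_nonneg_left hnj hu.le
    have hexp : (u / n 1 + 1) * n (j + 1) = u * n (j + 1) / n 1 + n (j + 1) := by
      field_simp
    linarith
  have hdsum_tendsto : Filter.Tendsto (fun N => ∑ j ∈ Finset.range N, d j)
      Filter.atTop Filter.atTop :=
    (not_summable_iff_tendsto_nat_atTop_of_nonneg (fun j => (hd0 j).le)).1 hdns
  have hC0 : 0 ≤ C := by
    refine integral_nonneg fun x => ?_
    positivity
  have htendsto : Filter.Tendsto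
      (fun N => C * Real.exp (-(∑ j ∈ Finset.range N, d j))) Filter.atTop (nhds 0) := by
    rw [show (0:ℝ) = C * 0 by ring]
    exact (Real.tendsto_exp_atBot.comp (tendsto_neg_atBot_iff.2 hdsum_tendsto)).const_mul C
  have hGu : ‖G ((u : ℂ))‖ ≤ 0 := by
    refine ge_of_tendsto htendsto (Filter.Eventually.of_forall fun N => ?_)
    exact (hbound N).trans (mul_le_mul_of_nonneg_left (hprod_le N) hC0)
  have hGu0 : G ((u : ℂ)) = 0 := norm_le_zero_iff.1 hGu
  have harg : ((u : ℝ) : ℂ) + (c : ℂ) = ((s : ℝ) : ℂ) := by push_cast [hudef]; ring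
  rw [hGdef] at hGu0
  simp only [] at hGu0
  rw [harg, lap_eq_real] at hGu0
  exact_mod_cast hGu0

lemma moments_zero {h : ℝ → ℝ} (hm : Measurable h) {c : ℝ}
    (hint : ∀ s : ℝ, c ≤ s → IntegrableOn (fun x => h x * Real.exp (-s * x)) (Ioi 0))
    (hzero : ∀ s : ℝ, c < s → ∫ x in Ioi (0:ℝ), h x * Real.exp (-s * x) = 0) :
    h =ᵐ[volume.restrict (Ioi (0:ℝ))] 0 := by
  set s₀ : ℝ := c + 1 with hs₀
  have hs₀c : c < s₀ := by rw [hs₀]; linarith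
  have hint₀ : IntegrableOn (fun x => h x * Real.exp (-s₀ * x)) (Ioi 0) := hint s₀ hs₀c.le
  have hpoly : ∀ p : Polynomial ℝ,
      IntegrableOn (fun x => h x * Real.exp (-s₀ * x) * p.eval (Real.exp (-x))) (Ioi 0) ∧
      ∫ x in Ioi (0:ℝ), h x * Real.exp (-s₀ * x) * p.eval (Real.exp (-x)) = 0 := by
    intro p
    induction p using Polynomial.induction_on' with
    | add p q hp hq =>
      constructor
      · refine (hp.1.add hq.1).congr (Filter.Eventually.of_forall fun x => ?_)
        simp only [Polynomial.eval_add, Pi.add_apply]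
        ring
      · rw [show (fun x => h x * Real.exp (-s₀ * x) * (p + q).eval (Real.exp (-x)))
            = fun x => (h x * Real.exp (-s₀ * x) * p.eval (Real.exp (-x)))
              + (h x * Real.exp (-s₀ * x) * q.eval (Real.exp (-x))) from funext fun x => by
            simp only [Polynomial.eval_add]; ring]
        rw [integral_add hp.1 hq.1, hp.2, hq.2, add_zero]
    | monomial k a =>
      have heq : ∀ x : ℝ, h x * Real.exp (-s₀ * x) * ((Polynomial.monomial k a).eval (Real.exp (-x)))
          = a * (h x * Real.exp (-(s₀ + k) * x)) := by
        intro x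
        rw [Polynomial.eval_monomial]
        have e1 : Real.exp (-x) ^ k = Real.exp ((k : ℝ) * (-x)) := (Real.exp_nat_mul _ k).symm
        have e2 : Real.exp (-s₀ * x) * Real.exp ((k : ℝ) * (-x)) = Real.exp (-(s₀ + k) * x) := by
          rw [← Real.exp_add]; ring_nf
        calc h x * Real.exp (-s₀ * x) * (a * Real.exp (-x) ^ k)
            = a * (h x * (Real.exp (-s₀ * x) * Real.exp ((k:ℝ) * (-x)))) := by rw [e1]; ring
          _ = a * (h x * Real.exp (-(s₀ + k) * x)) := by rw [e2]
      have hik : IntegrableOn (fun x => h x * Real.exp (-(s₀ + k) * x)) (Ioi 0) :=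
        hint (s₀ + k) (by linarith [Nat.cast_nonneg (α := ℝ) k])
      constructor
      · exact (hik.const_mul a).congr (Filter.Eventually.of_forall fun x => (heq x).symm)
      · rw [show (fun x => h x * Real.exp (-s₀ * x) * ((Polynomial.monomial k a).eval (Real.exp (-x))))
            = fun x => a * (h x * Real.exp (-(s₀ + k) * x)) from funext heq]
        rw [integral_const_mul, hzero (s₀ + k) (by linarith [Nat.cast_nonneg (α := ℝ) k]), mul_zero]
  -- integrability against bounded continuous compositions
  have haesm : ∀ ψ : ℝ → ℝ, Continuous ψ → AEStronglyMeasurable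
      (fun x => h x * Real.exp (-s₀ * x) * ψ (Real.exp (-x))) (volume.restrict (Ioi 0)) := by
    intro ψ hψ
    exact ((hm.mul (Real.measurable_exp.comp (measurable_id.const_mul (-s₀)))).mul
      ((hψ.measurable).comp (Real.measurable_exp.comp measurable_id.neg))).aestronglyMeasurable
  have hbnd : ∀ ψ : ℝ → ℝ, Continuous ψ → IntegrableOn
      (fun x => h x * Real.exp (-s₀ * x) * ψ (Real.exp (-x))) (Ioi 0) := by
    intro ψ hψ
    obtain ⟨M, hM⟩ : ∃ M : ℝ, ∀ t ∈ Icc (0:ℝ) 1, |ψ t| ≤ M := by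
      obtain ⟨M, hM⟩ := (isCompact_Icc (a := (0:ℝ)) (b := 1)).exists_bound_of_continuousOn
        hψ.continuousOn
      exact ⟨M, fun t ht => by simpa using hM t ht⟩
    refine Integrable.mono' ((hint₀.norm).mul_const M) (haesm ψ hψ) ?_
    refine (ae_restrict_iff' measurableSet_Ioi).2 (Filter.Eventually.of_forall fun x hx => ?_)
    have hx0 : (0:ℝ) < x := hx
    have he1 : Real.exp (-x) ∈ Icc (0:ℝ) 1 :=
      ⟨(Real.exp_pos _).le, Real.exp_le_one_iff.2 (by linarith)⟩
    have e3 : ‖h x * Real.exp (-s₀ * x)‖ = |h x| * Real.exp (-s₀ * x) := by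
      rw [Real.norm_eq_abs, abs_mul, Real.abs_exp]
    calc ‖h x * Real.exp (-s₀ * x) * ψ (Real.exp (-x))‖
        = |h x| * Real.exp (-s₀ * x) * |ψ (Real.exp (-x))| := by
          rw [Real.norm_eq_abs, abs_mul, abs_mul, Real.abs_exp]
      _ ≤ |h x| * Real.exp (-s₀ * x) * M := by
          have hnn : 0 ≤ |h x| * Real.exp (-s₀ * x) := by positivity
          exact mul_le_mul_of_nonneg_left (hM _ he1) hnn
      _ = ‖h x * Real.exp (-s₀ * x)‖ * M := by rw [e3]
  -- integrals against continuous functions vanish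
  have hcontint : ∀ φ : ℝ → ℝ, Continuous φ →
      ∫ x in Ioi (0:ℝ), h x * Real.exp (-s₀ * x) * φ (Real.exp (-x)) = 0 := by
    intro φ hφ
    set B : ℝ := ∫ x in Ioi (0:ℝ), |h x| * Real.exp (-s₀ * x) with hBdef
    have hB0 : 0 ≤ B := integral_nonneg fun x => by positivity
    set I : ℝ := ∫ x in Ioi (0:ℝ), h x * Real.exp (-s₀ * x) * φ (Real.exp (-x)) with hIdef
    have key : ∀ ε : ℝ, 0 < ε → |I| ≤ ε * B := by
      intro ε hε
      obtain ⟨p, hp⟩ := exists_polynomial_near_of_continuousOn 0 1 φ hφ.continuousOn ε hε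
      have h3 := integral_sub (hbnd φ hφ) (hpoly p).1
      rw [(hpoly p).2, sub_zero] at h3
      have h4 : I = ∫ x in Ioi (0:ℝ),
          (h x * Real.exp (-s₀ * x) * φ (Real.exp (-x))
            - h x * Real.exp (-s₀ * x) * p.eval (Real.exp (-x))) := h3.symm
      rw [h4, ← Real.norm_eq_abs]
      refine (norm_integral_le_integral_norm _).trans ?_
      have h5 : IntegrableOn (fun x => |h x| * Real.exp (-s₀ * x) * ε) (Ioi 0) := by
        refine (hint₀.norm.mul_const ε).congr (Filter.Eventually.of_forall fun x => ?_)
        simp only [Real.norm_eq_abs, abs_mul, Real.abs_exp]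
      have h6 : ∫ x in Ioi (0:ℝ), |h x| * Real.exp (-s₀ * x) * ε = ε * B := by
        rw [hBdef, ← integral_const_mul]
        congr 1 with x
        ring
      rw [← h6]
      refine setIntegral_mono_on ((hbnd φ hφ).sub (hpoly p).1).norm h5 measurableSet_Ioi ?_
      intro x hx
      have hx0 : (0:ℝ) < x := hx
      have he1 : Real.exp (-x) ∈ Icc (0:ℝ) 1 :=
        ⟨(Real.exp_pos _).le, Real.exp_le_one_iff.2 (by linarith)⟩
      have e7 : h x * Real.exp (-s₀ * x) * φ (Real.exp (-x))
          - h x * Real.exp (-s₀ * x) * p.eval (Real.exp (-x))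
          = h x * Real.exp (-s₀ * x) * (φ (Real.exp (-x)) - p.eval (Real.exp (-x))) := by ring
      rw [Real.norm_eq_abs, e7, abs_mul, abs_mul, Real.abs_exp]
      have h8 : |φ (Real.exp (-x)) - p.eval (Real.exp (-x))| ≤ ε := by
        rw [abs_sub_comm]
        exact (hp _ he1).le
      have hnn : 0 ≤ |h x| * Real.exp (-s₀ * x) := by positivity
      calc |h x| * Real.exp (-s₀ * x) * |φ (Real.exp (-x)) - p.eval (Real.exp (-x))|
          ≤ |h x| * Real.exp (-s₀ * x) * ε := mul_le_mul_of_nonneg_left h8 hnn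
        _ = |h x| * Real.exp (-s₀ * x) * ε := rfl
    have hI0 : |I| ≤ 0 := by
      rcases eq_or_lt_of_le hB0 with hB | hB
      · simpa [← hB] using key 1 one_pos
      · by_contra hI
        push_neg at hI
        have hk := key (|I| / (2 * B)) (by positivity)
        have : |I| / (2 * B) * B = |I| / 2 := by field_simp
        rw [this] at hk
        linarith
    exact abs_eq_zero.1 (le_antisymm hI0 (abs_nonneg _))
  -- test functions
  have hρint : Integrable ((Ioi (0:ℝ)).indicator (fun x => h x * Real.exp (-s₀ * x))) :=
    (integrable_indicator_iff measurableSet_Ioi).2 hint₀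
  have hρzero : ∀ᵐ x ∂(volume : Measure ℝ),
      (Ioi (0:ℝ)).indicator (fun x => h x * Real.exp (-s₀ * x)) x = 0 := by
    refine ae_eq_zero_of_integral_contDiff_smul_eq_zero hρint.locallyIntegrable ?_
    intro g g_diff g_supp
    obtain ⟨r, hr⟩ := g_supp.isCompact.isBounded.subset_closedBall 0
    set M : ℝ := max r 0 + 1 with hMdef
    have hMpos : 0 < M := by
      have := le_max_right r 0
      rw [hMdef]; linarith
    have hMsupp : ∀ x : ℝ, M ≤ |x| → g x = 0 := by
      intro x hxM
      refine image_eq_zero_of_notMem_tsupport fun hmem => ?_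
      have := hr hmem
      rw [Metric.mem_closedBall, Real.dist_eq, sub_zero] at this
      have := le_max_left r 0
      rw [hMdef] at hxM
      linarith [le_max_left r 0]
    set φ : ℝ → ℝ := fun t => if t ≤ 0 then 0 else g (-Real.log t) with hφdef
    have hφzero : ∀ t : ℝ, t < Real.exp (-M) → φ t = 0 := by
      intro t ht
      by_cases h0 : t ≤ 0
      · simp [hφdef, h0]
      · push_neg at h0
        simp only [hφdef, if_neg (not_le.2 h0)]
        refine hMsupp _ ?_
        have hlog : Real.log t < -M := (Real.log_lt_iff_lt_exp h0).2 ht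
        rw [_root_.abs_of_nonneg (by linarith)]
        linarith
    have hφcont : Continuous φ := by
      rw [continuous_iff_continuousAt]
      intro t
      rcases lt_or_ge t (Real.exp (-M)) with ht | ht
      · have hev : φ =ᶠ[nhds t] fun _ => 0 := by
          filter_upwards [Iio_mem_nhds ht] with s hs using hφzero s hs
        exact continuousAt_const.congr hev.symm
      · have ht0 : 0 < t := lt_of_lt_of_le (Real.exp_pos _) ht
        have hev : φ =ᶠ[nhds t] fun s => g (-Real.log s) := by
          filter_upwards [Ioi_mem_nhds ht0] with s hs
          simp [hφdef, not_le.2 (mem_Ioi.1 hs)]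
        have hca : ContinuousAt (fun s => g (-Real.log s)) t :=
          g_diff.continuous.continuousAt.comp ((Real.continuousAt_log ht0.ne').neg)
        exact hca.congr hev.symm
    have hφe : ∀ x : ℝ, 0 < x → φ (Real.exp (-x)) = g x := by
      intro x hx
      have hne : ¬ (Real.exp (-x) ≤ 0) := not_le.2 (Real.exp_pos _)
      simp [hφdef, hne, Real.log_exp]
    have hI := hcontint φ hφcont
    have heq2 : ∫ x : ℝ, g x • (Ioi (0:ℝ)).indicator (fun x => h x * Real.exp (-s₀ * x)) x
        = ∫ x in Ioi (0:ℝ), h x * Real.exp (-s₀ * x) * φ (Real.exp (-x)) := by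
      rw [← integral_indicator measurableSet_Ioi]
      congr 1 with x
      by_cases hx : x ∈ Ioi (0:ℝ)
      · rw [indicator_of_mem hx, indicator_of_mem hx, smul_eq_mul, hφe x hx]
        ring
      · rw [indicator_of_notMem hx, indicator_of_notMem hx, smul_eq_mul, mul_zero]
    rw [heq2, hI]
  have h1 : ∀ᵐ x ∂(volume.restrict (Ioi (0:ℝ))),
      (Ioi (0:ℝ)).indicator (fun x => h x * Real.exp (-s₀ * x)) x = 0 := ae_restrict_of_ae hρzero
  have h2 : ∀ᵐ x ∂(volume.restrict (Ioi (0:ℝ))), x ∈ Ioi (0:ℝ) :=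
    ae_restrict_mem measurableSet_Ioi
  filter_upwards [h1, h2] with x hx1 hx2
  rw [indicator_of_mem hx2] at hx1
  rcases mul_eq_zero.1 hx1 with h3 | h3
  · exact h3
  · exact absurd h3 (Real.exp_ne_zero _)

end LaplaceAux

theorem laplace_eq_on_muntz_sequence
    (f g : ℝ → ℝ) (hf : Measurable f) (hg : Measurable g)
    (n : ℕ → ℝ) (hpos : ∀ j, 0 < n j) (hmono : StrictMono n)
    (hdiv : ¬ Summable (fun j => 1 / n j))
    (hfint : ∀ j, IntegrableOn (fun x => f x * Real.exp (-(n j) * x)) (Ioi (0:ℝ)))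
    (hgint : ∀ j, IntegrableOn (fun x => g x * Real.exp (-(n j) * x)) (Ioi (0:ℝ)))
    (h : ∀ j, ∫ x in Ioi (0:ℝ), f x * Real.exp (-(n j) * x)
            = ∫ x in Ioi (0:ℝ), g x * Real.exp (-(n j) * x)) :
    f =ᵐ[volume.restrict (Ioi (0:ℝ))] g := by
  set d : ℝ → ℝ := fun x => f x - g x with hddef
  have hm : Measurable d := hf.sub hg
  have hjint : ∀ j, IntegrableOn (fun x => d x * Real.exp (-(n j) * x)) (Ioi (0:ℝ)) := by
    intro j
    refine ((hfint j).sub (hgint j)).congr (Filter.Eventually.of_forall fun x => ?_)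
    simp only [hddef, Pi.sub_apply]
    ring
  have hjzero : ∀ j, ∫ x in Ioi (0:ℝ), d x * Real.exp (-(n j) * x) = 0 := by
    intro j
    have heq : (fun x => d x * Real.exp (-(n j) * x))
        = fun x => f x * Real.exp (-(n j) * x) - g x * Real.exp (-(n j) * x) := by
      funext x; simp only [hddef]; ring
    rw [heq, integral_sub (hfint j) (hgint j), h j, sub_self]
  have hint : ∀ s : ℝ, n 0 ≤ s → IntegrableOn (fun x => d x * Real.exp (-s * x)) (Ioi 0) :=
    fun s hs => lap_integrable_real hm (hjint 0) hs
  have hzero : ∀ s : ℝ, n 0 < s → ∫ x in Ioi (0:ℝ), d x * Real.exp (-s * x) = 0 :=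
    fun s hs => lap_real_zero hm n hpos hmono hdiv (hjint 0) hjzero hs
  have hae := moments_zero hm hint hzero
  filter_upwards [hae] with x hx
  have : f x - g x = 0 := hx
  linarith
end

section
/- Let X₁ and X₂ be nonnegative random variables with distribution functions F₁ and F₂, and let (m_i) be a strictly increasing sequence of positive real numbers with ∑ 1/m_i = ∞. If E[exp(-m_i X₁)] = E[exp(-m_i X₂)] for all i, then F₁ = F₂. -/
open MeasureTheory Real Set intervalIntegral Finset Filter Topology

lemma key_int {y a l : ℝ} (hy : 0 < y) (hal : a ≠ l) :
    (l - a) * (y ^ l * ∫ t in y..(1:ℝ), t ^ (a - 1 - l)) = y ^ a - y ^ l := by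
  have h1 : a - 1 - l ≠ -1 := fun h => hal (by linarith)
  have h0 : (0:ℝ) ∉ Set.uIcc y 1 := by
    rw [Set.mem_uIcc]; push_neg
    constructor <;> intro h <;> nlinarith
  rw [integral_rpow (Or.inr ⟨h1, h0⟩)]
  have e1 : a - 1 - l + 1 = a - l := by ring
  rw [e1, Real.one_rpow]
  have e2 : y ^ l * y ^ (a - l) = y ^ a := by
    rw [← Real.rpow_add hy]; ring_nf
  have hne : a - l ≠ 0 := sub_ne_zero.mpr hal
  field_simp
  linear_combination (a - l) * e2

lemma vg_approx (l : ℕ → ℝ) (hl : ∀ k, 0 < l k) (hinj : Function.Injective l)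
    (m : ℝ) (hm : 0 < m) (hne : ∀ k, l k ≠ m) (N : ℕ) :
    ∃ c : ℕ → ℝ, ∀ y ∈ Set.Icc (0:ℝ) 1,
      |y ^ m - ∑ k ∈ Finset.range N, c k * y ^ (l k)| ≤
        ∏ k ∈ Finset.range N, (|m - l k| / l k) := by
  induction N with
  | zero =>
    refine ⟨0, fun y hy => ?_⟩
    simp only [Finset.range_zero, Finset.sum_empty, Finset.prod_empty, sub_zero]
    rw [abs_of_nonneg (Real.rpow_nonneg hy.1 m)]
    exact Real.rpow_le_one hy.1 hy.2 hm.le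
  | succ N ih =>
    obtain ⟨c, hc⟩ := ih
    set B := ∏ k ∈ Finset.range N, (|m - l k| / l k) with hBdef
    have hB : 0 ≤ B := Finset.prod_nonneg fun k _ => div_nonneg (abs_nonneg _) (hl k).le
    set r : ℕ → ℝ := fun k => (l N - m) / (l N - l k) with hrdef
    refine ⟨fun k => if k = N then 1 - ∑ j ∈ Finset.range N, c j * r j else c k * r k,
      fun y hy => ?_⟩
    rcases eq_or_lt_of_le hy.1 with hy0 | hy0
    · -- y = 0
      rw [← hy0]
      have z : ∀ a : ℝ, 0 < a → (0:ℝ) ^ a = 0 := fun a ha => Real.zero_rpow ha.ne'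
      rw [z m hm]
      have : ∑ k ∈ Finset.range (N+1),
          (if k = N then 1 - ∑ j ∈ Finset.range N, c j * r j else c k * r k) * (0:ℝ) ^ (l k) = 0 := by
        apply Finset.sum_eq_zero
        intro k _
        rw [z (l k) (hl k), mul_zero]
      rw [this, sub_zero, abs_zero]
      exact Finset.prod_nonneg fun k _ => div_nonneg (abs_nonneg _) (hl k).le
    · -- 0 < y
      have hy1 : y ≤ 1 := hy.2
      have huIcc : Set.uIcc y 1 = Set.Icc y 1 := Set.uIcc_of_le hy1
      have hpos : ∀ t ∈ Set.Icc y 1, (0:ℝ) < t := fun t ht => lt_of_lt_of_le hy0 ht.1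
      have hcont : ∀ ρ : ℝ, ContinuousOn (fun t : ℝ => t ^ ρ) (Set.uIcc y 1) := by
        intro ρ t ht
        rw [huIcc] at ht
        exact (Real.continuousAt_rpow_const t ρ (Or.inl (hpos t ht).ne')).continuousWithinAt
      have hInt : ∀ ρ : ℝ, IntervalIntegrable (fun t : ℝ => t ^ ρ) volume y 1 :=
        fun ρ => (hcont ρ).intervalIntegrable
      -- decomposition of the integral
      have hIntSum : IntervalIntegrable
          (fun t : ℝ => ∑ k ∈ Finset.range N, c k * t ^ (l k - 1 - l N)) volume y 1 := by
        apply ContinuousOn.intervalIntegrable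
        apply continuousOn_finset_sum
        intro k _
        exact (hcont (l k - 1 - l N)).const_smul (c k)
      have hJ : (∫ t in y..(1:ℝ), (t ^ m - ∑ k ∈ Finset.range N, c k * t ^ (l k)) * t ^ (-1 - l N))
          = (∫ t in y..(1:ℝ), t ^ (m - 1 - l N))
            - ∑ k ∈ Finset.range N, c k * ∫ t in y..(1:ℝ), t ^ (l k - 1 - l N) := by
        have e1 : ∀ k ∈ Finset.range N, c k * ∫ t in y..(1:ℝ), t ^ (l k - 1 - l N)
            = ∫ t in y..(1:ℝ), c k * t ^ (l k - 1 - l N) :=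
          fun k _ => (intervalIntegral.integral_const_mul _ _).symm
        rw [Finset.sum_congr rfl e1,
          ← intervalIntegral.integral_finset_sum (fun k _ => (hInt (l k - 1 - l N)).const_mul (c k)),
          ← intervalIntegral.integral_sub (hInt (m - 1 - l N)) hIntSum]
        apply intervalIntegral.integral_congr
        intro t ht
        rw [huIcc] at ht
        have ht0 : 0 < t := hpos t ht
        have hmul : ∀ a : ℝ, t ^ a * t ^ (-1 - l N) = t ^ (a - 1 - l N) := fun a => by
          rw [← Real.rpow_add ht0]; ring_nf
        simp only [sub_mul, Finset.sum_mul]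
        rw [hmul m]
        congr 1
        apply Finset.sum_congr rfl
        intro k _
        rw [mul_assoc, hmul (l k)]
      -- key integral values
      have km : (l N - m) * (y ^ (l N) * ∫ t in y..(1:ℝ), t ^ (m - 1 - l N)) = y ^ m - y ^ (l N) :=
        key_int hy0 (Ne.symm (hne N))
      have kk : ∀ k ∈ Finset.range N,
          (l N - l k) * (y ^ (l N) * ∫ t in y..(1:ℝ), t ^ (l k - 1 - l N)) = y ^ (l k) - y ^ (l N) := by
        intro k hk
        refine key_int hy0 fun hEq => ?_
        exact absurd (hinj hEq) (Finset.mem_range.mp hk).ne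
      have hlkN : ∀ k ∈ Finset.range N, l N - l k ≠ 0 := by
        intro k hk
        refine sub_ne_zero.mpr fun hEq => ?_
        exact absurd (hinj hEq.symm) (Finset.mem_range.mp hk).ne
      -- the identity
      have hIdent : y ^ m - ∑ k ∈ Finset.range (N+1),
            (if k = N then 1 - ∑ j ∈ Finset.range N, c j * r j else c k * r k) * y ^ (l k)
          = (l N - m) * (y ^ (l N) *
              ∫ t in y..(1:ℝ), (t ^ m - ∑ k ∈ Finset.range N, c k * t ^ (l k)) * t ^ (-1 - l N)) := by
        have e2 : (l N - m) * (y ^ (l N) *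
              ∫ t in y..(1:ℝ), (t ^ m - ∑ k ∈ Finset.range N, c k * t ^ (l k)) * t ^ (-1 - l N))
            = (y ^ m - y ^ (l N)) - ∑ k ∈ Finset.range N, c k * r k * (y ^ (l k) - y ^ (l N)) := by
          rw [hJ, mul_sub, Finset.mul_sum, mul_sub, Finset.mul_sum, ← km]
          congr 1
          apply Finset.sum_congr rfl
          intro k hk
          rw [← kk k hk]
          have h3 := hlkN k hk
          have hr : r k * (l N - l k) = l N - m := by simp only [hrdef]; exact div_mul_cancel₀ _ h3
          linear_combination (-(c k * (y ^ (l N) * ∫ t in y..(1:ℝ), t ^ (l k - 1 - l N)))) * hr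
        rw [e2, Finset.sum_range_succ, if_pos rfl]
        have e3 : ∑ k ∈ Finset.range N,
            (if k = N then 1 - ∑ j ∈ Finset.range N, c j * r j else c k * r k) * y ^ (l k)
            = ∑ k ∈ Finset.range N, c k * r k * y ^ (l k) := by
          apply Finset.sum_congr rfl
          intro k hk
          rw [if_neg (Finset.mem_range.mp hk).ne]
        rw [e3]
        have e4 : ∑ k ∈ Finset.range N, c k * r k * (y ^ (l k) - y ^ (l N))
            = ∑ k ∈ Finset.range N, c k * r k * y ^ (l k)
              - (∑ k ∈ Finset.range N, c k * r k) * y ^ (l N) := by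
          rw [Finset.sum_mul, ← Finset.sum_sub_distrib]
          apply Finset.sum_congr rfl
          intro k _
          ring
        rw [e4]
        ring
      rw [hIdent]
      -- now the bound
      have k0 : l N * (y ^ (l N) * ∫ t in y..(1:ℝ), t ^ (-1 - l N)) = 1 - y ^ (l N) := by
        have := key_int (a := 0) (l := l N) hy0 (hl N).ne
        simp only [sub_zero, zero_sub, Real.rpow_zero] at this
        exact this
      have hyl1 : y ^ (l N) ≤ 1 := Real.rpow_le_one hy.1 hy1 (hl N).le
      have hylpos : 0 < y ^ (l N) := Real.rpow_pos_of_pos hy0 _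
      have hI0 : y ^ (l N) * ∫ t in y..(1:ℝ), t ^ (-1 - l N) = (1 - y ^ (l N)) / l N := by
        rw [eq_div_iff (hl N).ne']
        linarith [k0]
      have hI0nn : 0 ≤ ∫ t in y..(1:ℝ), t ^ (-1 - l N) := by
        have h5 : 0 ≤ (1 - y ^ (l N)) / l N := div_nonneg (by linarith) (hl N).le
        nlinarith [hI0]
      have hJb : |∫ t in y..(1:ℝ), (t ^ m - ∑ k ∈ Finset.range N, c k * t ^ (l k)) * t ^ (-1 - l N)|
          ≤ B * ∫ t in y..(1:ℝ), t ^ (-1 - l N) := by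
        rw [← Real.norm_eq_abs]
        have hgInt : IntervalIntegrable (fun t : ℝ => B * t ^ (-1 - l N)) volume y 1 :=
          (hInt (-1 - l N)).const_mul B
        have hb := intervalIntegral.norm_integral_le_of_norm_le (μ := volume)
          (f := fun t : ℝ => (t ^ m - ∑ k ∈ Finset.range N, c k * t ^ (l k)) * t ^ (-1 - l N))
          (g := fun t : ℝ => B * t ^ (-1 - l N)) (a := y) (b := 1) hy1 ?_ hgInt
        · refine hb.trans ?_
          rw [intervalIntegral.integral_const_mul]
        · apply Filter.Eventually.of_forall
          intro t ht
          have ht0 : 0 < t := lt_trans hy0 ht.1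
          have htmem : t ∈ Set.Icc (0:ℝ) 1 := ⟨ht0.le, ht.2⟩
          rw [Real.norm_eq_abs, abs_mul, abs_of_nonneg (Real.rpow_nonneg ht0.le _)]
          exact mul_le_mul_of_nonneg_right (hc t htmem) (Real.rpow_nonneg ht0.le _)
      rw [Finset.prod_range_succ, abs_mul, abs_mul, abs_of_nonneg hylpos.le]
      have final : |l N - m| * (y ^ (l N) * |∫ t in y..(1:ℝ),
            (t ^ m - ∑ k ∈ Finset.range N, c k * t ^ (l k)) * t ^ (-1 - l N)|)
          ≤ B * (|m - l N| / l N) := by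
        have h6 : y ^ (l N) * |∫ t in y..(1:ℝ),
            (t ^ m - ∑ k ∈ Finset.range N, c k * t ^ (l k)) * t ^ (-1 - l N)|
            ≤ y ^ (l N) * (B * ∫ t in y..(1:ℝ), t ^ (-1 - l N)) :=
          mul_le_mul_of_nonneg_left hJb hylpos.le
        have h7 : y ^ (l N) * (B * ∫ t in y..(1:ℝ), t ^ (-1 - l N))
            = B * ((1 - y ^ (l N)) / l N) := by
          rw [← hI0]; ring
        have h8 : |l N - m| * (y ^ (l N) * |∫ t in y..(1:ℝ),
            (t ^ m - ∑ k ∈ Finset.range N, c k * t ^ (l k)) * t ^ (-1 - l N)|)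
            ≤ |l N - m| * (B * ((1 - y ^ (l N)) / l N)) := by
          rw [← h7]
          exact mul_le_mul_of_nonneg_left (h7 ▸ h6) (abs_nonneg _)
        refine h8.trans ?_
        rw [abs_sub_comm]
        have h10 : (1 - y ^ (l N)) / l N ≤ 1 / l N :=
          (div_le_div_iff_of_pos_right (hl N)).mpr (by linarith)
        calc |m - l N| * (B * ((1 - y ^ (l N)) / l N))
            ≤ |m - l N| * (B * (1 / l N)) :=
              mul_le_mul_of_nonneg_left (mul_le_mul_of_nonneg_left h10 hB) (abs_nonneg _)
          _ = B * (|m - l N| / l N) := by ring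
      exact final

lemma prod_squeeze (f : ℕ → ℝ) (hf : ∀ k, 0 ≤ f k) (K : ℕ) (g : ℕ → ℝ)
    (hg : ∀ N, K ≤ N → ∏ k ∈ Finset.range N, f k ≤ g N)
    (hg0 : Tendsto g atTop (𝓝 0)) :
    Tendsto (fun N => ∏ k ∈ Finset.range N, f k) atTop (𝓝 0) :=
  tendsto_of_tendsto_of_tendsto_of_le_of_le' tendsto_const_nhds hg0
    (Filter.Eventually.of_forall fun N => Finset.prod_nonneg fun k _ => hf k)
    (eventually_atTop.mpr ⟨K, hg⟩)

lemma prod_tendsto_zero_of_atTop (l : ℕ → ℝ) (hl : ∀ k, 0 < l k)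
    (htop : Tendsto l atTop atTop) (hdiv : ¬ Summable (fun k => 1 / l k))
    (s : ℝ) (hs : 0 < s) :
    Tendsto (fun N => ∏ k ∈ Finset.range N, (|s - l k| / l k)) atTop (𝓝 0) := by
  obtain ⟨K, hK⟩ := eventually_atTop.mp (htop.eventually_gt_atTop s)
  have hf : ∀ k, 0 ≤ |s - l k| / l k := fun k => div_nonneg (abs_nonneg _) (hl k).le
  set S : ℕ → ℝ := fun N => ∑ k ∈ Finset.range N, 1 / l k with hSdef
  have hS : Tendsto S atTop atTop := by
    exact (not_summable_iff_tendsto_nat_atTop_of_nonneg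
      (fun k => div_nonneg zero_le_one (hl k).le)).mp hdiv
  set C : ℝ := ∏ k ∈ Finset.range K, (|s - l k| / l k) with hCdef
  have hC : 0 ≤ C := Finset.prod_nonneg fun k _ => hf k
  have hbound : ∀ N, K ≤ N →
      ∏ k ∈ Finset.range N, (|s - l k| / l k) ≤ C * Real.exp (-(s * (S N - S K))) := by
    intro N hN
    rw [← Finset.prod_range_mul_prod_Ico _ hN]
    have h1 : ∏ k ∈ Finset.Ico K N, (|s - l k| / l k)
        ≤ ∏ k ∈ Finset.Ico K N, Real.exp (-(s / l k)) := by
      apply Finset.prod_le_prod (fun k _ => hf k)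
      intro k hk
      have hks := hK k (Finset.mem_Ico.mp hk).1
      have h2 : |s - l k| / l k = (-(s / l k)) + 1 := by
        rw [abs_of_neg (by linarith), neg_div, sub_div, div_self (hl k).ne']
        ring
      rw [h2]
      exact Real.add_one_le_exp _
    refine (mul_le_mul_of_nonneg_left h1 hC).trans_eq ?_
    congr 1
    rw [← Real.exp_sum]
    congr 1
    rw [hSdef, ← Finset.sum_Ico_eq_sub _ hN, ← neg_mul, Finset.mul_sum]
    apply Finset.sum_congr rfl
    intro k _
    field_simp
  apply prod_squeeze _ hf K _ hbound
  have h1 : Tendsto (fun N => s * (S N - S K)) atTop atTop := by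
    apply Tendsto.const_mul_atTop hs
    exact tendsto_atTop_add_const_right _ (-(S K)) hS
  have h2 : Tendsto (fun N => Real.exp (-(s * (S N - S K)))) atTop (𝓝 0) :=
    Real.tendsto_exp_atBot.comp (tendsto_neg_atTop_atBot.comp h1)
  have := h2.const_mul C
  simpa using this

lemma prod_tendsto_zero_of_lim (l : ℕ → ℝ) (hl : ∀ k, 0 < l k) (L : ℝ) (hL : 0 < L)
    (hlim : Tendsto l atTop (𝓝 L)) (s : ℝ) (hs : 0 < s) (hs2 : s < 2 * L) :
    Tendsto (fun N => ∏ k ∈ Finset.range N, (|s - l k| / l k)) atTop (𝓝 0) := by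
  have hf : ∀ k, 0 ≤ |s - l k| / l k := fun k => div_nonneg (abs_nonneg _) (hl k).le
  set ρ : ℝ := |s - L| / L with hρdef
  have hρ0 : 0 ≤ ρ := div_nonneg (abs_nonneg _) hL.le
  have hρ1 : ρ < 1 := by
    rw [hρdef, div_lt_one hL, abs_lt]
    exact ⟨by linarith, by linarith⟩
  set ρ' : ℝ := (ρ + 1) / 2 with hρ'def
  have hρ'0 : 0 ≤ ρ' := by rw [hρ'def]; linarith
  have hρ'1 : ρ' < 1 := by rw [hρ'def]; linarith
  have hρρ' : ρ < ρ' := by rw [hρ'def]; linarith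
  have hterm : Tendsto (fun k => |s - l k| / l k) atTop (𝓝 ρ) :=
    ((tendsto_const_nhds.sub hlim).abs).div hlim hL.ne'
  obtain ⟨K, hK⟩ := eventually_atTop.mp (hterm.eventually_lt_const hρρ')
  set C : ℝ := ∏ k ∈ Finset.range K, (|s - l k| / l k) with hCdef
  have hC : 0 ≤ C := Finset.prod_nonneg fun k _ => hf k
  apply prod_squeeze _ hf K (fun N => C * ρ' ^ (N - K))
  · intro N hN
    rw [← Finset.prod_range_mul_prod_Ico _ hN]
    have h1 : ∏ k ∈ Finset.Ico K N, (|s - l k| / l k) ≤ ρ' ^ (N - K) := by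
      rw [← Nat.card_Ico K N, ← Finset.prod_const]
      exact Finset.prod_le_prod (fun k _ => hf k)
        (fun k hk => (hK k (Finset.mem_Ico.mp hk).1).le)
    exact mul_le_mul_of_nonneg_left h1 hC
  · have h2 : Tendsto (fun N : ℕ => ρ' ^ (N - K)) atTop (𝓝 0) :=
      (tendsto_pow_atTop_nhds_zero_of_lt_one hρ'0 hρ'1).comp (tendsto_sub_atTop_nat K)
    simpa using h2.const_mul C

lemma integrable_exp_neg {Ω : Type*} [MeasurableSpace Ω] (ℙ : Measure Ω) [IsProbabilityMeasure ℙ]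
    (X : Ω → ℝ) (hX : Measurable X) (hX0 : ∀ ω, 0 ≤ X ω) (a : ℝ) (ha : 0 ≤ a) :
    Integrable (fun ω => Real.exp (-a * X ω)) ℙ := by
  apply Integrable.mono' (integrable_const 1)
  · exact ((hX.const_mul (-a)).exp).aestronglyMeasurable
  · apply Filter.Eventually.of_forall
    intro ω
    rw [Real.norm_eq_abs, abs_of_nonneg (Real.exp_pos _).le, Real.exp_le_one_iff]
    have := hX0 ω
    nlinarith

lemma exp_neg_mem_Icc {X : ℝ} (hX : 0 ≤ X) : Real.exp (-X) ∈ Set.Icc (0:ℝ) 1 :=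
  ⟨(Real.exp_pos _).le, by rw [Real.exp_le_one_iff]; linarith⟩

lemma step_bound {Ω : Type*} [MeasurableSpace Ω] (ℙ : Measure Ω) [IsProbabilityMeasure ℙ]
    (X : Ω → ℝ) (hX : Measurable X) (hX0 : ∀ ω, 0 ≤ X ω)
    (l : ℕ → ℝ) (hl : ∀ k, 0 < l k) (s : ℝ) (hs : 0 < s) (N : ℕ) (c : ℕ → ℝ) (ε : ℝ)
    (hc : ∀ y ∈ Set.Icc (0:ℝ) 1, |y ^ s - ∑ k ∈ Finset.range N, c k * y ^ (l k)| ≤ ε) :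
    |(∫ ω, Real.exp (-s * X ω) ∂ℙ)
      - ∑ k ∈ Finset.range N, c k * ∫ ω, Real.exp (-(l k) * X ω) ∂ℙ| ≤ ε := by
  have hInt : ∀ a : ℝ, 0 ≤ a → Integrable (fun ω => Real.exp (-a * X ω)) ℙ :=
    integrable_exp_neg ℙ X hX hX0
  have hIntSum : Integrable (fun ω => ∑ k ∈ Finset.range N, c k * Real.exp (-(l k) * X ω)) ℙ :=
    integrable_finset_sum _ (fun k _ => ((hInt (l k) (hl k).le).const_mul (c k)))
  have hsum : ∑ k ∈ Finset.range N, c k * ∫ ω, Real.exp (-(l k) * X ω) ∂ℙ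
      = ∫ ω, ∑ k ∈ Finset.range N, c k * Real.exp (-(l k) * X ω) ∂ℙ := by
    rw [integral_finset_sum _ (fun k _ => ((hInt (l k) (hl k).le).const_mul (c k)))]
    exact Finset.sum_congr rfl fun k _ => (MeasureTheory.integral_const_mul _ _).symm
  rw [hsum, ← integral_sub (hInt s hs.le) hIntSum, ← Real.norm_eq_abs]
  have hbd := MeasureTheory.norm_integral_le_of_norm_le_const (μ := ℙ)
    (f := fun ω => Real.exp (-s * X ω) - ∑ k ∈ Finset.range N, c k * Real.exp (-(l k) * X ω))
    (C := ε) ?_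
  · simpa using hbd
  · apply Filter.Eventually.of_forall
    intro ω
    have hy := exp_neg_mem_Icc (hX0 ω)
    have key := hc _ hy
    have e : ∀ a : ℝ, (Real.exp (-X ω)) ^ a = Real.exp (-a * X ω) := fun a => by
      rw [← Real.exp_mul]; congr 1; ring
    simp only [e] at key
    rw [Real.norm_eq_abs]
    exact key

lemma transfer {Ω₁ Ω₂ : Type*} [MeasurableSpace Ω₁] [MeasurableSpace Ω₂]
    (ℙ₁ : Measure Ω₁) (ℙ₂ : Measure Ω₂)
    [IsProbabilityMeasure ℙ₁] [IsProbabilityMeasure ℙ₂]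
    (X₁ : Ω₁ → ℝ) (X₂ : Ω₂ → ℝ) (hX₁ : Measurable X₁) (hX₂ : Measurable X₂)
    (hX₁0 : ∀ ω, 0 ≤ X₁ ω) (hX₂0 : ∀ ω, 0 ≤ X₂ ω)
    (l : ℕ → ℝ) (hl : ∀ k, 0 < l k) (hinj : Function.Injective l)
    (hZ : ∀ k, ∫ ω, Real.exp (-(l k) * X₁ ω) ∂ℙ₁ = ∫ ω, Real.exp (-(l k) * X₂ ω) ∂ℙ₂)
    (s : ℝ) (hs : 0 < s)
    (hprod : Tendsto (fun N => ∏ k ∈ Finset.range N, (|s - l k| / l k)) atTop (𝓝 0)) :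
    ∫ ω, Real.exp (-s * X₁ ω) ∂ℙ₁ = ∫ ω, Real.exp (-s * X₂ ω) ∂ℙ₂ := by
  by_cases hmem : ∃ k, l k = s
  · obtain ⟨k, hk⟩ := hmem
    rw [← hk]
    exact hZ k
  push_neg at hmem
  set A₁ := ∫ ω, Real.exp (-s * X₁ ω) ∂ℙ₁ with hA₁
  set A₂ := ∫ ω, Real.exp (-s * X₂ ω) ∂ℙ₂ with hA₂
  suffices h : ∀ ε > (0:ℝ), |A₁ - A₂| ≤ 2 * ε by
    by_contra hne2
    have h1 : 0 < |A₁ - A₂| := abs_pos.mpr (sub_ne_zero.mpr hne2)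
    have := h (|A₁ - A₂| / 3) (by linarith)
    linarith
  intro ε hε
  obtain ⟨N, hN⟩ := (hprod.eventually_lt_const hε).exists
  obtain ⟨c, hc⟩ := vg_approx l hl hinj s hs hmem N
  have hc' : ∀ y ∈ Set.Icc (0:ℝ) 1,
      |y ^ s - ∑ k ∈ Finset.range N, c k * y ^ (l k)| ≤ ε :=
    fun y hy => (hc y hy).trans hN.le
  have e1 := step_bound ℙ₁ X₁ hX₁ hX₁0 l hl s hs N c ε hc'
  have e2 := step_bound ℙ₂ X₂ hX₂ hX₂0 l hl s hs N c ε hc'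
  have e3 : ∑ k ∈ Finset.range N, c k * ∫ ω, Real.exp (-(l k) * X₁ ω) ∂ℙ₁
      = ∑ k ∈ Finset.range N, c k * ∫ ω, Real.exp (-(l k) * X₂ ω) ∂ℙ₂ :=
    Finset.sum_congr rfl fun k _ => by rw [hZ k]
  set S₁ := ∑ k ∈ Finset.range N, c k * ∫ ω, Real.exp (-(l k) * X₁ ω) ∂ℙ₁
  set S₂ := ∑ k ∈ Finset.range N, c k * ∫ ω, Real.exp (-(l k) * X₂ ω) ∂ℙ₂
  have e4 : A₁ - A₂ = (A₁ - S₁) - (A₂ - S₂) := by rw [e3]; ring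
  rw [e4, sub_eq_add_neg]
  refine (abs_add_le _ _).trans ?_
  rw [abs_neg]
  linarith

lemma integrable_comp_exp_neg {Ω : Type*} [MeasurableSpace Ω] (ℙ : Measure Ω)
    [IsProbabilityMeasure ℙ] (X : Ω → ℝ) (hX : Measurable X) (hX0 : ∀ ω, 0 ≤ X ω)
    (g : ℝ → ℝ) (hg : Continuous g) :
    Integrable (fun ω => g (Real.exp (-X ω))) ℙ := by
  obtain ⟨M, hM⟩ := (isCompact_Icc : IsCompact (Set.Icc (0:ℝ) 1)).exists_bound_of_continuousOn
    hg.continuousOn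
  apply Integrable.mono' (integrable_const M)
  · exact (hg.measurable.comp ((hX.neg).exp)).aestronglyMeasurable
  · apply Filter.Eventually.of_forall
    intro ω
    exact hM _ ⟨(Real.exp_pos _).le, by rw [Real.exp_le_one_iff]; linarith [hX0 ω]⟩

lemma poly_near_bound {Ω : Type*} [MeasurableSpace Ω] (ℙ : Measure Ω) [IsProbabilityMeasure ℙ]
    (X : Ω → ℝ) (hX : Measurable X) (hX0 : ∀ ω, 0 ≤ X ω)
    (g : ℝ → ℝ) (hg : Continuous g) (p : Polynomial ℝ) (ε : ℝ)
    (hp : ∀ y ∈ Set.Icc (0:ℝ) 1, |p.eval y - g y| < ε) :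
    |(∫ ω, g (Real.exp (-X ω)) ∂ℙ) - ∫ ω, p.eval (Real.exp (-X ω)) ∂ℙ| ≤ ε := by
  rw [← integral_sub (integrable_comp_exp_neg ℙ X hX hX0 g hg)
    (integrable_comp_exp_neg ℙ X hX hX0 _ (Polynomial.continuous p)), ← Real.norm_eq_abs]
  have hb := MeasureTheory.norm_integral_le_of_norm_le_const (μ := ℙ)
    (f := fun ω => g (Real.exp (-X ω)) - Polynomial.eval (Real.exp (-X ω)) p) (C := ε) ?_
  · simpa using hb
  · apply Filter.Eventually.of_forall
    intro ω
    rw [Real.norm_eq_abs, abs_sub_comm]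
    exact (hp _ ⟨(Real.exp_pos _).le, by rw [Real.exp_le_one_iff]; linarith [hX0 ω]⟩).le

lemma cont_eq {Ω₁ Ω₂ : Type*} [MeasurableSpace Ω₁] [MeasurableSpace Ω₂]
    (ℙ₁ : Measure Ω₁) (ℙ₂ : Measure Ω₂)
    [IsProbabilityMeasure ℙ₁] [IsProbabilityMeasure ℙ₂]
    (X₁ : Ω₁ → ℝ) (X₂ : Ω₂ → ℝ) (hX₁ : Measurable X₁) (hX₂ : Measurable X₂)
    (hX₁0 : ∀ ω, 0 ≤ X₁ ω) (hX₂0 : ∀ ω, 0 ≤ X₂ ω)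
    (hZall : ∀ s : ℝ, 0 < s →
      ∫ ω, Real.exp (-s * X₁ ω) ∂ℙ₁ = ∫ ω, Real.exp (-s * X₂ ω) ∂ℙ₂)
    (g : ℝ → ℝ) (hg : Continuous g) :
    ∫ ω, g (Real.exp (-X₁ ω)) ∂ℙ₁ = ∫ ω, g (Real.exp (-X₂ ω)) ∂ℙ₂ := by
  -- monomials
  have hmono : ∀ i : ℕ,
      ∫ ω, (Real.exp (-X₁ ω)) ^ i ∂ℙ₁ = ∫ ω, (Real.exp (-X₂ ω)) ^ i ∂ℙ₂ := by
    intro i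
    rcases Nat.eq_zero_or_pos i with hi | hi
    · subst hi; simp
    · have e : ∀ X : ℝ, (Real.exp (-X)) ^ i = Real.exp (-(i:ℝ) * X) := fun X => by
        rw [← Real.exp_nat_mul]; congr 1; ring
      simp only [e]
      exact hZall i (by exact_mod_cast hi)
  -- polynomials
  have hpoly : ∀ p : Polynomial ℝ,
      ∫ ω, p.eval (Real.exp (-X₁ ω)) ∂ℙ₁ = ∫ ω, p.eval (Real.exp (-X₂ ω)) ∂ℙ₂ := by
    intro p
    have ev : ∀ x : ℝ, p.eval x = ∑ i ∈ Finset.range (p.natDegree + 1), p.coeff i * x ^ i :=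
      fun x => p.eval_eq_sum_range (x := x)
    simp only [ev]
    rw [integral_finset_sum _ (fun i _ => integrable_comp_exp_neg ℙ₁ X₁ hX₁ hX₁0
        (fun x => p.coeff i * x ^ i) (continuous_const.mul (continuous_pow i))),
      integral_finset_sum _ (fun i _ => integrable_comp_exp_neg ℙ₂ X₂ hX₂ hX₂0
        (fun x => p.coeff i * x ^ i) (continuous_const.mul (continuous_pow i)))]
    refine Finset.sum_congr rfl fun i _ => ?_
    rw [MeasureTheory.integral_const_mul, MeasureTheory.integral_const_mul, hmono i]
  -- continuous functions via Weierstrass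
  have key : ∀ ε > (0:ℝ),
      |(∫ ω, g (Real.exp (-X₁ ω)) ∂ℙ₁) - ∫ ω, g (Real.exp (-X₂ ω)) ∂ℙ₂| ≤ 2 * ε := by
    intro ε hε
    obtain ⟨p, hp⟩ := exists_polynomial_near_of_continuousOn 0 1 g hg.continuousOn ε hε
    have h1 := poly_near_bound ℙ₁ X₁ hX₁ hX₁0 g hg p ε hp
    have h2 := poly_near_bound ℙ₂ X₂ hX₂ hX₂0 g hg p ε hp
    have h3 := hpoly p
    set a1 := ∫ ω, g (Real.exp (-X₁ ω)) ∂ℙ₁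
    set a2 := ∫ ω, g (Real.exp (-X₂ ω)) ∂ℙ₂
    set b1 := ∫ ω, p.eval (Real.exp (-X₁ ω)) ∂ℙ₁
    set b2 := ∫ ω, p.eval (Real.exp (-X₂ ω)) ∂ℙ₂
    have e4 : a1 - a2 = (a1 - b1) - (a2 - b2) := by rw [h3]; ring
    rw [e4, sub_eq_add_neg]
    refine (abs_add_le _ _).trans ?_
    rw [abs_neg]
    linarith
  by_contra hne2
  have h1 : 0 < |(∫ ω, g (Real.exp (-X₁ ω)) ∂ℙ₁) - ∫ ω, g (Real.exp (-X₂ ω)) ∂ℙ₂| :=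
    abs_pos.mpr (sub_ne_zero.mpr hne2)
  have := key (|(∫ ω, g (Real.exp (-X₁ ω)) ∂ℙ₁) - ∫ ω, g (Real.exp (-X₂ ω)) ∂ℙ₂| / 3)
    (by linarith)
  linarith

theorem cdf_unique_of_laplace_on_muntz_sequence
    {Ω₁ Ω₂ : Type*} [MeasurableSpace Ω₁] [MeasurableSpace Ω₂]
    (ℙ₁ : Measure Ω₁) (ℙ₂ : Measure Ω₂)
    [IsProbabilityMeasure ℙ₁] [IsProbabilityMeasure ℙ₂]
    (X₁ : Ω₁ → ℝ) (X₂ : Ω₂ → ℝ) (hX₁ : Measurable X₁) (hX₂ : Measurable X₂)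
    (hX₁0 : ∀ ω, 0 ≤ X₁ ω) (hX₂0 : ∀ ω, 0 ≤ X₂ ω)
    (m : ℕ → ℝ) (hpos : ∀ i, 0 < m i) (hmono : StrictMono m)
    (hdiv : ¬ Summable (fun i => 1 / m i))
    (h : ∀ i, ∫ ω, Real.exp (-(m i) * X₁ ω) ∂ℙ₁ = ∫ ω, Real.exp (-(m i) * X₂ ω) ∂ℙ₂) :
    ∀ x : ℝ, ℙ₁ {ω | X₁ ω ≤ x} = ℙ₂ {ω | X₂ ω ≤ x} := by
  have hZall : ∀ s : ℝ, 0 < s →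
      ∫ ω, Real.exp (-s * X₁ ω) ∂ℙ₁ = ∫ ω, Real.exp (-s * X₂ ω) ∂ℙ₂ := by
    by_cases hbdd : BddAbove (Set.range m)
    · set L := ⨆ i, m i with hLdef
      have hmL : Tendsto m atTop (𝓝 L) := tendsto_atTop_ciSup hmono.monotone hbdd
      have hL : 0 < L := lt_of_lt_of_le (hpos 0) (le_ciSup hbdd 0)
      have ind : ∀ n : ℕ, ∀ s : ℝ, 0 < s → s < 2 ^ n * (2 * L) →
          ∫ ω, Real.exp (-s * X₁ ω) ∂ℙ₁ = ∫ ω, Real.exp (-s * X₂ ω) ∂ℙ₂ := by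
        intro n
        induction n with
        | zero =>
          intro s hs hs2
          refine transfer ℙ₁ ℙ₂ X₁ X₂ hX₁ hX₂ hX₁0 hX₂0 m hpos hmono.injective h s hs ?_
          exact prod_tendsto_zero_of_lim m hpos L hL hmL s hs (by simpa using hs2)
        | succ n ih =>
          intro s hs hs2
          set R := 2 ^ n * (2 * L) with hRdef
          have hR : 0 < R := by positivity
          set l' : ℕ → ℝ := fun k => R - R / ((k : ℝ) + 2) with hl'def
          have hdivpos : ∀ k : ℕ, 0 < R / ((k : ℝ) + 2) := fun k => by positivity
          have hdivlt : ∀ k : ℕ, R / ((k : ℝ) + 2) < R := by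
            intro k
            apply div_lt_self hR
            have := Nat.cast_nonneg (α := ℝ) k
            linarith
          have hl'pos : ∀ k, 0 < l' k := by
            intro k
            simp only [hl'def]
            linarith [hdivlt k]
          have hl'lt : ∀ k, l' k < R := by
            intro k
            simp only [hl'def]
            linarith [hdivpos k]
          have hl'mono : StrictMono l' := by
            intro a b hab
            simp only [hl'def]
            have hab' : (a:ℝ) < b := by exact_mod_cast hab
            have : R / ((b:ℝ) + 2) < R / ((a:ℝ) + 2) :=
              div_lt_div_of_pos_left hR (by positivity) (by linarith)
            linarith
          have hZl' : ∀ k, ∫ ω, Real.exp (-(l' k) * X₁ ω) ∂ℙ₁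
              = ∫ ω, Real.exp (-(l' k) * X₂ ω) ∂ℙ₂ :=
            fun k => ih (l' k) (hl'pos k) (hl'lt k)
          have hl'lim : Tendsto l' atTop (𝓝 R) := by
            have h4 : Tendsto (fun k : ℕ => R / ((k:ℝ) + 2)) atTop (𝓝 0) := by
              apply Tendsto.div_atTop tendsto_const_nhds
              exact tendsto_atTop_add_const_right _ 2 tendsto_natCast_atTop_atTop
            simpa using tendsto_const_nhds.sub h4
          refine transfer ℙ₁ ℙ₂ X₁ X₂ hX₁ hX₂ hX₁0 hX₂0 l' hl'pos hl'mono.injective hZl' s hs ?_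
          refine prod_tendsto_zero_of_lim l' hl'pos R hR hl'lim s hs ?_
          have : (2:ℝ) ^ (n+1) * (2 * L) = 2 * R := by rw [hRdef, pow_succ]; ring
          linarith [hs2, this]
      intro s hs
      obtain ⟨n, hn⟩ : ∃ n : ℕ, s / (2 * L) < 2 ^ n := pow_unbounded_of_one_lt _ one_lt_two
      refine ind n s hs ?_
      rw [div_lt_iff₀ (by positivity)] at hn
      linarith
    · have htop : Tendsto m atTop atTop :=
        tendsto_atTop_atTop_of_monotone' hmono.monotone hbdd
      intro s hs
      exact transfer ℙ₁ ℙ₂ X₁ X₂ hX₁ hX₂ hX₁0 hX₂0 m hpos hmono.injective h s hs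
        (prod_tendsto_zero_of_atTop m hpos htop hdiv s hs)
  have hm₁ : Measurable fun ω => Real.exp (-X₁ ω) := (hX₁.neg).exp
  have hm₂ : Measurable fun ω => Real.exp (-X₂ ω) := (hX₂.neg).exp
  have hνeq : ℙ₁.map (fun ω => Real.exp (-X₁ ω)) = ℙ₂.map (fun ω => Real.exp (-X₂ ω)) := by
    haveI i1 : IsProbabilityMeasure (ℙ₁.map (fun ω => Real.exp (-X₁ ω))) :=
      Measure.isProbabilityMeasure_map hm₁.aemeasurable
    haveI i2 : IsProbabilityMeasure (ℙ₂.map (fun ω => Real.exp (-X₂ ω))) :=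
      Measure.isProbabilityMeasure_map hm₂.aemeasurable
    apply ext_of_forall_lintegral_eq_of_IsFiniteMeasure
    intro f
    have hfm : Measurable fun x : ℝ => (f x : ENNReal) :=
      measurable_coe_nnreal_ennreal.comp f.continuous.measurable
    rw [lintegral_map hfm hm₁, lintegral_map hfm hm₂]
    have hInt₁ : Integrable (fun ω => ((f (Real.exp (-X₁ ω))) : ℝ)) ℙ₁ :=
      integrable_comp_exp_neg ℙ₁ X₁ hX₁ hX₁0 (fun x => (f x : ℝ))
        (NNReal.continuous_coe.comp f.continuous)
    have hInt₂ : Integrable (fun ω => ((f (Real.exp (-X₂ ω))) : ℝ)) ℙ₂ :=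
      integrable_comp_exp_neg ℙ₂ X₂ hX₂ hX₂0 (fun x => (f x : ℝ))
        (NNReal.continuous_coe.comp f.continuous)
    rw [lintegral_coe_eq_integral _ hInt₁, lintegral_coe_eq_integral _ hInt₂]
    congr 1
    exact cont_eq ℙ₁ ℙ₂ X₁ X₂ hX₁ hX₂ hX₁0 hX₂0 hZall (fun x => (f x : ℝ))
      (NNReal.continuous_coe.comp f.continuous)
  intro x
  have hs₁ : {ω | X₁ ω ≤ x} = (fun ω => Real.exp (-X₁ ω)) ⁻¹' (Set.Ici (Real.exp (-x))) := by
    ext ω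
    simp only [Set.mem_setOf_eq, Set.mem_preimage, Set.mem_Ici, Real.exp_le_exp, neg_le_neg_iff]
  have hs₂ : {ω | X₂ ω ≤ x} = (fun ω => Real.exp (-X₂ ω)) ⁻¹' (Set.Ici (Real.exp (-x))) := by
    ext ω
    simp only [Set.mem_setOf_eq, Set.mem_preimage, Set.mem_Ici, Real.exp_le_exp, neg_le_neg_iff]
  rw [hs₁, hs₂, ← Measure.map_apply hm₁ measurableSet_Ici,
    ← Measure.map_apply hm₂ measurableSet_Ici, hνeq]
end

section
/- Any joint distribution H of two nonnegative random variables X, Y is uniquely determined by the values E[exp(-iX - jY)] for positive integers i, j; that is, if two such joint distributions have equal bivariate Laplace–Stieltjes transforms at all lattice points (i,j) ∈ ℕ² with i,j ≥ 1, then they coincide. -/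
open MeasureTheory Real Set
open scoped ENNReal NNReal

section Aux

def KSq : Set (ℝ × ℝ) := Set.Icc (0:ℝ) 1 ×ˢ Set.Icc (0:ℝ) 1

/-- Two probability measures on the compact square `[0,1] × [0,1]` that have equal
mixed moments of orders `(i,j)` with `i, j ≥ 1` assign equal mass to upper-right
rectangles `[a,1] × [b,1]` with `a, b > 0`. -/
lemma aux_measure_rect_eq (μ₁ μ₂ : Measure KSq)
    [IsProbabilityMeasure μ₁] [IsProbabilityMeasure μ₂]
    (hmom : ∀ i j : ℕ, 1 ≤ i → 1 ≤ j →
      ∫ z : KSq, (z : ℝ × ℝ).1 ^ i * (z : ℝ × ℝ).2 ^ j ∂μ₁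
        = ∫ z : KSq, (z : ℝ × ℝ).1 ^ i * (z : ℝ × ℝ).2 ^ j ∂μ₂)
    (a b : ℝ) (ha : 0 < a) (hb : 0 < b) :
    μ₁ {z : KSq | a ≤ (z : ℝ × ℝ).1 ∧ b ≤ (z : ℝ × ℝ).2}
      = μ₂ {z : KSq | a ≤ (z : ℝ × ℝ).1 ∧ b ≤ (z : ℝ × ℝ).2} := by
  haveI : CompactSpace KSq := isCompact_iff_compactSpace.mp (isCompact_Icc.prod isCompact_Icc)
  -- the density function
  have hz1 : ∀ z : KSq, (0:ℝ) ≤ (z : ℝ × ℝ).1 := fun z => z.2.1.1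
  have hz2 : ∀ z : KSq, (0:ℝ) ≤ (z : ℝ × ℝ).2 := fun z => z.2.2.1
  have hz1' : ∀ z : KSq, (z : ℝ × ℝ).1 ≤ 1 := fun z => z.2.1.2
  have hz2' : ∀ z : KSq, (z : ℝ × ℝ).2 ≤ 1 := fun z => z.2.2.2
  set ρ : KSq → ℝ≥0 := fun z => ⟨(z : ℝ × ℝ).1 * (z : ℝ × ℝ).2,
    mul_nonneg (hz1 z) (hz2 z)⟩ with hρ
  have hρ_cont : Continuous fun z : KSq => ((ρ z : ℝ)) := by
    exact (continuous_fst.comp continuous_subtype_val).mul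
      (continuous_snd.comp continuous_subtype_val)
  have hρ_cont' : Continuous ρ := Continuous.subtype_mk hρ_cont _
  have hρ_meas : Measurable ρ := hρ_cont'.measurable
  set ν₁ : Measure KSq := μ₁.withDensity (fun z => (ρ z : ℝ≥0∞)) with hν₁
  set ν₂ : Measure KSq := μ₂.withDensity (fun z => (ρ z : ℝ≥0∞)) with hν₂
  have hρ_meas' : Measurable fun z => (ρ z : ℝ≥0∞) := hρ_meas.coe_nnreal_ennreal
  have hfin : ∀ (μ : Measure KSq) [IsProbabilityMeasure μ],
      IsFiniteMeasure (μ.withDensity (fun z => (ρ z : ℝ≥0∞))) := by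
    intro μ _
    refine isFiniteMeasure_withDensity (ne_of_lt ?_)
    calc ∫⁻ z, (ρ z : ℝ≥0∞) ∂μ ≤ ∫⁻ _, 1 ∂μ := by
          refine lintegral_mono fun z => ?_
          simp only [ENNReal.coe_le_one_iff]
          exact mul_le_one₀ (hz1' z) (hz2 z) (hz2' z)
      _ < ⊤ := by simp
  haveI : IsFiniteMeasure ν₁ := hfin μ₁
  haveI : IsFiniteMeasure ν₂ := hfin μ₂
  -- moments of ν agree for all i j (including 0)
  have hνmom : ∀ i j : ℕ,
      ∫ z : KSq, (z : ℝ × ℝ).1 ^ i * (z : ℝ × ℝ).2 ^ j ∂ν₁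
        = ∫ z : KSq, (z : ℝ × ℝ).1 ^ i * (z : ℝ × ℝ).2 ^ j ∂ν₂ := by
    intro i j
    have key : ∀ (μ : Measure KSq),
        ∫ z : KSq, (z : ℝ × ℝ).1 ^ i * (z : ℝ × ℝ).2 ^ j
            ∂(μ.withDensity (fun z => (ρ z : ℝ≥0∞)))
          = ∫ z : KSq, (z : ℝ × ℝ).1 ^ (i+1) * (z : ℝ × ℝ).2 ^ (j+1) ∂μ := by
      intro μ
      rw [integral_withDensity_eq_integral_smul hρ_meas]
      have hzz : ∀ z : KSq, ρ z • ((z : ℝ × ℝ).1 ^ i * (z : ℝ × ℝ).2 ^ j)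
          = (z : ℝ × ℝ).1 ^ (i+1) * (z : ℝ × ℝ).2 ^ (j+1) := by
        intro z
        rw [NNReal.smul_def]
        show ((z : ℝ × ℝ).1 * (z : ℝ × ℝ).2) * _ = _
        ring
      simp only [hzz]
    rw [hν₁, hν₂, key μ₁, key μ₂]
    exact hmom (i+1) (j+1) (by omega) (by omega)
  -- integrals of all continuous functions agree
  have hcont_eq : ∀ f : C(KSq, ℝ), ∫ z, f z ∂ν₁ = ∫ z, f z ∂ν₂ := by
    -- the coordinate functions
    set fstc : C(KSq, ℝ) := ⟨fun z => (z : ℝ × ℝ).1,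
      continuous_fst.comp continuous_subtype_val⟩ with hfstc
    set sndc : C(KSq, ℝ) := ⟨fun z => (z : ℝ × ℝ).2,
      continuous_snd.comp continuous_subtype_val⟩ with hsndc
    set A : Subalgebra ℝ C(KSq, ℝ) := Algebra.adjoin ℝ {fstc, sndc} with hA
    have hsep : A.SeparatesPoints := by
      intro z w hzw
      have : (z : ℝ × ℝ) ≠ (w : ℝ × ℝ) := fun hc => hzw (Subtype.ext hc)
      by_cases h1 : (z : ℝ × ℝ).1 = (w : ℝ × ℝ).1
      · have h2 : (z : ℝ × ℝ).2 ≠ (w : ℝ × ℝ).2 := by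
          intro h2; exact this (Prod.ext h1 h2)
        exact ⟨_, ⟨sndc, Algebra.subset_adjoin (by simp), rfl⟩, h2⟩
      · exact ⟨_, ⟨fstc, Algebra.subset_adjoin (by simp), rfl⟩, h1⟩
    have hdense : A.topologicalClosure = ⊤ :=
      ContinuousMap.subalgebra_topologicalClosure_eq_top_of_separatesPoints A hsep
    -- integration functionals are continuous
    have hint_cont : ∀ (ν : Measure KSq) [IsFiniteMeasure ν],
        Continuous fun f : C(KSq, ℝ) => ∫ z, f z ∂ν := by
      intro ν _
      refine (LipschitzWith.of_dist_le_mul (K := (ν Set.univ).toNNReal)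
        (fun f g => ?_)).continuous
      have h1 : ∫ z, f z ∂ν - ∫ z, g z ∂ν = ∫ z, (f - g) z ∂ν := by
        rw [← integral_sub]
        · simp
        · exact (BoundedContinuousFunction.mkOfCompact f).integrable ν
        · exact (BoundedContinuousFunction.mkOfCompact g).integrable ν
      rw [dist_eq_norm, h1]
      calc ‖∫ z, (f - g) z ∂ν‖
          = ‖∫ z, (BoundedContinuousFunction.mkOfCompact (f - g)) z ∂ν‖ := rfl
        _ ≤ (ν Set.univ).toReal * ‖BoundedContinuousFunction.mkOfCompact (f - g)‖ :=
            BoundedContinuousFunction.norm_integral_le_mul_norm ν _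
        _ = (ν Set.univ).toReal * ‖f - g‖ := by
            rw [BoundedContinuousFunction.norm_mkOfCompact]
        _ = ((ν Set.univ).toNNReal : ℝ) * dist f g := by
            rw [dist_eq_norm]; congr 1
    intro f
    have hclosed : IsClosed {f : C(KSq, ℝ) | ∫ z, f z ∂ν₁ = ∫ z, f z ∂ν₂} :=
      isClosed_eq (hint_cont ν₁) (hint_cont ν₂)
    have hAsub : (A : Set C(KSq, ℝ)) ⊆ {f : C(KSq, ℝ) | ∫ z, f z ∂ν₁ = ∫ z, f z ∂ν₂} := by
      intro g hg
      have hg' : g ∈ Subalgebra.toSubmodule A := hg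
      rw [hA, Algebra.adjoin_eq_span] at hg'
      refine Submodule.span_induction ?_ ?_ ?_ ?_ hg'
      · -- monomials
        intro m hm
        have : ∃ i j : ℕ, m = fstc ^ i * sndc ^ j := by
          refine Submonoid.closure_induction (fun u hu => ?_) ⟨0, 0, by simp⟩
            (fun u v _ _ ⟨i, j, hij⟩ ⟨i', j', hij'⟩ =>
              ⟨i + i', j + j', by rw [hij, hij']; ring⟩) hm
          rcases hu with hu | hu
          · exact ⟨1, 0, by simp [hu]⟩
          · exact ⟨0, 1, by simp [Set.eq_of_mem_singleton hu]⟩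
        obtain ⟨i, j, rfl⟩ := this
        have hfun : ∀ z : KSq, (fstc ^ i * sndc ^ j) z
            = (z : ℝ × ℝ).1 ^ i * (z : ℝ × ℝ).2 ^ j := by
          intro z; simp [hfstc, hsndc]
        show ∫ z, (fstc ^ i * sndc ^ j) z ∂ν₁ = ∫ z, (fstc ^ i * sndc ^ j) z ∂ν₂
        simp only [hfun]
        exact hνmom i j
      · simp
      · intro u v _ _ hu hv
        show ∫ z, (u + v) z ∂ν₁ = ∫ z, (u + v) z ∂ν₂
        have hi : ∀ (w : C(KSq, ℝ)) (ν : Measure KSq) [IsFiniteMeasure ν],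
            Integrable (fun z => w z) ν := fun w ν _ =>
          (BoundedContinuousFunction.mkOfCompact w).integrable ν
        simp only [ContinuousMap.add_apply]
        rw [integral_add (hi u ν₁) (hi v ν₁), integral_add (hi u ν₂) (hi v ν₂), hu, hv]
      · intro c u _ hu
        show ∫ z, (c • u) z ∂ν₁ = ∫ z, (c • u) z ∂ν₂
        simp only [ContinuousMap.smul_apply, smul_eq_mul]
        rw [integral_const_mul, integral_const_mul, hu]
    have hf : f ∈ closure (A : Set C(KSq, ℝ)) := by
      have : f ∈ A.topologicalClosure := by rw [hdense]; trivial
      exact this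
    exact closure_minimal hAsub hclosed hf
  -- hence ν₁ = ν₂
  have hν : ν₁ = ν₂ := by
    refine ext_of_forall_lintegral_eq_of_IsFiniteMeasure (fun f => ?_)
    have h1 : ∀ (ν : Measure KSq) [IsFiniteMeasure ν],
        ∫⁻ z, (f z : ℝ≥0∞) ∂ν ≠ ⊤ := fun ν _ =>
      (BoundedContinuousFunction.lintegral_lt_top_of_nnreal ν f).ne
    have h2 := BoundedContinuousFunction.toReal_lintegral_coe_eq_integral f ν₁
    have h3 := BoundedContinuousFunction.toReal_lintegral_coe_eq_integral f ν₂
    have h4 : ∫ z, (f z : ℝ) ∂ν₁ = ∫ z, (f z : ℝ) ∂ν₂ :=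
      hcont_eq ⟨fun z => (f z : ℝ), NNReal.continuous_coe.comp f.continuous⟩
    have := h2.trans (h4.trans h3.symm)
    exact (ENNReal.toReal_eq_toReal_iff' (h1 ν₁) (h1 ν₂)).mp this
  -- recover the rectangle mass
  set S : Set KSq := {z : KSq | a ≤ (z : ℝ × ℝ).1 ∧ b ≤ (z : ℝ × ℝ).2} with hS
  have hSmeas : MeasurableSet S := by
    have : S = Subtype.val ⁻¹' (Set.Ici a ×ˢ Set.Ici b) := by
      ext z; simp [hS, Set.mem_prod, Prod.le_def]
    rw [this]
    exact measurable_subtype_coe (measurableSet_Ici.prod measurableSet_Ici)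
  have key : ∀ (μ : Measure KSq),
      ∫⁻ z in S, ((ρ z : ℝ≥0∞))⁻¹ ∂(μ.withDensity (fun z => (ρ z : ℝ≥0∞))) = μ S := by
    intro μ
    rw [restrict_withDensity hSmeas,
      lintegral_withDensity_eq_lintegral_mul _ hρ_meas' (g := fun z => ((ρ z : ℝ≥0∞))⁻¹) (Measurable.inv hρ_meas')]
    rw [← setLIntegral_one]
    refine setLIntegral_congr_fun_ae hSmeas (Filter.Eventually.of_forall fun z hz => ?_)
    have hne : (ρ z : ℝ≥0∞) ≠ 0 := by
      simp only [ne_eq, ENNReal.coe_eq_zero]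
      intro hc
      have : (ρ z : ℝ) = 0 := by rw [hc]; simp
      have : (z : ℝ × ℝ).1 * (z : ℝ × ℝ).2 = 0 := this
      rcases mul_eq_zero.mp this with h | h
      · exact absurd (h ▸ hz.1) (not_le.mpr ha)
      · exact absurd (h ▸ hz.2) (not_le.mpr hb)
    exact ENNReal.mul_inv_cancel hne ENNReal.coe_ne_top
  calc μ₁ S = ∫⁻ z in S, ((ρ z : ℝ≥0∞))⁻¹ ∂ν₁ := (key μ₁).symm
    _ = ∫⁻ z in S, ((ρ z : ℝ≥0∞))⁻¹ ∂ν₂ := by rw [hν]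
    _ = μ₂ S := key μ₂

end Aux

theorem bivariate_cdf_unique_of_laplace_on_lattice
    {Ω₁ Ω₂ : Type*} [MeasurableSpace Ω₁] [MeasurableSpace Ω₂]
    (ℙ₁ : Measure Ω₁) (ℙ₂ : Measure Ω₂)
    [IsProbabilityMeasure ℙ₁] [IsProbabilityMeasure ℙ₂]
    (X₁ Y₁ : Ω₁ → ℝ) (X₂ Y₂ : Ω₂ → ℝ)
    (hX₁ : Measurable X₁) (hY₁ : Measurable Y₁)
    (hX₂ : Measurable X₂) (hY₂ : Measurable Y₂)
    (hX₁0 : ∀ ω, 0 ≤ X₁ ω) (hY₁0 : ∀ ω, 0 ≤ Y₁ ω)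
    (hX₂0 : ∀ ω, 0 ≤ X₂ ω) (hY₂0 : ∀ ω, 0 ≤ Y₂ ω)
    (h : ∀ i j : ℕ, 1 ≤ i → 1 ≤ j →
        ∫ ω, Real.exp (-(i : ℝ) * X₁ ω - (j : ℝ) * Y₁ ω) ∂ℙ₁
          = ∫ ω, Real.exp (-(i : ℝ) * X₂ ω - (j : ℝ) * Y₂ ω) ∂ℙ₂) :
    ∀ x y : ℝ, ℙ₁ {ω | X₁ ω ≤ x ∧ Y₁ ω ≤ y} = ℙ₂ {ω | X₂ ω ≤ x ∧ Y₂ ω ≤ y} := by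
  classical
  have mem_K : ∀ (u v : ℝ), 0 ≤ u → 0 ≤ v →
      ((Real.exp (-u), Real.exp (-v)) : ℝ × ℝ) ∈ KSq := by
    intro u v hu hv
    constructor
    · exact ⟨(Real.exp_pos _).le, Real.exp_le_one_iff.mpr (neg_nonpos.mpr hu)⟩
    · exact ⟨(Real.exp_pos _).le, Real.exp_le_one_iff.mpr (neg_nonpos.mpr hv)⟩
  set T₁ : Ω₁ → KSq := fun ω => ⟨(Real.exp (-X₁ ω), Real.exp (-Y₁ ω)),
    mem_K _ _ (hX₁0 ω) (hY₁0 ω)⟩ with hT₁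
  set T₂ : Ω₂ → KSq := fun ω => ⟨(Real.exp (-X₂ ω), Real.exp (-Y₂ ω)),
    mem_K _ _ (hX₂0 ω) (hY₂0 ω)⟩ with hT₂
  have hT₁m : Measurable T₁ := by
    refine Measurable.subtype_mk ?_
    exact ((Real.measurable_exp.comp hX₁.neg).prodMk (Real.measurable_exp.comp hY₁.neg))
  have hT₂m : Measurable T₂ := by
    refine Measurable.subtype_mk ?_
    exact ((Real.measurable_exp.comp hX₂.neg).prodMk (Real.measurable_exp.comp hY₂.neg))
  set μ₁ : Measure KSq := ℙ₁.map T₁ with hμ₁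
  set μ₂ : Measure KSq := ℙ₂.map T₂ with hμ₂
  haveI : IsProbabilityMeasure μ₁ := Measure.isProbabilityMeasure_map hT₁m.aemeasurable
  haveI : IsProbabilityMeasure μ₂ := Measure.isProbabilityMeasure_map hT₂m.aemeasurable
  have hmomcont : ∀ i j : ℕ, Continuous fun z : KSq => (z : ℝ × ℝ).1 ^ i * (z : ℝ × ℝ).2 ^ j := by
    intro i j
    exact ((continuous_fst.comp continuous_subtype_val).pow i).mul
      ((continuous_snd.comp continuous_subtype_val).pow j)
  have hmom : ∀ i j : ℕ, 1 ≤ i → 1 ≤ j →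
      ∫ z : KSq, (z : ℝ × ℝ).1 ^ i * (z : ℝ × ℝ).2 ^ j ∂μ₁
        = ∫ z : KSq, (z : ℝ × ℝ).1 ^ i * (z : ℝ × ℝ).2 ^ j ∂μ₂ := by
    intro i j hi hj
    have e₁ : ∫ z : KSq, (z : ℝ × ℝ).1 ^ i * (z : ℝ × ℝ).2 ^ j ∂μ₁
        = ∫ ω, Real.exp (-X₁ ω) ^ i * Real.exp (-Y₁ ω) ^ j ∂ℙ₁ := by
      rw [hμ₁, integral_map hT₁m.aemeasurable
        (hmomcont i j).aestronglyMeasurable]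
    have e₂ : ∫ z : KSq, (z : ℝ × ℝ).1 ^ i * (z : ℝ × ℝ).2 ^ j ∂μ₂
        = ∫ ω, Real.exp (-X₂ ω) ^ i * Real.exp (-Y₂ ω) ^ j ∂ℙ₂ := by
      rw [hμ₂, integral_map hT₂m.aemeasurable
        (hmomcont i j).aestronglyMeasurable]
    have expand : ∀ (u v : ℝ),
        Real.exp (-u) ^ i * Real.exp (-v) ^ j = Real.exp (-(i : ℝ) * u - (j : ℝ) * v) := by
      intro u v
      rw [← Real.exp_nat_mul, ← Real.exp_nat_mul, ← Real.exp_add]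
      ring_nf
    rw [e₁, e₂]
    simp only [expand]
    exact h i j hi hj
  intro x y
  -- express the events via T
  have hp₁ :
      T₁ ⁻¹' {z : KSq | Real.exp (-x) ≤ (z : ℝ × ℝ).1 ∧ Real.exp (-y) ≤ (z : ℝ × ℝ).2}
        = {ω | X₁ ω ≤ x ∧ Y₁ ω ≤ y} := by
    ext ω
    have : (T₁ ω : ℝ × ℝ) = (Real.exp (-X₁ ω), Real.exp (-Y₁ ω)) := rfl
    simp only [Set.mem_preimage, Set.mem_setOf_eq, this]
    rw [Real.exp_le_exp, Real.exp_le_exp, neg_le_neg_iff, neg_le_neg_iff]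
  have hp₂ :
      T₂ ⁻¹' {z : KSq | Real.exp (-x) ≤ (z : ℝ × ℝ).1 ∧ Real.exp (-y) ≤ (z : ℝ × ℝ).2}
        = {ω | X₂ ω ≤ x ∧ Y₂ ω ≤ y} := by
    ext ω
    have : (T₂ ω : ℝ × ℝ) = (Real.exp (-X₂ ω), Real.exp (-Y₂ ω)) := rfl
    simp only [Set.mem_preimage, Set.mem_setOf_eq, this]
    rw [Real.exp_le_exp, Real.exp_le_exp, neg_le_neg_iff, neg_le_neg_iff]
  have hSmeas : MeasurableSet
      {z : KSq | Real.exp (-x) ≤ (z : ℝ × ℝ).1 ∧ Real.exp (-y) ≤ (z : ℝ × ℝ).2} := by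
    have : {z : KSq | Real.exp (-x) ≤ (z : ℝ × ℝ).1 ∧ Real.exp (-y) ≤ (z : ℝ × ℝ).2}
        = Subtype.val ⁻¹' (Set.Ici (Real.exp (-x)) ×ˢ Set.Ici (Real.exp (-y))) := by
      ext z; simp [Set.mem_prod, Prod.le_def]
    rw [this]
    exact measurable_subtype_coe (measurableSet_Ici.prod measurableSet_Ici)
  have e₁ : ℙ₁ {ω | X₁ ω ≤ x ∧ Y₁ ω ≤ y}
      = μ₁ {z : KSq | Real.exp (-x) ≤ (z : ℝ × ℝ).1 ∧ Real.exp (-y) ≤ (z : ℝ × ℝ).2} := by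
    rw [hμ₁, Measure.map_apply hT₁m hSmeas, hp₁]
  have e₂ : ℙ₂ {ω | X₂ ω ≤ x ∧ Y₂ ω ≤ y}
      = μ₂ {z : KSq | Real.exp (-x) ≤ (z : ℝ × ℝ).1 ∧ Real.exp (-y) ≤ (z : ℝ × ℝ).2} := by
    rw [hμ₂, Measure.map_apply hT₂m hSmeas, hp₂]
  rw [e₁, e₂]
  exact aux_measure_rect_eq μ₁ μ₂ hmom _ _ (Real.exp_pos _) (Real.exp_pos _)
end

section
/- Let (X,Y) have the bivariate lack-of-memory distribution with joint survival function H̄(x,y) = e^{-θy} F̄(x−y) for x ≥ y ≥ 0 and H̄(x,y) = e^{-θx} Ḡ(y−x) for y ≥ x ≥ 0, where θ > 0. Then for all s, t > 0: E[exp(-sX - tY)] = [(θ+s) E[exp(-sX)] + (θ+t) E[exp(-tY)]]/(θ+s+t) − θ/(θ+s+t). -/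
open MeasureTheory Real Set

lemma aux_exp_Ioi {a : ℝ} (ha : 0 < a) : ∫ x in Ioi (0:ℝ), exp (-(a*x)) = 1/a := by
  rw [integral_comp_mul_left_Ioi (fun x => exp (-x)) 0 ha]
  simp [integral_exp_neg_Ioi, abs_of_pos ha, one_div, integral_exp_Iic_zero]

lemma aux_exp_int' {a : ℝ} (ha : 0 < a) :
    IntegrableOn (fun x => a * exp (-(a*x))) (Ioi (0:ℝ)) := by
  simpa [neg_mul, IntegrableOn] using (exp_neg_integrableOn_Ioi 0 ha).const_mul a

lemma aux_surv_meas {Ω : Type*} [MeasurableSpace Ω] (ℙ : Measure Ω) (X : Ω → ℝ) :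
    Measurable (fun x : ℝ => (ℙ {ω | x < X ω}).toReal) :=
  Measurable.ennreal_toReal
    (Antitone.measurable (fun _ _ hab => measure_mono (fun _ h => lt_of_le_of_lt hab h)))

lemma aux_surv_le_one {Ω : Type*} [MeasurableSpace Ω] (ℙ : Measure Ω)
    [IsProbabilityMeasure ℙ] (A : Set Ω) : (ℙ A).toReal ≤ 1 := by
  have := prob_le_one (μ := ℙ) (s := A)
  simpa using ENNReal.toReal_le_of_le_ofReal zero_le_one (by simpa using this)

lemma aux_ite_integral {Ω : Type*} [MeasurableSpace Ω] (ℙ : Measure Ω)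
    (p : Ω → Prop) [DecidablePred p] (hA : MeasurableSet {ω | p ω}) :
    ∫ ω, (if p ω then (1:ℝ) else 0) ∂ℙ = (ℙ {ω | p ω}).toReal := by
  rw [show (fun ω => (if p ω then (1:ℝ) else 0))
      = Set.indicator {ω | p ω} (fun _ => (1:ℝ)) from by
    ext ω; by_cases h : p ω <;> simp [Set.indicator_apply, h]]
  rw [integral_indicator_const _ hA]; simp; rfl

lemma aux_inner_exp {a : ℝ} (ha : 0 < a) {c : ℝ} (hc : 0 < c) :
    ∫ x in Ioi (0:ℝ), a * exp (-(a*x)) * (if x < c then (1:ℝ) else 0)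
      = 1 - exp (-(a*c)) := by
  have h : (fun x => a * exp (-(a*x)) * (if x < c then (1:ℝ) else 0))
      = Set.indicator (Iio c) (fun x => a * exp (-(a*x))) := by
    ext x
    by_cases h : x < c <;> simp [Set.indicator_apply, mem_Iio, h]
  rw [h, setIntegral_indicator measurableSet_Iio, Ioi_inter_Iio,
    ← integral_Ioc_eq_integral_Ioo, ← intervalIntegral.integral_of_le hc.le]
  have hd : ∀ x ∈ uIcc (0:ℝ) c, HasDerivAt (fun x => -exp (-(a*x))) (a * exp (-(a*x))) x := by
    intro x _
    have : HasDerivAt (fun x => -(a*x)) (-a) x := by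
      simpa [Pi.neg_def] using ((hasDerivAt_id x).const_mul a).neg
    simpa [mul_comm, Pi.neg_def] using (this.exp).neg
  rw [intervalIntegral.integral_eq_sub_of_hasDerivAt hd
    (by apply ContinuousOn.intervalIntegrable; fun_prop)]
  simp; ring

lemma stepA {Ω : Type*} [MeasurableSpace Ω] (ℙ : Measure Ω) [IsProbabilityMeasure ℙ]
    (X : Ω → ℝ) (hX : Measurable X) (hX0 : ∀ ω, 0 < X ω) {s : ℝ} (hs : 0 < s) :
    s * ∫ x in Ioi (0:ℝ), exp (-(s*x)) * (ℙ {ω | x < X ω}).toReal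
      = 1 - ∫ ω, exp (-(s * X ω)) ∂ℙ := by
  have hmeas : ∀ x : ℝ, MeasurableSet {ω | x < X ω} :=
    fun x => measurableSet_lt measurable_const hX
  have e1 : s * ∫ x in Ioi (0:ℝ), exp (-(s*x)) * (ℙ {ω | x < X ω}).toReal
      = ∫ x in Ioi (0:ℝ), ∫ ω, s * exp (-(s*x)) * (if x < X ω then (1:ℝ) else 0) ∂ℙ := by
    rw [← integral_const_mul]
    refine setIntegral_congr_fun measurableSet_Ioi (fun x _ => ?_)
    rw [integral_const_mul, ← aux_ite_integral ℙ (fun ω => x < X ω) (hmeas x)]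
    ring
  have hK : Integrable (Function.uncurry fun ω x =>
        s * exp (-(s*x)) * (if x < X ω then (1:ℝ) else 0))
      (ℙ.prod (volume.restrict (Ioi 0))) := by
    have hb : Integrable (fun q : Ω × ℝ => (1:ℝ) * (s * exp (-(s*q.2))))
        (ℙ.prod (volume.restrict (Ioi 0))) :=
      (integrable_const (1:ℝ)).mul_prod (aux_exp_int' hs)
    refine Integrable.mono' (by simpa using hb) ?_ ?_
    · have m1 : Measurable fun q : Ω × ℝ => s * exp (-(s*q.2)) := by fun_prop
      have m2 : Measurable fun q : Ω × ℝ => (if q.2 < X q.1 then (1:ℝ) else 0) :=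
        Measurable.ite (measurableSet_lt measurable_snd (hX.comp measurable_fst))
          measurable_const measurable_const
      exact (m1.mul m2).aestronglyMeasurable
    · filter_upwards with q
      simp only [Function.uncurry, norm_mul, norm_eq_abs]
      have h2 : |if q.2 < X q.1 then (1:ℝ) else 0| ≤ 1 := by split <;> simp
      rw [abs_of_pos hs, abs_of_nonneg (exp_pos _).le]
      nlinarith [exp_pos (-(s*q.2)), mul_pos hs (exp_pos (-(s*q.2))),
        abs_nonneg (if q.2 < X q.1 then (1:ℝ) else 0)]
  rw [e1, (integral_integral_swap hK).symm]
  have inner : ∀ ω, (∫ x in Ioi (0:ℝ), s * exp (-(s*x)) * (if x < X ω then (1:ℝ) else 0))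
      = 1 - exp (-(s * X ω)) := fun ω => aux_inner_exp hs (hX0 ω)
  simp_rw [inner]
  have hexp : Integrable (fun ω => exp (-(s * X ω))) ℙ := by
    refine Integrable.mono' (integrable_const 1)
      (((hX.const_mul s).neg.exp).aestronglyMeasurable) ?_
    filter_upwards with ω
    rw [norm_eq_abs, abs_of_nonneg (exp_pos _).le]
    exact exp_le_one_iff.mpr (by nlinarith [(hX0 ω)])
  rw [integral_sub (integrable_const 1) hexp]
  simp

lemma aux_shift_Ici (f : ℝ → ℝ) (y : ℝ) :
    ∫ x in Ici y, f x = ∫ u in Ici (0:ℝ), f (u + y) := by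
  rw [← integral_indicator measurableSet_Ici, ← integral_indicator measurableSet_Ici,
    ← integral_add_right_eq_self (fun x => Set.indicator (Ici y) f x) y]
  congr 1; ext u
  simp [Set.indicator_apply, le_add_iff_nonneg_left]

lemma aux_shift_Ioi (f : ℝ → ℝ) (y : ℝ) :
    ∫ x in Ioi y, f x = ∫ u in Ioi (0:ℝ), f (u + y) := by
  rw [← integral_indicator measurableSet_Ioi, ← integral_indicator measurableSet_Ioi,
    ← integral_add_right_eq_self (fun x => Set.indicator (Ioi y) f x) y]
  congr 1; ext u
  simp [Set.indicator_apply, lt_add_iff_pos_left]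

lemma aux_core {s y : ℝ} (hs : 0 < s) (hy : 0 < y) (F : ℝ → ℝ) :
    ∫ x in Ioi (0:ℝ), (if y ≤ x then (1:ℝ) else 0) * (exp (-(s*x)) * F (x - y))
      = exp (-(s*y)) * ∫ u in Ioi (0:ℝ), exp (-(s*u)) * F u := by
  have h : (fun x => (if y ≤ x then (1:ℝ) else 0) * (exp (-(s*x)) * F (x - y)))
      = Set.indicator (Ici y) (fun x => exp (-(s*x)) * F (x - y)) := by
    ext x; by_cases h : y ≤ x <;> simp [Set.indicator_apply, mem_Ici, h]
  rw [h, setIntegral_indicator measurableSet_Ici,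
    show Ioi (0:ℝ) ∩ Ici y = Ici y from
      inter_eq_self_of_subset_right (fun x (hx : x ∈ Ici y) => lt_of_lt_of_le hy hx),
    aux_shift_Ici]
  simp only [add_sub_cancel_right]
  rw [integral_Ici_eq_integral_Ioi, ← integral_const_mul]
  refine setIntegral_congr_fun measurableSet_Ioi (fun u _ => ?_)
  have h2 : exp (-(s*y)) * exp (-(s*u)) = exp (-(s*(u+y))) := by
    rw [← Real.exp_add]; congr 1; ring
  linear_combination (-F u) * h2

lemma aux_core2 {t x : ℝ} (ht : 0 < t) (hx : 0 < x) (G : ℝ → ℝ) :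
    ∫ y in Ioi (0:ℝ), (if x < y then (1:ℝ) else 0) * (exp (-(t*y)) * G (y - x))
      = exp (-(t*x)) * ∫ u in Ioi (0:ℝ), exp (-(t*u)) * G u := by
  have h : (fun y => (if x < y then (1:ℝ) else 0) * (exp (-(t*y)) * G (y - x)))
      = Set.indicator (Ioi x) (fun y => exp (-(t*y)) * G (y - x)) := by
    ext y; by_cases h : x < y <;> simp [Set.indicator_apply, mem_Ioi, h]
  rw [h, setIntegral_indicator measurableSet_Ioi,
    show Ioi (0:ℝ) ∩ Ioi x = Ioi x from
      inter_eq_self_of_subset_right (fun y (hy : y ∈ Ioi x) => lt_trans hx hy),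
    aux_shift_Ioi]
  simp only [add_sub_cancel_right]
  rw [← integral_const_mul]
  refine setIntegral_congr_fun measurableSet_Ioi (fun u _ => ?_)
  have h2 : exp (-(t*x)) * exp (-(t*u)) = exp (-(t*(u+x))) := by
    rw [← Real.exp_add]; congr 1; ring
  linear_combination (-G u) * h2

set_option maxHeartbeats 2000000 in
theorem blm_laplace_stieltjes_transform
    {Ω : Type*} [MeasurableSpace Ω] (ℙ : Measure Ω) [IsProbabilityMeasure ℙ]
    (X Y : Ω → ℝ) (hX : Measurable X) (hY : Measurable Y)
    (hX0 : ∀ ω, 0 < X ω) (hY0 : ∀ ω, 0 < Y ω)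
    (θ : ℝ) (hθ : 0 < θ)
    (h1 : ∀ x y : ℝ, 0 ≤ y → y ≤ x →
      (ℙ {ω | x < X ω ∧ y < Y ω}).toReal
        = Real.exp (-θ * y) * (ℙ {ω | x - y < X ω}).toReal)
    (h2 : ∀ x y : ℝ, 0 ≤ x → x ≤ y →
      (ℙ {ω | x < X ω ∧ y < Y ω}).toReal
        = Real.exp (-θ * x) * (ℙ {ω | y - x < Y ω}).toReal) :
    ∀ s t : ℝ, 0 < s → 0 < t →
      ∫ ω, Real.exp (-s * X ω - t * Y ω) ∂ℙ
        = ((θ + s) * (∫ ω, Real.exp (-s * X ω) ∂ℙ)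
            + (θ + t) * (∫ ω, Real.exp (-t * Y ω) ∂ℙ)) / (θ + s + t)
          - θ / (θ + s + t) := by
  intro s t hs ht
  simp only [neg_mul]
  set F : ℝ → ℝ := fun x => (ℙ {ω | x < X ω}).toReal with hF
  set G : ℝ → ℝ := fun y => (ℙ {ω | y < Y ω}).toReal with hG
  have hFmeas : Measurable F := aux_surv_meas ℙ X
  have hGmeas : Measurable G := aux_surv_meas ℙ Y
  have hF0 : ∀ x, 0 ≤ F x := fun x => ENNReal.toReal_nonneg
  have hG0 : ∀ x, 0 ≤ G x := fun x => ENNReal.toReal_nonneg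
  have hF1 : ∀ x, F x ≤ 1 := fun x => aux_surv_le_one ℙ _
  have hG1 : ∀ x, G x ≤ 1 := fun x => aux_surv_le_one ℙ _
  set μ : Measure (ℝ × ℝ) := (volume.restrict (Ioi (0:ℝ))).prod (volume.restrict (Ioi (0:ℝ)))
    with hμ
  set IX : ℝ := ∫ x in Ioi (0:ℝ), exp (-(s*x)) * F x with hIX
  set IY : ℝ := ∫ y in Ioi (0:ℝ), exp (-(t*y)) * G y with hIY
  set φs : ℝ := ∫ ω, exp (-(s * X ω)) ∂ℙ with hφs
  set φt : ℝ := ∫ ω, exp (-(t * Y ω)) ∂ℙ with hφt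
  set φ : ℝ := ∫ ω, exp (-(s * X ω) - t * Y ω) ∂ℙ with hφ
  have hA : s * IX = 1 - φs := stepA ℙ X hX hX0 hs
  have hB : t * IY = 1 - φt := stepA ℙ Y hY hY0 ht
  set W1 : ℝ × ℝ → ℝ := fun p => (if p.2 ≤ p.1 then (1:ℝ) else 0) *
      (s * exp (-(s*p.1)) * (t * exp (-(t*p.2))) * (exp (-(θ*p.2)) * F (p.1 - p.2))) with hW1
  set W2 : ℝ × ℝ → ℝ := fun p => (if p.1 < p.2 then (1:ℝ) else 0) *
      (s * exp (-(s*p.1)) * (t * exp (-(t*p.2))) * (exp (-(θ*p.1)) * G (p.2 - p.1))) with hW2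
  have hEint : Integrable (fun p : ℝ × ℝ => (s * exp (-(s*p.1))) * (t * exp (-(t*p.2)))) μ :=
    (aux_exp_int' hs).mul_prod (aux_exp_int' ht)
  have hae : ∀ᵐ p ∂μ, 0 < p.1 ∧ 0 < p.2 := by
    rw [hμ, Measure.prod_restrict]
    filter_upwards [ae_restrict_mem (measurableSet_Ioi.prod measurableSet_Ioi)] with p hp
    exact ⟨hp.1, hp.2⟩
  have hW1meas : Measurable W1 := by
    refine Measurable.mul ?_ ?_
    · exact Measurable.ite (measurableSet_le measurable_snd measurable_fst)
        measurable_const measurable_const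
    · exact (((measurable_const.mul ((measurable_fst.const_mul s).neg.exp)).mul
        (measurable_const.mul ((measurable_snd.const_mul t).neg.exp))).mul
        (((measurable_snd.const_mul θ).neg.exp).mul
          (hFmeas.comp (measurable_fst.sub measurable_snd))))
  have hW2meas : Measurable W2 := by
    refine Measurable.mul ?_ ?_
    · exact Measurable.ite (measurableSet_lt measurable_fst measurable_snd)
        measurable_const measurable_const
    · exact (((measurable_const.mul ((measurable_fst.const_mul s).neg.exp)).mul
        (measurable_const.mul ((measurable_snd.const_mul t).neg.exp))).mul
        (((measurable_fst.const_mul θ).neg.exp).mul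
          (hGmeas.comp (measurable_snd.sub measurable_fst))))
  have hW1int : Integrable W1 μ := by
    refine Integrable.mono' hEint hW1meas.aestronglyMeasurable ?_
    filter_upwards [hae] with p hp
    have e1 : exp (-(θ*p.2)) ≤ 1 := exp_le_one_iff.mpr (by nlinarith [hp.2])
    have e2 : (0:ℝ) < s * exp (-(s*p.1)) := by positivity
    have e3 : (0:ℝ) < t * exp (-(t*p.2)) := by positivity
    by_cases h : p.2 ≤ p.1
    · simp only [hW1, h, if_pos, one_mul]
      rw [norm_eq_abs, abs_of_nonneg (by positivity)]
      have e4 : exp (-(θ*p.2)) * F (p.1 - p.2) ≤ 1 :=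
        mul_le_one₀ e1 (hF0 _) (hF1 _)
      exact mul_le_of_le_one_right (mul_pos e2 e3).le e4
    · simp only [hW1, h, if_neg, not_false_iff, zero_mul, norm_zero]
      positivity
  have hW2int : Integrable W2 μ := by
    refine Integrable.mono' hEint hW2meas.aestronglyMeasurable ?_
    filter_upwards [hae] with p hp
    have e1 : exp (-(θ*p.1)) ≤ 1 := exp_le_one_iff.mpr (by nlinarith [hp.1])
    have e2 : (0:ℝ) < s * exp (-(s*p.1)) := by positivity
    have e3 : (0:ℝ) < t * exp (-(t*p.2)) := by positivity
    by_cases h : p.1 < p.2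
    · simp only [hW2, h, if_pos, one_mul]
      rw [norm_eq_abs, abs_of_nonneg (by positivity)]
      have e4 : exp (-(θ*p.1)) * G (p.2 - p.1) ≤ 1 :=
        mul_le_one₀ e1 (hG0 _) (hG1 _)
      exact mul_le_of_le_one_right (mul_pos e2 e3).le e4
    · simp only [hW2, h, if_neg, not_false_iff, zero_mul, norm_zero]
      positivity
  -- step B: double Fubini
  have hprod : ∫ ω, (1 - exp (-(s * X ω))) * (1 - exp (-(t * Y ω))) ∂ℙ
      = (∫ p, W1 p ∂μ) + ∫ p, W2 p ∂μ := by
    have e1 : ∀ ω, (1 - exp (-(s * X ω))) * (1 - exp (-(t * Y ω)))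
        = ∫ p, (s * exp (-(s*p.1)) * (if p.1 < X ω then (1:ℝ) else 0)) *
            (t * exp (-(t*p.2)) * (if p.2 < Y ω then (1:ℝ) else 0)) ∂μ := by
      intro ω
      rw [hμ, integral_prod_mul (f := fun x => s * exp (-(s*x)) * (if x < X ω then (1:ℝ) else 0))
        (g := fun y => t * exp (-(t*y)) * (if y < Y ω then (1:ℝ) else 0))]
      rw [aux_inner_exp hs (hX0 ω), aux_inner_exp ht (hY0 ω)]
    simp_rw [e1]
    have hK2 : Integrable (Function.uncurry fun ω (p : ℝ × ℝ) =>
          (s * exp (-(s*p.1)) * (if p.1 < X ω then (1:ℝ) else 0)) *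
            (t * exp (-(t*p.2)) * (if p.2 < Y ω then (1:ℝ) else 0))) (ℙ.prod μ) := by
      have hb : Integrable (fun q : Ω × (ℝ × ℝ) =>
          (1:ℝ) * ((s * exp (-(s*q.2.1))) * (t * exp (-(t*q.2.2))))) (ℙ.prod μ) :=
        (integrable_const (1:ℝ)).mul_prod hEint
      refine Integrable.mono' (by simpa using hb) ?_ ?_
      · refine Measurable.aestronglyMeasurable (Measurable.mul (Measurable.mul ?_ ?_)
          (Measurable.mul ?_ ?_))
        · exact measurable_const.mul ((measurable_snd.fst.const_mul s).neg.exp)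
        · exact Measurable.ite (measurableSet_lt measurable_snd.fst (hX.comp measurable_fst))
            measurable_const measurable_const
        · exact measurable_const.mul ((measurable_snd.snd.const_mul t).neg.exp)
        · exact Measurable.ite (measurableSet_lt measurable_snd.snd (hY.comp measurable_fst))
            measurable_const measurable_const
      · filter_upwards with q
        simp only [Function.uncurry]
        have hbpos : (0:ℝ) ≤ s * exp (-(s*q.2.1)) * (t * exp (-(t*q.2.2))) := by positivity
        by_cases hx : q.2.1 < X q.1 <;> by_cases hy : q.2.2 < Y q.1 <;>
          simp only [hx, hy, if_pos, if_neg, not_false_iff, mul_one, mul_zero, zero_mul,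
            norm_zero] <;> try exact hbpos
        rw [norm_eq_abs, abs_of_nonneg hbpos]
    rw [integral_integral_swap hK2]
    have e2 : ∀ p : ℝ × ℝ, (∫ ω, (s * exp (-(s*p.1)) * (if p.1 < X ω then (1:ℝ) else 0)) *
          (t * exp (-(t*p.2)) * (if p.2 < Y ω then (1:ℝ) else 0)) ∂ℙ)
        = (s * exp (-(s*p.1)) * (t * exp (-(t*p.2)))) *
            (ℙ {ω | p.1 < X ω ∧ p.2 < Y ω}).toReal := by
      intro p
      have hpt : ∀ ω, (s * exp (-(s*p.1)) * (if p.1 < X ω then (1:ℝ) else 0)) *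
            (t * exp (-(t*p.2)) * (if p.2 < Y ω then (1:ℝ) else 0))
          = (s * exp (-(s*p.1)) * (t * exp (-(t*p.2)))) *
              (if p.1 < X ω ∧ p.2 < Y ω then (1:ℝ) else 0) := by
        intro ω
        by_cases hx : p.1 < X ω <;> by_cases hy : p.2 < Y ω <;> simp [hx, hy]
      simp_rw [hpt]
      rw [integral_const_mul, aux_ite_integral ℙ (fun ω => p.1 < X ω ∧ p.2 < Y ω)
        ((measurableSet_lt measurable_const hX).inter (measurableSet_lt measurable_const hY))]
    simp_rw [e2]
    rw [← integral_add hW1int hW2int]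
    refine integral_congr_ae ?_
    filter_upwards [hae] with p hp
    rcases le_or_gt p.2 p.1 with h | h
    · have := h1 p.1 p.2 hp.2.le h
      simp only [hW1, hW2, h, if_pos, not_lt.mpr h, if_neg, not_false_iff, zero_mul, add_zero,
        one_mul]
      rw [this]
      simp only [neg_mul, hF]
    · have := h2 p.1 p.2 hp.1.le h.le
      simp only [hW1, hW2, h, if_pos, not_le.mpr h, if_neg, not_false_iff, zero_mul, zero_add,
        one_mul]
      rw [this]
      simp only [neg_mul, hG]
  -- step C: compute the two integrals
  have hD : (0:ℝ) < s + t + θ := by positivity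
  have hC1 : ∫ p, W1 p ∂μ = (s * t * IX) * (1/(s+t+θ)) := by
    rw [hμ, integral_prod_symm _ (by rw [← hμ]; exact hW1int)]
    have inner : ∀ y ∈ Ioi (0:ℝ), (∫ x in Ioi (0:ℝ), W1 (x, y))
        = (s * t * IX) * exp (-((s+t+θ)*y)) := by
      intro y hy
      have e : ∀ x : ℝ, W1 (x, y) = (s * (t * exp (-(t*y)) * exp (-(θ*y)))) *
          ((if y ≤ x then (1:ℝ) else 0) * (exp (-(s*x)) * F (x - y))) := by
        intro x; simp only [hW1]; ring
      simp_rw [e]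
      rw [integral_const_mul, aux_core hs hy F, ← hIX]
      have h2 : exp (-(t*y)) * exp (-(θ*y)) * exp (-(s*y)) = exp (-((s+t+θ)*y)) := by
        rw [← Real.exp_add, ← Real.exp_add]; congr 1; ring
      linear_combination (s * t * IX) * h2
    rw [setIntegral_congr_fun measurableSet_Ioi inner, integral_const_mul,
      aux_exp_Ioi hD]
  have hC2 : ∫ p, W2 p ∂μ = (s * t * IY) * (1/(s+t+θ)) := by
    rw [hμ, integral_prod _ (by rw [← hμ]; exact hW2int)]
    have inner : ∀ x ∈ Ioi (0:ℝ), (∫ y in Ioi (0:ℝ), W2 (x, y))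
        = (s * t * IY) * exp (-((s+t+θ)*x)) := by
      intro x hx
      have e : ∀ y : ℝ, W2 (x, y) = (t * (s * exp (-(s*x)) * exp (-(θ*x)))) *
          ((if x < y then (1:ℝ) else 0) * (exp (-(t*y)) * G (y - x))) := by
        intro y; simp only [hW2]; ring
      simp_rw [e]
      rw [integral_const_mul, aux_core2 ht hx G, ← hIY]
      have h2 : exp (-(s*x)) * exp (-(θ*x)) * exp (-(t*x)) = exp (-((s+t+θ)*x)) := by
        rw [← Real.exp_add, ← Real.exp_add]; congr 1; ring
      linear_combination (s * t * IY) * h2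
    rw [setIntegral_congr_fun measurableSet_Ioi inner, integral_const_mul,
      aux_exp_Ioi hD]
  -- expansion of the product expectation
  have hiX : Integrable (fun ω => exp (-(s * X ω))) ℙ := by
    refine Integrable.mono' (integrable_const 1)
      (((hX.const_mul s).neg.exp).aestronglyMeasurable) ?_
    filter_upwards with ω
    rw [norm_eq_abs, abs_of_nonneg (exp_pos _).le]
    exact exp_le_one_iff.mpr (by nlinarith [hX0 ω])
  have hiY : Integrable (fun ω => exp (-(t * Y ω))) ℙ := by
    refine Integrable.mono' (integrable_const 1)
      (((hY.const_mul t).neg.exp).aestronglyMeasurable) ?_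
    filter_upwards with ω
    rw [norm_eq_abs, abs_of_nonneg (exp_pos _).le]
    exact exp_le_one_iff.mpr (by nlinarith [hY0 ω])
  have hiXY : Integrable (fun ω => exp (-(s * X ω) - t * Y ω)) ℙ := by
    refine Integrable.mono' (integrable_const 1)
      ((((hX.const_mul s).neg.sub (hY.const_mul t)).exp).aestronglyMeasurable) ?_
    filter_upwards with ω
    rw [norm_eq_abs, abs_of_nonneg (exp_pos _).le]
    exact exp_le_one_iff.mpr (by nlinarith [hX0 ω, hY0 ω])
  have hExp : ∫ ω, (1 - exp (-(s * X ω))) * (1 - exp (-(t * Y ω))) ∂ℙ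
      = 1 - φs - φt + φ := by
    have hpt : ∀ ω, (1 - exp (-(s * X ω))) * (1 - exp (-(t * Y ω)))
        = 1 - exp (-(s * X ω)) - exp (-(t * Y ω)) + exp (-(s * X ω) - t * Y ω) := by
      intro ω
      rw [show -(s * X ω) - t * Y ω = -(s * X ω) + -(t * Y ω) by ring, Real.exp_add]
      ring
    simp_rw [hpt]
    have hI2 : Integrable (fun ω => 1 - exp (-(s * X ω))) ℙ :=
      (integrable_const (1:ℝ)).sub hiX
    have hI3 : Integrable (fun ω => 1 - exp (-(s * X ω)) - exp (-(t * Y ω))) ℙ :=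
      hI2.sub hiY
    rw [integral_add hI3 hiXY, integral_sub hI2 hiY,
      integral_sub (integrable_const 1) hiX]
    simp [hφs, hφt, hφ]
  -- final algebra
  have key : 1 - φs - φt + φ
      = (s * t * IX) * (1/(s+t+θ)) + (s * t * IY) * (1/(s+t+θ)) := by
    rw [← hC1, ← hC2, ← hprod, hExp]
  have hD' : (θ + s + t) ≠ 0 := by positivity
  have hD'' : (s + t + θ) ≠ 0 := by positivity
  field_simp at key ⊢
  nlinarith [key, hA, hB, sq_nonneg (s+t+θ)]
end
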